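/- arXiv:math/0607270 — 14 statements merged into one kernel-verified Lean document; each statement's English description precedes it below -/
import Mathlib

section
/- Let K be a field of characteristic zero and let W be the Witt algebra over K. Then W is a simple Lie algebra: W is not abelian and its only Lie ideals are 0 and W. -/
/-- **The Witt algebra is simple.**
Over a field `K` of characteristic zero, any Lie algebra `W` with a basis
`ℓ : ℤ → W` satisfying `⁅ℓ n, ℓ m⁆ = (n - m) • ℓ (n + m)` (i.e. the Witt algebra)
is a simple Lie algebra: it is not abelian and its only Lie ideals are `⊥` and `⊤`. -/
theorem witt_algebra_is_simple
    (K : Type*) [Field K] [CharZero K]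
    (W : Type*) [LieRing W] [LieAlgebra K W]
    (ℓ : Module.Basis ℤ K W)
    (hbr : ∀ n m : ℤ, ⁅ℓ n, ℓ m⁆ = ((n - m : ℤ) : K) • ℓ (n + m)) :
    (¬ ∀ x y : W, ⁅x, y⁆ = 0) ∧ ∀ I : LieIdeal K W, I = ⊥ ∨ I = ⊤ := by
  constructor
  · intro h
    have h1 := h (ℓ 1) (ℓ 0)
    rw [hbr] at h1
    simp at h1
    exact ℓ.ne_zero 1 h1
  intro I
  by_cases hbot : I = ⊥
  · exact Or.inl hbot
  right
  obtain ⟨x, hxI, hx0⟩ : ∃ x ∈ I, x ≠ 0 := by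
    by_contra h
    push_neg at h
    exact hbot ((LieSubmodule.eq_bot_iff _).2 h)
  -- representation of ad (ℓ 0)
  have hrepr : ∀ (z : W) (k : ℤ), ℓ.repr ⁅ℓ 0, z⁆ k = ((-k : ℤ) : K) * ℓ.repr z k := by
    intro z k
    have key : (Finsupp.lapply k ∘ₗ ((↑ℓ.repr : W →ₗ[K] (ℤ →₀ K)) ∘ₗ (LieAlgebra.ad K W (ℓ 0))))
        = ((-k : ℤ) : K) • (Finsupp.lapply k ∘ₗ (↑ℓ.repr : W →ₗ[K] (ℤ →₀ K))) := by
      apply ℓ.ext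
      intro n
      simp [LieAlgebra.ad_apply, hbr, Finsupp.single_apply]
      split <;> simp_all
    have := LinearMap.congr_fun key z
    simpa [LieAlgebra.ad_apply] using this
  -- key: some basis vector lies in I
  have hbasis : ∃ m, ℓ m ∈ I := by
    have key : ∀ n : ℕ, ∀ z : W, z ∈ I → z ≠ 0 → (ℓ.repr z).support.card ≤ n → ∃ m, ℓ m ∈ I := by
      intro n
      induction n with
      | zero =>
        intro z _ hz0 hcard
        exfalso
        apply hz0
        have : (ℓ.repr z).support = ∅ := Finset.card_eq_zero.mp (Nat.le_zero.mp hcard)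
        have hz : ℓ.repr z = 0 := Finsupp.support_eq_empty.mp this
        have := ℓ.repr.injective (by simpa using hz)
        simpa using this
      | succ n ih =>
        intro z hzI hz0 hcard
        have hsupp : (ℓ.repr z).support.Nonempty := by
          rw [Finsupp.support_nonempty_iff]
          intro h
          exact hz0 (ℓ.repr.injective (by simpa using h))
        obtain ⟨m, hm⟩ := hsupp
        by_cases hone : (ℓ.repr z).support.card = 1
        · -- z is a scalar multiple of ℓ m
          obtain ⟨a, ha⟩ := Finset.card_eq_one.mp hone
          have hma : m = a := by rw [ha] at hm; simpa using hm
          subst hma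
          set c := ℓ.repr z m with hcdef
          have hsingle : ℓ.repr z = Finsupp.single m c :=
            (Finsupp.support_eq_singleton.mp ha).2
          have hc : c ≠ 0 := by
            simpa [hcdef] using (Finsupp.support_eq_singleton.mp ha).1
          have hz : z = c • ℓ m := by
            have := congrArg ℓ.repr.symm hsingle
            rw [ℓ.repr.symm_apply_apply] at this
            rw [this, Module.Basis.repr_symm_single]
          refine ⟨m, ?_⟩
          have h2 : ℓ m = c⁻¹ • z := by
            rw [hz, smul_smul, inv_mul_cancel₀ hc, one_smul]
          rw [h2]
          exact I.smul_mem _ hzI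
        · -- reduce support
          set y := ⁅ℓ 0, z⁆ + ((m : ℤ) : K) • z with hy
          have hyI : y ∈ I := I.add_mem (I.lie_mem hzI) (I.smul_mem _ hzI)
          have hyrep : ∀ k : ℤ, ℓ.repr y k = ((m - k : ℤ) : K) * ℓ.repr z k := by
            intro k
            rw [hy]
            simp [hrepr z k]
            ring
          have hysub : (ℓ.repr y).support ⊆ (ℓ.repr z).support.erase m := by
            intro k hk
            rw [Finsupp.mem_support_iff, hyrep] at hk
            rw [Finset.mem_erase, Finsupp.mem_support_iff]
            constructor
            · rintro rfl; simp at hk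
            · intro h; apply hk; rw [h, mul_zero]
          have hy0 : y ≠ 0 := by
            have h2 : 2 ≤ (ℓ.repr z).support.card :=
              (Nat.two_le_iff _).mpr ⟨Finset.card_ne_zero_of_mem hm, hone⟩
            obtain ⟨k, hk, hkm⟩ := Finset.exists_mem_ne h2 m
            intro h
            have : ℓ.repr y k = 0 := by rw [h]; simp
            rw [hyrep] at this
            rcases mul_eq_zero.mp this with h' | h'
            · have : (m - k : ℤ) = 0 := by exact_mod_cast h'
              omega
            · exact (Finsupp.mem_support_iff.mp hk) h'
          apply ih y hyI hy0
          calc (ℓ.repr y).support.card ≤ ((ℓ.repr z).support.erase m).card :=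
                Finset.card_le_card hysub
            _ = (ℓ.repr z).support.card - 1 := Finset.card_erase_of_mem hm
            _ ≤ n := by omega
    exact key (ℓ.repr x).support.card x hxI hx0 le_rfl
  obtain ⟨m, hmI⟩ := hbasis
  -- step: from ℓ m ∈ I get ℓ k ∈ I for k ≠ 2m
  have step : ∀ m k : ℤ, ℓ m ∈ I → k ≠ 2 * m → ℓ k ∈ I := by
    intro m k hm hk
    have hb : ⁅ℓ (k - m), ℓ m⁆ = ((k - 2 * m : ℤ) : K) • ℓ k := by
      rw [hbr]
      congr 1
      · push_cast; ring
      · ring_nf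
    have hmem : ((k - 2 * m : ℤ) : K) • ℓ k ∈ I := hb ▸ I.lie_mem hm
    have hne : ((k - 2 * m : ℤ) : K) ≠ 0 := by
      exact_mod_cast sub_ne_zero.mpr (by omega)
    have := I.smul_mem ((k - 2 * m : ℤ) : K)⁻¹ hmem
    rwa [smul_smul, inv_mul_cancel₀ hne, one_smul] at this
  have hall : ∀ k : ℤ, ℓ k ∈ I := by
    intro k
    by_cases hk : k = 2 * m
    · subst hk
      by_cases hm1 : m = -1
      · have h1 : ℓ (2 * m - 1) ∈ I := step m _ hmI (by omega)
        exact step (2 * m - 1) _ h1 (by omega)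
      · have h1 : ℓ (2 * m + 1) ∈ I := step m _ hmI (by omega)
        exact step (2 * m + 1) _ h1 (by omega)
    · exact step m k hmI hk
  -- conclude I = ⊤
  have htop : (⊤ : Submodule K W) ≤ (I : Submodule K W) := by
    rw [← ℓ.span_eq]
    apply Submodule.span_le.2
    rintro _ ⟨k, rfl⟩
    exact hall k
  ext w
  simp only [LieSubmodule.mem_top, iff_true]
  exact htop (Submodule.mem_top)
end

section
/- Let K be a field of characteristic zero, W the Witt algebra over K, and h a K-vector space. Let c : ℤ → h satisfy c_{−n} = −c_n for all n, and let ε : W × W → h be the alternating bilinear map determined by ε(ℓ_n, ℓ_m) = c_n δ_{n+m,0}. Then ε satisfies the 2-cocycle condition ε([x,y],z) + ε([z,x],y) + ε([y,z],x) = 0 for all x,y,z ∈ W if and only if there exist a, b ∈ h with c_n = n³·a + n·b for all n ∈ ℤ. Moreover, in that case ε is a coboundary (there exists a linear map f : W → h with ε(x,y) = −f([x,y]) for all x,y) if and only if a = 0. -/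
/-- Classification of the 2-cochains `ε(ℓ n, ℓ m) = c n · δ_{n+m,0}` on the Witt algebra:
such a cochain is a 2-cocycle iff `c n = n³·a + n·b` for some `a b : h`, and in that
case it is a coboundary iff `a = 0`. -/
theorem witt_cocycle_iff_cubic
    (K : Type*) [Field K] [CharZero K]
    (W : Type*) [LieRing W] [LieAlgebra K W]
    (ℓ : Module.Basis ℤ K W)
    (hbr : ∀ n m : ℤ, ⁅ℓ n, ℓ m⁆ = ((n - m : ℤ) : K) • ℓ (n + m))
    (h : Type*) [AddCommGroup h] [Module K h]
    (c : ℤ → h) (hc : ∀ n : ℤ, c (-n) = - c n)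
    (ε : W →ₗ[K] W →ₗ[K] h)
    (hε : ∀ n m : ℤ, ε (ℓ n) (ℓ m) = if n + m = 0 then c n else 0) :
    ((∀ x y z : W, ε ⁅x, y⁆ z + ε ⁅z, x⁆ y + ε ⁅y, z⁆ x = 0) ↔
      ∃ a b : h, ∀ n : ℤ, c n = ((n : K) ^ 3) • a + (n : K) • b) ∧
    (∀ a b : h, (∀ n : ℤ, c n = ((n : K) ^ 3) • a + (n : K) • b) →
      ((∃ f : W →ₗ[K] h, ∀ x y : W, ε x y = - f ⁅x, y⁆) ↔ a = 0)) := by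
  have hc0 : c 0 = 0 := by
    have h1 := hc 0
    rw [neg_zero] at h1
    have h2 : (2 : K) • c 0 = 0 := by
      rw [two_smul]; nth_rewrite 1 [h1]; exact neg_add_cancel _
    have h3 := congrArg (fun v => (2 : K)⁻¹ • v) h2
    simpa [inv_smul_smul₀ (two_ne_zero (α := K))] using h3
  constructor
  · constructor
    · -- cocycle → cubic
      intro H
      have rel : ∀ n m : ℤ, ((n - m : ℤ) : K) • c (n + m)
          + ((2*n + m : ℤ) : K) • c m - ((n + 2*m : ℤ) : K) • c n = 0 := by
        intro n m
        have h1 := H (ℓ n) (ℓ m) (ℓ (-n - m))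
        rw [hbr, hbr, hbr] at h1
        simp only [map_smul, LinearMap.smul_apply, hε] at h1
        rw [if_pos (by ring : (n + m) + (-n - m) = 0),
            if_pos (by ring : (-n - m + n) + m = 0),
            if_pos (by ring : (m + (-n - m)) + n = 0),
            show -n - m + n = -m by ring, show m + (-n - m) = -n by ring,
            hc, hc] at h1
        rw [← h1]
        push_cast
        module
      set a : h := (6:K)⁻¹ • (c 2 - (2:K) • c 1) with ha
      have h6 : (6:K) • a = c 2 - (2:K) • c 1 :=
        smul_inv_smul₀ (by norm_num : (6:K) ≠ 0) _
      set b : h := c 1 - a with hb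
      refine ⟨a, b, ?_⟩
      have key : ∀ n : ℕ, c (n:ℤ) = (((n:ℤ):K)^3) • a + ((n:ℤ):K) • b := by
        intro n
        induction n using Nat.strong_induction_on with
        | _ n ih =>
          match n, ih with
          | 0, _ => simpa using hc0
          | 1, _ => push_cast; rw [hb]; module
          | 2, _ =>
            have h2 : c 2 = (6:K) • a + (2:K) • c 1 := by rw [h6]; abel
            push_cast
            rw [h2, hb]; module
          | (m+3), ih =>
            have hr := rel ((m:ℤ)+2) 1
            have e1 := ih (m+2) (by omega)
            have e2 : c 1 = a + b := by rw [hb]; abel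
            push_cast at hr e1 ⊢
            rw [e1, e2, show (m:ℤ)+2+1 = (m:ℤ)+3 from by ring,
              show (m:K)+2-1 = (m:K)+1 from by ring] at hr
            have hm : ((m:K)+1) ≠ 0 := by
              have : (((m+1:ℕ)):K) ≠ 0 := Nat.cast_ne_zero.mpr (Nat.succ_ne_zero m)
              push_cast at this
              exact this
            have h5 : ((m:K)+1) • c ((m:ℤ)+3)
                = (((m:K)+2+2) • (((m:K)+2)^3 • a + ((m:K)+2) • b))
                  - ((2*((m:K)+2)+1) • (a+b)) := by
              apply eq_of_sub_eq_zero
              calc ((m:K)+1) • c ((m:ℤ)+3)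
                    - ((((m:K)+2+2) • (((m:K)+2)^3 • a + ((m:K)+2) • b))
                      - ((2*((m:K)+2)+1) • (a+b)))
                  = ((m:K)+1) • c ((m:ℤ)+3) + (2*((m:K)+2)+1) • (a+b)
                    - ((m:K)+2+2) • (((m:K)+2)^3 • a + ((m:K)+2) • b) := by abel
                _ = 0 := hr
            have h4 : ((m:K)+1) • c ((m:ℤ)+3)
                = ((m:K)+1) • ((((m:K)+3)^3) • a + ((m:K)+3) • b) := by
              rw [h5]; module
            have h7 := congrArg (fun v => ((m:K)+1)⁻¹ • v) h4
            simpa [inv_smul_smul₀ hm] using h7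
      intro n
      rcases n.eq_nat_or_neg with ⟨k, rfl | rfl⟩
      · exact key k
      · rw [hc, key k]
        push_cast
        module
    · -- cubic → cocycle
      rintro ⟨a, b, hab⟩
      have hT : ∀ i j k : ℤ, ε ⁅ℓ i, ℓ j⁆ (ℓ k) + ε ⁅ℓ k, ℓ i⁆ (ℓ j) + ε ⁅ℓ j, ℓ k⁆ (ℓ i) = 0 := by
        intro i j k
        rw [hbr, hbr, hbr]
        simp only [map_smul, LinearMap.smul_apply, hε]
        by_cases hijk : i + j + k = 0
        · rw [if_pos (by omega), if_pos (by omega), if_pos (by omega), hab, hab, hab]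
          obtain rfl : k = -i - j := by omega
          push_cast
          module
        · rw [if_neg (by omega), if_neg (by omega), if_neg (by omega)]
          simp
      intro x y z
      let B : W →ₗ[K] W →ₗ[K] W := (LieModule.toEnd K W W)
      let T1 : W →ₗ[K] W →ₗ[K] W →ₗ[K] h := B.compr₂ ε
      let T3 : W →ₗ[K] W →ₗ[K] W →ₗ[K] h := (LinearMap.lflip.toLinearMap ∘ₗ T1).flip
      let T2 : W →ₗ[K] W →ₗ[K] W →ₗ[K] h := (LinearMap.lflip.toLinearMap ∘ₗ T3).flip
      have e1 : ∀ u v w : W, T1 u v w = ε ⁅u, v⁆ w := fun u v w => rfl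
      have e3 : ∀ u v w : W, T3 u v w = ε ⁅v, w⁆ u := fun u v w => rfl
      have e2 : ∀ u v w : W, T2 u v w = ε ⁅w, u⁆ v := fun u v w => rfl
      have hzero : T1 + T2 + T3 = 0 := by
        apply LinearMap.ext_basis ℓ ℓ
        intro i j
        apply Module.Basis.ext ℓ
        intro k
        simp only [LinearMap.add_apply, LinearMap.zero_apply]
        rw [e1, e2, e3]
        exact hT i j k
      have hz := LinearMap.congr_fun (LinearMap.congr_fun (LinearMap.congr_fun hzero x) y) z
      simp only [LinearMap.add_apply, LinearMap.zero_apply] at hz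
      rw [e1, e2, e3] at hz
      exact hz
  · intro a b hab
    constructor
    · rintro ⟨f, hf⟩
      have hcn : ∀ n : ℤ, c n = ((2*n : ℤ):K) • (- f (ℓ 0)) := by
        intro n
        have h1 := hf (ℓ n) (ℓ (-n))
        rw [hε, if_pos (add_neg_cancel n), hbr, map_smul,
          show n + -n = 0 from add_neg_cancel n] at h1
        rw [h1]
        push_cast
        module
      have g1 : a + b = (2:K) • (- f (ℓ 0)) := by
        have h1 := (hab 1).symm.trans (hcn 1)
        push_cast at h1
        simpa using h1
      have g2 : (8:K) • a + (2:K) • b = (4:K) • (- f (ℓ 0)) := by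
        have h1 := (hab 2).symm.trans (hcn 2)
        push_cast at h1
        norm_num at h1
        simpa [smul_neg] using h1
      have h6 : (6:K) • a = 0 := by
        calc (6:K) • a = ((8:K) • a + (2:K) • b) - (2:K) • (a + b) := by module
          _ = (4:K) • (- f (ℓ 0)) - (2:K) • ((2:K) • (- f (ℓ 0))) := by rw [g2, g1]
          _ = 0 := by module
      have h7 := congrArg (fun v => (6:K)⁻¹ • v) h6
      simpa [inv_smul_smul₀ (by norm_num : (6:K) ≠ 0)] using h7
    · rintro rfl
      refine ⟨ℓ.constr K (fun i => if i = 0 then -((2:K)⁻¹ • b) else 0), ?_⟩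
      have hbil : ε = -(((LieModule.toEnd K W W) : W →ₗ[K] W →ₗ[K] W).compr₂
          (ℓ.constr K (fun i => if i = 0 then -((2:K)⁻¹ • b) else 0))) := by
        apply LinearMap.ext_basis ℓ ℓ
        intro n m
        rw [hε]
        have : ((LieModule.toEnd K W W) : W →ₗ[K] W →ₗ[K] W) (ℓ n) (ℓ m) = ⁅ℓ n, ℓ m⁆ := rfl
        simp only [LinearMap.neg_apply, LinearMap.compr₂_apply, this, hbr, map_smul,
          Module.Basis.constr_basis]
        by_cases hnm : n + m = 0
        · rw [if_pos hnm, if_pos hnm, hab]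
          have hm : m = -n := by omega
          subst hm
          push_cast
          match_scalars <;> field_simp <;> ring
        · rw [if_neg hnm, if_neg hnm]
          simp
      intro x y
      rw [hbil]
      rfl
end

section
/- Let g be a Lie algebra over a field K, let e be a perfect Lie algebra (i.e. e = [e,e]) with a Lie algebra morphism π : e → g, and let π′ : e′ → g be a Lie algebra morphism whose kernel is contained in the centre of e′. Then there exists at most one Lie algebra morphism φ : e → e′ with π′ ∘ φ = π. -/
/-- Let `e` be a perfect Lie algebra with a morphism `π : e → g`, and let
`π' : e' → g` be a morphism whose kernel is contained in the centre of `e'`.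
Then there is at most one morphism `φ : e → e'` with `π' ∘ φ = π`. -/
theorem unique_morphism_over_perfect
    (K : Type*) [Field K]
    (g : Type*) [LieRing g] [LieAlgebra K g]
    (e : Type*) [LieRing e] [LieAlgebra K e]
    (e' : Type*) [LieRing e'] [LieAlgebra K e']
    (hperfect : Submodule.span K {z : e | ∃ x y : e, ⁅x, y⁆ = z} = ⊤)
    (π : e →ₗ⁅K⁆ g) (π' : e' →ₗ⁅K⁆ g)
    (hker : ∀ x : e', π' x = 0 → ∀ y : e', ⁅x, y⁆ = 0)
    (φ ψ : e →ₗ⁅K⁆ e')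
    (hφ : ∀ x : e, π' (φ x) = π x) (hψ : ∀ x : e, π' (ψ x) = π x) :
    φ = ψ := by
  have hdiff : ∀ x : e, π' (φ x - ψ x) = 0 := by
    intro x; rw [map_sub π', hφ, hψ, sub_self]
  have key : ∀ z : e, φ z = ψ z := by
    have hsub : ∀ z ∈ Submodule.span K {z : e | ∃ x y : e, ⁅x, y⁆ = z},
        φ z = ψ z := by
      intro z hz
      induction hz using Submodule.span_induction with
      | mem z hz =>
        obtain ⟨x, y, rfl⟩ := hz
        have h1 : ⁅φ x - ψ x, φ y⁆ = 0 := hker _ (hdiff x) _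
        have h2 : ⁅ψ x, φ y - ψ y⁆ = 0 := by
          rw [← lie_skew, hker _ (hdiff y) (ψ x), neg_zero]
        calc φ ⁅x, y⁆ = ⁅φ x, φ y⁆ := φ.map_lie x y
          _ = ⁅φ x - ψ x, φ y⁆ + ⁅ψ x, φ y⁆ := by rw [← add_lie, sub_add_cancel]
          _ = ⁅ψ x, φ y - ψ y⁆ + ⁅ψ x, ψ y⁆ := by
              rw [h1, zero_add, ← lie_add, sub_add_cancel]
          _ = ⁅ψ x, ψ y⁆ := by rw [h2, zero_add]
          _ = ψ ⁅x, y⁆ := (ψ.map_lie x y).symm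
      | zero => simp
      | add a b _ _ ha hb => simp [ha, hb]
      | smul c a _ ha => simp [ha]
    intro z
    exact hsub z (hperfect ▸ Submodule.mem_top)
  exact LieHom.ext key
end

section
/- Let K be a field of characteristic zero and W the Witt algebra over K. Let Vir′ := W ⊕ K with the bracket [(x,a), (y,b)] := ([x,y], ε(x,y)), where ε is the alternating bilinear form on W determined by ε(ℓ_n, ℓ_m) = n³ δ_{n+m,0}. Then Vir′ is a Lie algebra, the projection p : Vir′ → W is surjective with kernel 0 ⊕ K contained in the centre of Vir′, and Vir′ is the universal central extension of W: for every Lie algebra e with a surjective Lie morphism π : e → W whose kernel is contained in the centre of e, there exists a unique Lie algebra morphism φ : Vir′ → e with π ∘ φ = p. -/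
private lemma basis_span_ind {K W : Type*} [Field K] [AddCommGroup W] [Module K W]
    (ℓ : Module.Basis ℤ K W) (P : W → Prop)
    (hb : ∀ n : ℤ, P (ℓ n)) (h0 : P 0)
    (hadd : ∀ x y, P x → P y → P (x + y))
    (hsmul : ∀ (c : K) (x), P x → P (c • x)) : ∀ x, P x := by
  intro x
  have hx : x ∈ Submodule.span K (Set.range ℓ) := by rw [ℓ.span_eq]; trivial
  induction hx using Submodule.span_induction with
  | mem x h => obtain ⟨n, rfl⟩ := h; exact hb n
  | zero => exact h0
  | add x y _ _ px py => exact hadd x y px py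
  | smul c x _ px => exact hsmul c x px

private lemma eps_skew {K W : Type*} [Field K] [CharZero K] [LieRing W] [LieAlgebra K W]
    (ℓ : Module.Basis ℤ K W) (ε : W →ₗ[K] W →ₗ[K] K)
    (hε : ∀ n m : ℤ, ε (ℓ n) (ℓ m) = if n + m = 0 then ((n : K) ^ 3) else 0) :
    ∀ x y, ε x y = - ε y x := by
  refine basis_span_ind ℓ (fun x => ∀ y, ε x y = - ε y x) ?_ (by simp) ?_ ?_
  · intro n
    refine basis_span_ind ℓ (fun y => ε (ℓ n) y = - ε y (ℓ n)) ?_ (by simp) ?_ ?_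
    · intro m
      rw [hε, hε]
      rcases eq_or_ne (n + m) 0 with h | h
      · rw [if_pos h, if_pos (by omega)]
        have hm : m = -n := by omega
        subst hm; push_cast; ring
      · rw [if_neg h, if_neg (by omega), neg_zero]
    · intro x y hx hy; simp only [map_add, LinearMap.add_apply, hx, hy]; ring
    · intro c x hx; simp only [map_smul, LinearMap.smul_apply, smul_eq_mul, hx]; ring
  · intro x y hx hy z; simp only [map_add, LinearMap.add_apply, hx, hy]; ring
  · intro c x hx z; simp only [map_smul, LinearMap.smul_apply, smul_eq_mul, hx]; ring

private lemma eps_diag {K W : Type*} [Field K] [CharZero K] [LieRing W] [LieAlgebra K W]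
    (ℓ : Module.Basis ℤ K W) (ε : W →ₗ[K] W →ₗ[K] K)
    (hε : ∀ n m : ℤ, ε (ℓ n) (ℓ m) = if n + m = 0 then ((n : K) ^ 3) else 0) :
    ∀ x, ε x x = 0 := by
  intro x
  have h := eps_skew ℓ ε hε x x
  have h2 : (2 : K) * ε x x = 0 := by linear_combination h
  exact (mul_eq_zero.mp h2).resolve_left two_ne_zero

private lemma eps_cocycle {K W : Type*} [Field K] [CharZero K] [LieRing W] [LieAlgebra K W]
    (ℓ : Module.Basis ℤ K W)
    (hbr : ∀ n m : ℤ, ⁅ℓ n, ℓ m⁆ = ((n - m : ℤ) : K) • ℓ (n + m))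
    (ε : W →ₗ[K] W →ₗ[K] K)
    (hε : ∀ n m : ℤ, ε (ℓ n) (ℓ m) = if n + m = 0 then ((n : K) ^ 3) else 0) :
    ∀ x y z, ε x ⁅y, z⁆ = ε ⁅x, y⁆ z + ε y ⁅x, z⁆ := by
  refine basis_span_ind ℓ (fun x => ∀ y z, ε x ⁅y, z⁆ = ε ⁅x, y⁆ z + ε y ⁅x, z⁆) ?_
    (by simp) ?_ ?_
  · intro n
    refine basis_span_ind ℓ (fun y => ∀ z, ε (ℓ n) ⁅y, z⁆ = ε ⁅ℓ n, y⁆ z + ε y ⁅ℓ n, z⁆) ?_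
      (by simp) ?_ ?_
    · intro m
      refine basis_span_ind ℓ
        (fun z => ε (ℓ n) ⁅ℓ m, z⁆ = ε ⁅ℓ n, ℓ m⁆ z + ε (ℓ m) ⁅ℓ n, z⁆) ?_ (by simp) ?_ ?_
      · intro k
        rw [hbr, hbr, hbr, map_smul, LinearMap.map_smul₂, map_smul, hε, hε, hε]
        rcases eq_or_ne (n + (m + k)) 0 with h | h
        · rw [if_pos (by omega), if_pos (by omega), if_pos (by omega)]
          have hk : k = -n - m := by omega
          subst hk; push_cast; simp only [smul_eq_mul]; ring
        · rw [if_neg (by omega), if_neg (by omega), if_neg (by omega)]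
          simp
      · intro x y hx hy
        simp only [lie_add, map_add, LinearMap.add_apply, hx, hy]; ring
      · intro c x hx
        simp only [lie_smul, map_smul, LinearMap.smul_apply, smul_eq_mul, hx]; ring
    · intro x y hx hy z
      simp only [add_lie, lie_add, map_add, LinearMap.add_apply, hx, hy]; ring
    · intro c x hx z
      simp only [smul_lie, lie_smul, map_smul, LinearMap.smul_apply, smul_eq_mul, hx]; ring
  · intro x y hx hy u z
    simp only [add_lie, map_add, LinearMap.add_apply, hx, hy]; ring
  · intro c x hx u z
    simp only [smul_lie, map_smul, LinearMap.smul_apply, smul_eq_mul, hx]; ring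

private lemma universal_part
    {K : Type*} [Field K] [CharZero K]
    {W : Type*} [LieRing W] [LieAlgebra K W]
    (ℓ : Module.Basis ℤ K W)
    (hbr : ∀ n m : ℤ, ⁅ℓ n, ℓ m⁆ = ((n - m : ℤ) : K) • ℓ (n + m))
    (ε : W →ₗ[K] W →ₗ[K] K)
    (hε : ∀ n m : ℤ, ε (ℓ n) (ℓ m) = if n + m = 0 then ((n : K) ^ 3) else 0)
    {e : Type*} [LieRing e] [LieAlgebra K e] (π : e →ₗ⁅K⁆ W)
    (hπs : Function.Surjective π)
    (hπc : ∀ x : e, π x = 0 → ∀ y : e, ⁅x, y⁆ = 0) :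
    ∃! φ : W × K →ₗ[K] e,
      (∀ u v : W × K, φ (⁅u.1, v.1⁆, ε u.1 v.1) = ⁅φ u, φ v⁆) ∧
      (∀ u : W × K, π (φ u) = u.1) := by
  classical
  have hπc' : ∀ x : e, π x = 0 → ∀ y : e, ⁅y, x⁆ = 0 := fun x hx y => by
    rw [← lie_skew, hπc x hx y]; simp
  -- Step 1: lifts of the basis
  obtain ⟨F, hF⟩ : ∃ F : ℤ → e, ∀ n, π (F n) = ℓ n := by
    choose F hF using hπs
    exact ⟨fun n => F (ℓ n), fun n => hF _⟩
  -- Step 2: normalized lifts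
  obtain ⟨E, hEπ, hE0⟩ : ∃ E : ℤ → e, (∀ n, π (E n) = ℓ n) ∧
      ∀ n, ⁅E 0, E n⁆ = (-(n : K)) • E n := by
    have hw : ∀ n : ℤ, π (⁅F 0, F n⁆ + (n : K) • F n) = 0 := by
      intro n
      rw [map_add, map_smul, LieHom.map_lie, hF, hF, hbr, zero_add]
      push_cast
      module
    have hE00 : F (0:ℤ) - (((0:ℤ) : K))⁻¹ • (⁅F 0, F 0⁆ + ((0:ℤ) : K) • F 0) = F 0 := by
      simp
    refine ⟨fun n => F n - ((n : K))⁻¹ • (⁅F 0, F n⁆ + (n : K) • F n), ?_, ?_⟩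
    · intro n
      simp only [map_sub, map_smul, hw, hF, smul_zero, sub_zero]
    · intro n
      by_cases hn : n = 0
      · subst hn
        simp
      · have hnK : (n : K) ≠ 0 := Int.cast_ne_zero.mpr hn
        simp only []
        rw [hE00, lie_sub, lie_smul, hπc' _ (hw n) (F 0), smul_zero, sub_zero]
        match_scalars <;> field_simp <;> ring
  -- Step 3: the defect z
  obtain ⟨z, hz, hz'⟩ : ∃ z : ℤ → ℤ → e,
      (∀ n m, ⁅E n, E m⁆ = ((n - m : ℤ) : K) • E (n + m) + z n m) ∧
      (∀ n m, z n m = ⁅E n, E m⁆ - ((n - m : ℤ) : K) • E (n + m)) :=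
    ⟨fun n m => ⁅E n, E m⁆ - ((n - m : ℤ) : K) • E (n + m),
      fun n m => by module, fun n m => rfl⟩
  have hzπ : ∀ n m, π (z n m) = 0 := by
    intro n m
    rw [hz', map_sub, map_smul, LieHom.map_lie, hEπ, hEπ, hEπ, hbr, sub_self]
  have hzc : ∀ n m (y : e), ⁅z n m, y⁆ = 0 := fun n m => hπc _ (hzπ n m)
  have hzc' : ∀ n m (y : e), ⁅y, z n m⁆ = 0 := fun n m => hπc' _ (hzπ n m)
  have hz0 : ∀ n, z 0 n = 0 := by
    intro n
    have h1 := hz 0 n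
    rw [hE0 n] at h1
    have h2 : ((0 - n : ℤ) : K) = -(n : K) := by push_cast; ring
    rw [h2, zero_add] at h1
    exact (left_eq_add.mp h1)
  have hzskew : ∀ n m, z m n = - z n m := by
    intro n m
    have h1 := hz n m
    have h2 := hz m n
    rw [add_comm m n] at h2
    have h3 : ⁅E m, E n⁆ = -⁅E n, E m⁆ := by rw [← lie_skew]
    rw [h3] at h2
    push_cast at h1 h2 ⊢
    linear_combination (norm := module) -h1 - h2
  have hcocz : ∀ n m k, ((m - k : ℤ) : K) • z n (m + k) =
      ((n - m : ℤ) : K) • z (n + m) k + ((n - k : ℤ) : K) • z m (n + k) := by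
    intro n m k
    have J := leibniz_lie (E n) (E m) (E k)
    rw [hz m k, lie_add, lie_smul, hzc' m k, add_zero, hz n (m + k),
        hz n m, add_lie, smul_lie, hzc n m _, add_zero, hz (n + m) k,
        hz n k, lie_add, lie_smul, hzc' n k, add_zero, hz m (n + k)] at J
    have e1 : n + (m + k) = n + m + k := by ring
    have e2 : m + (n + k) = n + m + k := by ring
    rw [e1, e2] at J
    push_cast at J ⊢
    linear_combination (norm := module) J
  have hzdiag : ∀ n m, n + m ≠ 0 → z n m = 0 := by
    intro n m hnm
    have h := hcocz n m 0
    simp only [add_zero, sub_zero] at h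
    have h0 : z (n + m) 0 = 0 := by rw [hzskew 0 (n + m), hz0, neg_zero]
    rw [h0, smul_zero, zero_add, hzskew n m] at h
    have h2 : ((n + m : ℤ) : K) • z n m = 0 := by
      push_cast at h ⊢
      linear_combination (norm := module) h
    exact (smul_eq_zero.mp h2).resolve_left (Int.cast_ne_zero.mpr hnm)
  have hrec : ∀ n m : ℤ, ((2 * m + n : ℤ) : K) • z n (-n) =
      ((n - m : ℤ) : K) • z (n + m) (-(n + m)) + ((2 * n + m : ℤ) : K) • z m (-m) := by
    intro n m
    have h := hcocz n m (-(n + m))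
    have e1 : m + -(n + m) = -n := by ring
    have e2 : n + -(n + m) = -m := by ring
    rw [e1, e2] at h
    push_cast at h ⊢
    linear_combination (norm := module) h
  -- the central elements a and b
  obtain ⟨a, b, hC1, hC2, hπa, hπb⟩ : ∃ a b : e, z 1 (-1) = a + b ∧
      z 2 (-2) = (8 : K) • a + (2 : K) • b ∧ π a = 0 ∧ π b = 0 := by
    refine ⟨(6 : K)⁻¹ • (z 2 (-2) - (2 : K) • z 1 (-1)),
      z 1 (-1) - (6 : K)⁻¹ • (z 2 (-2) - (2 : K) • z 1 (-1)), by module, ?_, ?_, ?_⟩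
    · match_scalars <;> field_simp <;> ring
    · simp [map_smul, map_sub, hzπ]
    · simp [map_smul, map_sub, hzπ]
  have hac : ∀ y : e, ⁅a, y⁆ = 0 := hπc _ hπa
  have hac' : ∀ y : e, ⁅y, a⁆ = 0 := hπc' _ hπa
  have hbc : ∀ y : e, ⁅b, y⁆ = 0 := hπc _ hπb
  have hbc' : ∀ y : e, ⁅y, b⁆ = 0 := hπc' _ hπb
  -- the value of z on the antidiagonal
  have hCn : ∀ n : ℤ, z n (-n) = ((n : K) ^ 3) • a + (n : K) • b := by
    have haux : ∀ k : ℕ, z ((k : ℤ) + 2) (-((k : ℤ) + 2)) =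
        ((((k : ℤ) + 2 : ℤ) : K) ^ 3) • a + ((((k : ℤ) + 2 : ℤ)) : K) • b := by
      intro k
      induction k with
      | zero =>
        push_cast
        rw [hC2]
        match_scalars <;> norm_num
      | succ k ih =>
        have h := hrec ((k : ℤ) + 2) 1
        rw [ih, hC1] at h
        have hkK : (((k : ℤ) + 1 : ℤ) : K) ≠ 0 := by
          rw [Int.cast_ne_zero]; omega
        have h2 : ((k : ℤ) + 2 + 1) = ((k : ℤ) + 3) := by ring
        rw [h2] at h
        have h3 : ((k + 1 : ℕ) : ℤ) + 2 = (k : ℤ) + 3 := by push_cast; ring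
        rw [h3]
        apply smul_right_injective e hkK
        push_cast at h ⊢
        linear_combination (norm := module) -h
    have hnat : ∀ k : ℕ, z (k : ℤ) (-(k : ℤ)) =
        (((k : ℤ) : K) ^ 3) • a + (((k : ℤ)) : K) • b := by
      intro k
      match k with
      | 0 => simp [hz0]
      | 1 => push_cast; rw [hC1]; match_scalars <;> ring
      | (k + 2) =>
        have := haux k
        have h3 : ((k + 2 : ℕ) : ℤ) = (k : ℤ) + 2 := by push_cast; ring
        rw [h3]
        exact this
    intro n
    rcases le_or_gt 0 n with hn | hn
    · obtain ⟨k, rfl⟩ := Int.eq_ofNat_of_zero_le hn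
      exact hnat k
    · obtain ⟨k, rfl⟩ : ∃ k : ℕ, n = -(k : ℤ) := ⟨n.natAbs, by omega⟩
      rw [neg_neg, hzskew (k : ℤ) (-(k : ℤ)), hnat k]
      push_cast
      module
  -- the fully normalized section G
  obtain ⟨G, hGπ, hGE, hGbr⟩ : ∃ G : ℤ → e, (∀ n, π (G n) = ℓ n) ∧
      (∀ n, n ≠ 0 → G n = E n) ∧
      ∀ n m, ⁅G n, G m⁆ = ((n - m : ℤ) : K) • G (n + m) +
        (if n + m = 0 then ((n : K) ^ 3) else 0) • a := by
    refine ⟨fun n => E n + (if n = 0 then (2 : K)⁻¹ • b else 0), ?_, ?_, ?_⟩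
    · intro n
      by_cases hn : n = 0 <;>
        simp [hn, hEπ, map_add, map_smul, hπb]
    · intro n hn
      simp [if_neg hn]
    · intro n m
      have key : ⁅E n + (if n = 0 then (2 : K)⁻¹ • b else 0),
          E m + (if m = 0 then (2 : K)⁻¹ • b else 0)⁆ = ⁅E n, E m⁆ := by
        by_cases hn : n = 0 <;> by_cases hm : m = 0 <;>
          simp [hn, hm, lie_add, add_lie, lie_smul, smul_lie, hbc, hbc']
      simp only []
      rw [key, hz n m]
      by_cases h : n + m = 0
      · have hm : m = -n := by omega
        subst hm
        have h0 : n + -n = 0 := by ring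
        rw [h0, if_pos rfl, if_pos rfl, hCn n]
        have h2 : ((2 : K))⁻¹ * 2 = 1 := by norm_num
        push_cast
        match_scalars
        · ring
        · ring
        · field_simp; ring
      · rw [if_neg h, if_neg h, hzdiag n m h]
        have hnm : ¬ (n + m = 0) := h
        simp [hnm]
  -- the linear section s : W →ₗ[K] e
  set s : W →ₗ[K] e := (ℓ.constr K) G with hs
  have hsb : ∀ n, s (ℓ n) = G n := fun n => ℓ.constr_basis K G n
  have hπsx : ∀ x, π (s x) = x := by
    have h : (π : e →ₗ[K] W).comp s = LinearMap.id := by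
      refine ℓ.ext fun n => ?_
      simp [hsb, hGπ]
    intro x
    simpa using LinearMap.congr_fun h x
  -- the bracket identity for s
  have hsbr : ∀ x y, ⁅s x, s y⁆ = s ⁅x, y⁆ + (ε x y) • a := by
    refine basis_span_ind ℓ (fun x => ∀ y, ⁅s x, s y⁆ = s ⁅x, y⁆ + (ε x y) • a) ?_
      (by simp) ?_ ?_
    · intro n
      refine basis_span_ind ℓ
        (fun y => ⁅s (ℓ n), s y⁆ = s ⁅ℓ n, y⁆ + (ε (ℓ n)) y • a) ?_ (by simp) ?_ ?_
      · intro m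
        rw [hsb, hsb, hGbr, hbr, map_smul, hsb, hε]
      · intro x y hx hy
        simp only [map_add, lie_add, LinearMap.add_apply, hx, hy, add_smul]
        abel
      · intro c x hx
        simp only [map_smul, lie_smul, LinearMap.smul_apply, hx, smul_add, smul_smul,
          smul_eq_mul]
    · intro x y hx hy u
      simp only [map_add, add_lie, LinearMap.add_apply, hx, hy, add_smul]
      abel
    · intro c x hx u
      simp only [map_smul, smul_lie, LinearMap.map_smul₂, LinearMap.smul_apply, hx,
        smul_add, smul_smul, smul_eq_mul]
  -- the morphism φ
  refine ⟨s.comp (LinearMap.fst K W K) +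
      (LinearMap.toSpanSingleton K e a).comp (LinearMap.snd K W K), ⟨?_, ?_⟩, ?_⟩
  · intro u v
    simp only [LinearMap.add_apply, LinearMap.coe_comp, Function.comp_apply,
      LinearMap.fst_apply, LinearMap.snd_apply, LinearMap.toSpanSingleton_apply]
    rw [lie_add, add_lie, add_lie, lie_smul, lie_smul, smul_lie, smul_lie,
      hac (s v.1), hac' (s u.1), hac' a, hsbr]
    simp
  · intro u
    simp [map_add, map_smul, hπsx, hπa]
  · rintro φ' ⟨h1, h2⟩
    have hδπ : ∀ p : ℤ, π (φ' (ℓ p, 0) - G p) = 0 := by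
      intro p
      rw [map_sub, hGπ, h2 (ℓ p, 0)]
      simp
    have hδc : ∀ p (y : e), ⁅φ' (ℓ p, 0) - G p, y⁆ = 0 := fun p => hπc _ (hδπ p)
    have hδc' : ∀ p (y : e), ⁅y, φ' (ℓ p, 0) - G p⁆ = 0 := fun p => hπc' _ (hδπ p)
    have hkey : ∀ n m : ℤ, ((n - m : ℤ) : K) • (φ' (ℓ (n + m), 0) - G (n + m)) +
        (if n + m = 0 then ((n : K) ^ 3) else 0) • (φ' ((0 : W), (1 : K)) - a) = 0 := by
      intro n m
      have hA : ⁅φ' (ℓ n, 0), φ' (ℓ m, 0)⁆ = ⁅G n, G m⁆ := by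
        have hsub : ⁅φ' (ℓ n, 0), φ' (ℓ m, 0)⁆ - ⁅G n, G m⁆ =
            ⁅φ' (ℓ n, 0) - G n, φ' (ℓ m, 0)⁆ + ⁅G n, φ' (ℓ m, 0) - G m⁆ := by
          rw [sub_lie, lie_sub]; abel
        rw [hδc n, hδc' m, add_zero] at hsub
        exact sub_eq_zero.mp hsub
      have hpair : ((⁅ℓ n, ℓ m⁆, ε (ℓ n) (ℓ m)) : W × K) =
          ((n - m : ℤ) : K) • ((ℓ (n + m), (0 : K)) : W × K) +
          (if n + m = 0 then ((n : K) ^ 3) else 0) • (((0 : W), (1 : K)) : W × K) := by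
        rcases eq_or_ne (n + m) 0 with h | h <;>
          simp [hbr, hε, h, Prod.ext_iff, Prod.smul_mk]
      have hB := h1 (ℓ n, 0) (ℓ m, 0)
      simp only [Prod.fst] at hB
      rw [hpair, map_add, map_smul, map_smul, hA, hGbr] at hB
      push_cast at hB ⊢
      linear_combination (norm := module) hB
    have h12 : ((12 : K)) • (φ' ((0 : W), (1 : K)) - a) = 0 := by
      have k1 := hkey 1 (-1)
      have k2 := hkey 2 (-2)
      norm_num at k1 k2
      linear_combination (norm := module) (2 : K) • k2 - (4 : K) • k1
    have hδ1 : φ' ((0 : W), (1 : K)) = a := by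
      have := (smul_eq_zero.mp h12).resolve_left (by norm_num)
      exact sub_eq_zero.mp this
    have hδ0 : φ' (ℓ 0, (0 : K)) = G 0 := by
      have k1 := hkey 1 (-1)
      norm_num at k1
      rw [hδ1, sub_self, add_zero] at k1
      have h2ne : (2 : K) ≠ 0 := by norm_num
      have := (smul_eq_zero.mp k1).resolve_left h2ne
      exact sub_eq_zero.mp this
    have hδG : ∀ p : ℤ, φ' (ℓ p, 0) = G p := by
      intro p
      by_cases hp : p = 0
      · subst hp; exact hδ0
      · have k := hkey p 0
        rw [add_zero, sub_zero] at k
        rw [if_neg hp, zero_smul, add_zero] at k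
        have := (smul_eq_zero.mp k).resolve_left (Int.cast_ne_zero.mpr hp)
        exact sub_eq_zero.mp this
    apply LinearMap.ext
    intro u
    have hu : (u : W × K) = ((u.1, (0 : K)) : W × K) + u.2 • (((0 : W), (1 : K)) : W × K) := by
      ext <;> simp
    have hφx : ∀ x : W, φ' (x, (0 : K)) = s x := by
      refine basis_span_ind ℓ (fun x => φ' (x, (0 : K)) = s x) ?_ ?_ ?_ ?_
      · intro n; rw [hδG n, hsb]
      · show φ' ((0 : W), (0 : K)) = s 0
        rw [show (((0 : W), (0 : K)) : W × K) = 0 from rfl, map_zero, map_zero]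
      · intro x y hx hy
        have hxy : (((x + y : W), (0 : K)) : W × K) = ((x, (0:K)) : W × K) + ((y, (0:K)) : W × K) := by
          ext <;> simp
        rw [hxy, map_add, hx, hy, ← map_add]
      · intro c x hx
        have hcx : (((c • x : W), (0 : K)) : W × K) = c • ((x, (0:K)) : W × K) := by
          ext <;> simp
        rw [hcx, map_smul, hx, ← map_smul]
    rw [hu, map_add, map_smul, map_add, map_smul, hφx, hδ1]
    simp

/-- The Virasoro-type central extension `Vir′ = W ⊕ K` of the Witt algebra `W`,
with bracket `[(x,a),(y,b)] = ([x,y], ε(x,y))` for the 2-cocycle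
`ε(ℓ n, ℓ m) = n³ δ_{n+m,0}`, is a Lie algebra, the projection onto `W` is a
central extension, and it is the universal central extension of `W`. -/
theorem virasoro_prime_universal_central_extension
    (K : Type*) [Field K] [CharZero K]
    (W : Type*) [LieRing W] [LieAlgebra K W]
    (ℓ : Module.Basis ℤ K W)
    (hbr : ∀ n m : ℤ, ⁅ℓ n, ℓ m⁆ = ((n - m : ℤ) : K) • ℓ (n + m))
    (ε : W →ₗ[K] W →ₗ[K] K)
    (hε : ∀ n m : ℤ, ε (ℓ n) (ℓ m) = if n + m = 0 then ((n : K) ^ 3) else 0)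
    (br : W × K → W × K → W × K)
    (hbrdef : ∀ u v : W × K, br u v = (⁅u.1, v.1⁆, ε u.1 v.1)) :
    -- `Vir′` is a Lie algebra:
    ((∀ u v w : W × K, br (u + v) w = br u w + br v w) ∧
     (∀ u v w : W × K, br u (v + w) = br u v + br u w) ∧
     (∀ (c : K) (u v : W × K), br (c • u) v = c • br u v) ∧
     (∀ (c : K) (u v : W × K), br u (c • v) = c • br u v) ∧
     (∀ u : W × K, br u u = 0) ∧
     (∀ u v w : W × K, br u (br v w) = br (br u v) w + br v (br u w))) ∧
    -- the projection is surjective and its kernel `0 ⊕ K` is central: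
    (Function.Surjective (Prod.fst : W × K → W) ∧
     (∀ u : W × K, u.1 = 0 → ∀ v : W × K, br u v = 0)) ∧
    -- universal property:
    (∀ (e : Type*) [LieRing e] [LieAlgebra K e] (π : e →ₗ⁅K⁆ W),
      Function.Surjective π →
      (∀ x : e, π x = 0 → ∀ y : e, ⁅x, y⁆ = 0) →
      ∃! φ : W × K →ₗ[K] e,
        (∀ u v : W × K, φ (br u v) = ⁅φ u, φ v⁆) ∧ (∀ u : W × K, π (φ u) = u.1)) := by
  refine ⟨⟨?_, ?_, ?_, ?_, ?_, ?_⟩, ⟨?_, ?_⟩, ?_⟩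
  · intro u v w
    simp [hbrdef, Prod.ext_iff, add_lie, map_add]
  · intro u v w
    simp [hbrdef, Prod.ext_iff, lie_add, map_add]
  · intro c u v
    simp [hbrdef, Prod.ext_iff, smul_lie, map_smul, Prod.smul_def]
  · intro c u v
    simp [hbrdef, Prod.ext_iff, lie_smul, map_smul, Prod.smul_def]
  · intro u
    simp [hbrdef, Prod.ext_iff, eps_diag ℓ ε hε]
  · intro u v w
    simp only [hbrdef, Prod.ext_iff, Prod.fst, Prod.snd, Prod.mk_add_mk]
    exact ⟨leibniz_lie _ _ _, eps_cocycle ℓ hbr ε hε _ _ _⟩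
  · exact fun x => ⟨(x, 0), rfl⟩
  · intro u hu v
    simp [hbrdef, hu, Prod.ext_iff]
  · intro e _ _ π h1 h2
    simp only [hbrdef]
    exact universal_part ℓ hbr ε hε π h1 h2
end

section
/- Let K be a field of characteristic zero and g a Lie algebra over K equipped with an invariant symmetric bilinear form ( , ). On the loop Lie algebra g̃ = K[x,x⁻¹] ⊗_K g, define the bilinear form ε(f ⊗ a, g ⊗ b) := res(f′·g)·(a, b), where f′ is the formal derivative of f and res picks the coefficient of x⁻¹; equivalently, ε(a_n, b_m) = n·(a,b)·δ_{n+m,0} on the elements a_n := xⁿ ⊗ a. Then ε is alternating (ε(u,u) = 0) and satisfies the Chevalley–Eilenberg 2-cocycle condition ε([u,v],w) + ε([w,u],v) + ε([v,w],u) = 0 for all u, v, w ∈ g̃. -/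
open scoped TensorProduct

/-- On the loop Lie algebra `g̃ = K[x,x⁻¹] ⊗ g` of a Lie algebra `g` with an invariant
symmetric bilinear form `B`, the bilinear form determined by
`ε(xⁿ ⊗ a, xᵐ ⊗ b) = n·B(a,b)·δ_{n+m,0}` is alternating and satisfies the
Chevalley–Eilenberg 2-cocycle condition. -/
theorem loop_algebra_two_cocycle
    (K : Type*) [Field K] [CharZero K]
    (g : Type*) [LieRing g] [LieAlgebra K g]
    (B : g →ₗ[K] g →ₗ[K] K)
    (hsymm : ∀ a b : g, B a b = B b a)
    (hinv : ∀ a b c : g, B ⁅a, b⁆ c = B a ⁅b, c⁆)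
    (ε : (LaurentPolynomial K ⊗[K] g) →ₗ[K] (LaurentPolynomial K ⊗[K] g) →ₗ[K] K)
    (hε : ∀ (n m : ℤ) (a b : g),
      ε (LaurentPolynomial.T n ⊗ₜ[K] a) (LaurentPolynomial.T m ⊗ₜ[K] b) =
        if n + m = 0 then (n : K) * B a b else 0) :
    (∀ u : LaurentPolynomial K ⊗[K] g, ε u u = 0) ∧
    (∀ u v w : LaurentPolynomial K ⊗[K] g,
      ε ⁅u, v⁆ w + ε ⁅w, u⁆ v + ε ⁅v, w⁆ u = 0) := by
  set S : Set (LaurentPolynomial K ⊗[K] g) :=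
    {x | ∃ n a, x = LaurentPolynomial.T n ⊗ₜ[K] a}
  -- every element lies in the span of the `T n ⊗ a`
  have hspan : ∀ u : LaurentPolynomial K ⊗[K] g, u ∈ Submodule.span K S := by
    intro u
    induction u using TensorProduct.induction_on with
    | zero => exact Submodule.zero_mem _
    | add x y hx hy => exact Submodule.add_mem _ hx hy
    | tmul f a =>
      induction f using AddMonoidAlgebra.induction with
      | zero => simp
      | single_add n k f _ _ hf =>
        rw [TensorProduct.add_tmul]
        refine Submodule.add_mem _ ?_ hf
        have : (AddMonoidAlgebra.single n k : LaurentPolynomial K) = k • LaurentPolynomial.T n := by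
          rw [LaurentPolynomial.T, AddMonoidAlgebra.smul_single, smul_eq_mul, mul_one]
        rw [this, ← TensorProduct.smul_tmul']
        exact Submodule.smul_mem _ _ (Submodule.subset_span ⟨n, a, rfl⟩)
  -- scalar compatibility of the bracket with K-scalars
  have hsl : ∀ (k : K) (u v : LaurentPolynomial K ⊗[K] g), ⁅k • u, v⁆ = k • ⁅u, v⁆ := by
    intro k u v
    have h := smul_lie (algebraMap K (LaurentPolynomial K) k) u v
    rwa [algebraMap_smul, algebraMap_smul] at h
  have hls : ∀ (k : K) (u v : LaurentPolynomial K ⊗[K] g), ⁅u, k • v⁆ = k • ⁅u, v⁆ := by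
    intro k u v
    have h := lie_smul (algebraMap K (LaurentPolynomial K) k) u v
    rwa [algebraMap_smul, algebraMap_smul] at h
  have haddl : ∀ x y v : LaurentPolynomial K ⊗[K] g, ⁅x + y, v⁆ = ⁅x, v⁆ + ⁅y, v⁆ :=
    fun x y v => add_lie x y v
  have haddr : ∀ v x y : LaurentPolynomial K ⊗[K] g, ⁅v, x + y⁆ = ⁅v, x⁆ + ⁅v, y⁆ :=
    fun v x y => lie_add v x y
  have hzl : ∀ v : LaurentPolynomial K ⊗[K] g, ⁅(0 : LaurentPolynomial K ⊗[K] g), v⁆ = 0 :=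
    fun v => zero_lie v
  have hzr : ∀ v : LaurentPolynomial K ⊗[K] g, ⁅v, (0 : LaurentPolynomial K ⊗[K] g)⁆ = 0 :=
    fun v => lie_zero v
  -- skew-symmetry
  have hskew : ∀ u v : LaurentPolynomial K ⊗[K] g, ε u v + ε v u = 0 := by
    intro u v
    induction hspan u using Submodule.span_induction with
    | zero => simp
    | add x y _ _ hx hy =>
      simp only [map_add, LinearMap.add_apply]
      linear_combination hx + hy
    | smul k x _ hx =>
      simp only [map_smul, LinearMap.smul_apply, smul_eq_mul]
      linear_combination k * hx
    | mem x hx =>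
      obtain ⟨n, a, rfl⟩ := hx
      induction hspan v using Submodule.span_induction with
      | zero => simp
      | add x y _ _ hx hy =>
        simp only [map_add, LinearMap.add_apply]
        linear_combination hx + hy
      | smul k x _ hx =>
        simp only [map_smul, LinearMap.smul_apply, smul_eq_mul]
        linear_combination k * hx
      | mem y hy =>
        obtain ⟨m, b, rfl⟩ := hy
        rw [hε, hε, hsymm b a]
        by_cases h : n + m = 0
        · rw [if_pos h, if_pos (by omega)]
          have hc : (n : K) + m = 0 := by exact_mod_cast congrArg (Int.cast : ℤ → K) h
          linear_combination B a b * hc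
        · rw [if_neg h, if_neg (by omega), add_zero]
  constructor
  · intro u
    have h := hskew u u
    have h2 : (2 : K) * ε u u = 0 := by linear_combination h
    exact (mul_eq_zero.mp h2).resolve_left two_ne_zero
  · intro u v w
    induction hspan u using Submodule.span_induction with
    | zero =>
      simp only [hzl, hzr, map_zero, LinearMap.zero_apply, add_zero, zero_add]
    | add x y _ _ hx hy =>
      simp only [haddl, haddr, map_add, LinearMap.add_apply]
      linear_combination hx + hy
    | smul k x _ hx =>
      simp only [hsl, hls, map_smul, LinearMap.smul_apply, smul_eq_mul]
      linear_combination k * hx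
    | mem x hx =>
      obtain ⟨n, a, rfl⟩ := hx
      induction hspan v using Submodule.span_induction with
      | zero =>
      simp only [hzl, hzr, map_zero, LinearMap.zero_apply, add_zero, zero_add]
      | add x y _ _ hx hy =>
        simp only [haddl, haddr, map_add, LinearMap.add_apply]
        linear_combination hx + hy
      | smul k x _ hx =>
        simp only [hsl, hls, map_smul, LinearMap.smul_apply, smul_eq_mul]
        linear_combination k * hx
      | mem y hy =>
        obtain ⟨m, b, rfl⟩ := hy
        induction hspan w using Submodule.span_induction with
        | zero =>
          simp only [hzl, hzr, map_zero, LinearMap.zero_apply, add_zero, zero_add]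
        | add x y _ _ hx hy =>
          simp only [haddl, haddr, map_add, LinearMap.add_apply]
          linear_combination hx + hy
        | smul k x _ hx =>
          simp only [hsl, hls, map_smul, LinearMap.smul_apply, smul_eq_mul]
          linear_combination k * hx
        | mem z hz =>
          obtain ⟨p, c, rfl⟩ := hz
          rw [LieAlgebra.ExtendScalars.bracket_tmul, LieAlgebra.ExtendScalars.bracket_tmul,
            LieAlgebra.ExtendScalars.bracket_tmul, ← LaurentPolynomial.T_add,
            ← LaurentPolynomial.T_add, ← LaurentPolynomial.T_add, hε, hε, hε]
          have e1 : B ⁅c, a⁆ b = B ⁅a, b⁆ c := (hinv c a b).trans (hsymm c ⁅a, b⁆)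
          have e2 : B ⁅b, c⁆ a = B ⁅a, b⁆ c := by
            rw [hinv b c a, hsymm b ⁅c, a⁆, hinv c a b, hsymm c ⁅a, b⁆]
          rw [e1, e2]
          by_cases h : n + m + p = 0
          · rw [if_pos h, if_pos (by omega), if_pos (by omega)]
            have hc : (n : K) + m + p = 0 := by exact_mod_cast congrArg (Int.cast : ℤ → K) h
            push_cast
            linear_combination 2 * B ⁅a, b⁆ c * hc
          · rw [if_neg h, if_neg (by omega), if_neg (by omega)]
            simp
end

section
/- Let K be a field of characteristic zero and E a K-vector space. A two-variable distribution c : ℤ × ℤ → E is local if and only if it is the distribution kernel of a differential operator: there exist n ∈ ℕ and distributions c⁰, …, c^{n−1} : ℤ → E such that c_{t,s} = Σ_{i=0}^{n−1} (t choose i) cⁱ_{t+s−i} for all t, s ∈ ℤ. In particular, for a Lie algebra g over K, two distributions a, b : ℤ → g are local if and only if they satisfy the weak commutator formula: there exist n ∈ ℕ and c⁰, …, c^{n−1} : ℤ → g with [a_t, b_s] = Σ_{i=0}^{n−1} (t choose i) cⁱ_{t+s−i} for all t, s ∈ ℤ. -/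
/-- The binomial polynomial `(t choose i) = t(t−1)⋯(t−i+1)/i!`, as an element of `K`. -/
noncomputable def binomPoly (K : Type*) [Field K] (t : ℤ) (i : ℕ) : K :=
  (∏ k ∈ Finset.range i, ((t : K) - (k : K))) / (Nat.factorial i : K)

/-- A two-variable distribution `c` is local of order `≤ n` if
`Σ_{k=0}^{n} (−1)^k (n choose k) c_{t+n−k, s+k} = 0` for all `t, s`
(the coefficient form of `(z−w)ⁿ c(z,w) = 0`). -/
def IsLocalOfOrder {E : Type*} [AddCommGroup E] (c : ℤ → ℤ → E) (n : ℕ) : Prop :=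
  ∀ t s : ℤ, ∑ k ∈ Finset.range (n + 1),
    ((-1 : ℤ) ^ k * (n.choose k : ℤ)) • c (t + (n : ℤ) - (k : ℤ)) (s + (k : ℤ)) = 0

section binom
variable {K : Type*} [Field K] [CharZero K]

lemma binomPoly_zero (t : ℤ) : binomPoly K t 0 = 1 := by simp [binomPoly]

lemma binomPoly_zero_left (i : ℕ) : binomPoly K 0 (i + 1) = 0 := by
  unfold binomPoly
  rw [Finset.prod_eq_zero (Finset.mem_range.2 (Nat.succ_pos i))]
  · simp
  · simp

lemma binomPoly_pascal (t : ℤ) (i : ℕ) :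
    binomPoly K (t + 1) (i + 1) - binomPoly K t (i + 1) = binomPoly K t i := by
  have h1 : (∏ k ∈ Finset.range (i+1), (((t + 1 : ℤ) : K) - (k : K)))
      = ((t : K) + 1) * ∏ k ∈ Finset.range i, ((t : K) - (k : K)) := by
    rw [Finset.prod_range_succ', mul_comm]
    congr 1
    · push_cast; ring
    · apply Finset.prod_congr rfl
      intro k _
      push_cast; ring
  have h2 : (∏ k ∈ Finset.range (i+1), ((t : K) - (k : K)))
      = (∏ k ∈ Finset.range i, ((t : K) - (k : K))) * ((t : K) - (i : K)) :=
    Finset.prod_range_succ _ _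
  have hfact : ((i+1).factorial : K) = ((i : K) + 1) * (i.factorial : K) := by
    rw [Nat.factorial_succ]; push_cast; ring
  have hi : ((i : K) + 1) ≠ 0 := by
    have : (((i+1 : ℕ)) : K) ≠ 0 := Nat.cast_ne_zero.2 (Nat.succ_ne_zero i)
    push_cast at this
    exact this
  have hfac : ((i.factorial : K)) ≠ 0 := Nat.cast_ne_zero.2 i.factorial_ne_zero
  unfold binomPoly
  rw [h1, h2, hfact]
  field_simp
  ring
end binom

section aux
variable {K : Type*} [Field K] [CharZero K]
variable {E : Type*} [AddCommGroup E]

def fd (F : ℤ → E) : ℤ → E := fun t => F (t + 1) - F t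

lemma fd_iterate (F : ℤ → E) : ∀ (n : ℕ) (t : ℤ),
    fd^[n] F t = ∑ k ∈ Finset.range (n + 1),
      ((-1 : ℤ) ^ k * (n.choose k : ℤ)) • F (t + (n : ℤ) - (k : ℤ)) := by
  intro n
  induction n with
  | zero => intro t; simp [fd]
  | succ n ih =>
    intro t
    rw [Function.iterate_succ_apply']
    show fd^[n] F (t + 1) - fd^[n] F t = _
    rw [ih, ih]
    have hR : ∑ k ∈ Finset.range (n + 1 + 1),
        ((-1 : ℤ) ^ k * ((n+1).choose k : ℤ)) • F (t + ((n:ℤ)+1) - (k : ℤ))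
        = (∑ k ∈ Finset.range (n+1),
            (((-1:ℤ)^(k+1) * (n.choose (k+1) : ℤ)) • F (t + (n:ℤ) - (k:ℤ))
              - ((-1:ℤ)^k * (n.choose k : ℤ)) • F (t + (n:ℤ) - (k:ℤ))))
          + F (t + (n:ℤ) + 1) := by
      rw [Finset.sum_range_succ']
      congr 1
      · apply Finset.sum_congr rfl
        intro k _
        have hch : (((n+1).choose (k+1) : ℤ)) = (n.choose k : ℤ) + (n.choose (k+1) : ℤ) := by
          exact_mod_cast Nat.choose_succ_succ n k
        have harg : t + ((n:ℤ)+1) - ((k:ℕ)+1 : ℕ) = t + (n:ℤ) - (k:ℤ) := by push_cast; ring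
        rw [hch, harg, mul_add, add_smul, pow_succ]
        have : (-1:ℤ)^k * -1 * (n.choose k : ℤ) = -((-1:ℤ)^k * (n.choose k : ℤ)) := by ring
        rw [this, neg_smul]
        abel
      · simp
        congr 1
        ring
    rw [show ((n+1 : ℕ) : ℤ) = (n:ℤ)+1 by push_cast; ring] at *
    rw [hR, Finset.sum_sub_distrib]
    have hS1 : ∑ k ∈ Finset.range (n + 1),
        ((-1 : ℤ) ^ k * (n.choose k : ℤ)) • F (t + 1 + (n:ℤ) - (k : ℤ))
        = (∑ k ∈ Finset.range (n+1),
            ((-1:ℤ)^(k+1) * (n.choose (k+1) : ℤ)) • F (t + (n:ℤ) - (k:ℤ)))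
          + F (t + (n:ℤ) + 1) := by
      rw [Finset.sum_range_succ']
      rw [Finset.sum_range_succ (fun k => ((-1:ℤ)^(k+1) * (n.choose (k+1) : ℤ)) • F (t + (n:ℤ) - (k:ℤ)))]
      simp [Nat.choose_succ_self]
      congr 1
      · apply Finset.sum_congr rfl
        intro k _
        congr 1
        ring
      · congr 1
        ring
    rw [hS1]
    abel


lemma fd_zero_fun : fd (0 : ℤ → E) = 0 := by funext t; simp [fd]

lemma eq_zero_of_fd_eq_zero (H : ℤ → E) (h0 : H 0 = 0) (h : ∀ t, fd H t = 0) :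
    ∀ t, H t = 0 := by
  have step : ∀ t : ℤ, H (t + 1) = H t := by
    intro t
    have := h t
    rw [fd, sub_eq_zero] at this
    exact this
  intro t
  induction t using Int.induction_on with
  | zero => exact h0
  | succ i ih => rw [step]; exact ih
  | pred i ih =>
    have : H (-(i:ℤ) - 1) = H (-(i:ℤ)) := by
      rw [← step (-(i:ℤ) - 1)]; norm_num
    rw [this]
    exact ih

lemma fd_binomPoly_succ (i : ℕ) :
    fd (fun u => binomPoly K u (i+1)) = fun u => binomPoly K u i := by
  funext u
  exact binomPoly_pascal u i

lemma fd_binomPoly_zero : fd (fun u => binomPoly K u 0) = 0 := by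
  funext u
  simp [fd, binomPoly_zero]

lemma fd_iter_binomPoly (i : ℕ) : ∀ n : ℕ, i < n →
    fd^[n] (fun u => binomPoly K u i) = 0 := by
  induction i with
  | zero =>
    intro n hn
    obtain ⟨m, rfl⟩ := Nat.exists_eq_add_of_lt hn
    rw [show 0 + m + 1 = m + 1 by ring, Function.iterate_succ_apply, fd_binomPoly_zero]
    exact Function.iterate_fixed fd_zero_fun m
  | succ i ih =>
    intro n hn
    obtain ⟨m, rfl⟩ := Nat.exists_eq_add_of_lt hn
    rw [show i + 1 + m + 1 = (i + m + 1) + 1 by ring, Function.iterate_succ_apply,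
      fd_binomPoly_succ]
    exact ih _ (by omega)

lemma discrete_taylor [Module K E] : ∀ (n : ℕ) (F : ℤ → E), (∀ t, fd^[n] F t = 0) →
    ∀ t, F t = ∑ i ∈ Finset.range n, binomPoly K t i • fd^[i] F 0 := by
  intro n
  induction n with
  | zero =>
    intro F hF t
    simpa using hF t
  | succ n ih =>
    intro F hF t
    have hF' : ∀ t, fd^[n] (fd F) t = 0 := by
      intro t
      rw [← Function.iterate_succ_apply]
      exact hF t
    have h1 := ih (fd F) hF'
    set G : ℤ → E := fun u => ∑ i ∈ Finset.range (n+1), binomPoly K u i • fd^[i] F 0 with hG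
    have hfdG : ∀ u, fd G u = fd F u := by
      intro u
      have : fd G u = ∑ i ∈ Finset.range (n+1),
          (binomPoly K (u+1) i - binomPoly K u i) • fd^[i] F 0 := by
        rw [fd, hG]
        rw [← Finset.sum_sub_distrib]
        apply Finset.sum_congr rfl
        intro i _
        rw [sub_smul]
      rw [this, Finset.sum_range_succ']
      have e0 : (binomPoly K (u+1) 0 - binomPoly K u 0) • fd^[0] F 0 = 0 := by
        rw [binomPoly_zero, binomPoly_zero, sub_self, zero_smul]
      rw [e0, add_zero, h1 u]
      apply Finset.sum_congr rfl
      intro i _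
      rw [binomPoly_pascal, Function.iterate_succ_apply]
    have hH0 : F 0 = G 0 := by
      show F 0 = ∑ i ∈ Finset.range (n+1), binomPoly K (0:ℤ) i • fd^[i] F 0
      rw [Finset.sum_range_succ']
      simp [binomPoly_zero_left, binomPoly_zero]
    have : ∀ u, F u - G u = 0 := by
      apply eq_zero_of_fd_eq_zero
      · rw [hH0, sub_self]
      · intro u
        simp only [fd]
        rw [show F (u+1) - G (u+1) - (F u - G u)
          = (F (u+1) - F u) - (G (u+1) - G u) by abel]
        rw [show F (u+1) - F u = fd F u from rfl, show G (u+1) - G u = fd G u from rfl,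
          hfdG, sub_self]
    have := this t
    rw [sub_eq_zero] at this
    exact this

end aux

section key
variable {K : Type*} [Field K] [CharZero K]

lemma local_iff_kernel {E : Type*} [AddCommGroup E] [Module K E] (c : ℤ → ℤ → E) :
    (∃ n : ℕ, IsLocalOfOrder c n) ↔
      ∃ (n : ℕ) (d : ℕ → ℤ → E), ∀ t s : ℤ,
        c t s = ∑ i ∈ Finset.range n, binomPoly K t i • d i (t + s - (i : ℤ)) := by
  constructor
  · rintro ⟨n, hn⟩
    refine ⟨n, fun i m => fd^[i] (fun u => c u (m + (i:ℤ) - u)) 0, fun t s => ?_⟩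
    have hF : ∀ t' : ℤ, fd^[n] (fun u => c u (t + s - u)) t' = 0 := by
      intro t'
      rw [fd_iterate]
      have h := hn t' (t + s - t' - (n:ℤ))
      rw [← h]
      apply Finset.sum_congr rfl
      intro k _
      congr 1
      ring
    have ht := discrete_taylor (K := K) n (fun u => c u (t + s - u)) hF t
    rw [add_sub_cancel_left] at ht
    rw [ht]
    apply Finset.sum_congr rfl
    intro i _
    have harg : (fun u => c u (t + s - (i:ℤ) + (i:ℤ) - u)) = (fun u => c u (t + s - u)) := by
      funext u
      congr 1
      ring
    show binomPoly K t i • fd^[i] (fun u => c u (t + s - u)) 0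
      = binomPoly K t i • fd^[i] (fun u => c u (t + s - (i:ℤ) + (i:ℤ) - u)) 0
    rw [harg]
  · rintro ⟨n, d, hd⟩
    refine ⟨n, fun t s => ?_⟩
    have expand : ∀ k : ℕ, c (t + (n:ℤ) - (k:ℤ)) (s + (k:ℤ))
        = ∑ i ∈ Finset.range n,
            binomPoly K (t + (n:ℤ) - (k:ℤ)) i • d i (t + s + (n:ℤ) - (i:ℤ)) := by
      intro k
      rw [hd]
      apply Finset.sum_congr rfl
      intro i _
      congr 2
      ring
    simp only [expand, Finset.smul_sum]
    rw [Finset.sum_comm]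
    apply Finset.sum_eq_zero
    intro i hi
    have step1 : ∀ k ∈ Finset.range (n+1),
        ((-1 : ℤ) ^ k * (n.choose k : ℤ)) •
          (binomPoly K (t + (n:ℤ) - (k:ℤ)) i • d i (t + s + (n:ℤ) - (i:ℤ)))
        = (((((-1 : ℤ) ^ k * (n.choose k : ℤ)) : ℤ) : K) *
            binomPoly K (t + (n:ℤ) - (k:ℤ)) i) • d i (t + s + (n:ℤ) - (i:ℤ)) := by
      intro k _
      rw [← Int.cast_smul_eq_zsmul K, smul_smul]
    rw [Finset.sum_congr rfl step1, ← Finset.sum_smul]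
    have hcoef : ∑ k ∈ Finset.range (n+1),
        ((((-1 : ℤ) ^ k * (n.choose k : ℤ)) : ℤ) : K) *
          binomPoly K (t + (n:ℤ) - (k:ℤ)) i = 0 := by
      have h1 := fd_iterate (fun u => binomPoly K u i) n t
      have h2 := fd_iter_binomPoly (K := K) i n (Finset.mem_range.1 hi)
      rw [h2] at h1
      have h3 : ∑ k ∈ Finset.range (n + 1),
          ((-1 : ℤ) ^ k * (n.choose k : ℤ)) • binomPoly K (t + (n:ℤ) - (k:ℤ)) i = 0 := by
        rw [← h1]; rfl
      rw [← h3]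
      apply Finset.sum_congr rfl
      intro k _
      rw [zsmul_eq_mul]
    rw [hcoef, zero_smul]
end key

/-- A two-variable distribution is local iff it is the distribution kernel of a
differential operator; in particular, a pair of Lie-algebra-valued distributions is
local iff it satisfies the weak commutator formula. -/
theorem local_iff_weak_commutator_formula
    (K : Type*) [Field K] [CharZero K]
    (E : Type*) [AddCommGroup E] [Module K E]
    (c : ℤ → ℤ → E)
    (g : Type*) [LieRing g] [LieAlgebra K g]
    (a b : ℤ → g) :
    ((∃ n : ℕ, IsLocalOfOrder c n) ↔
      ∃ (n : ℕ) (d : ℕ → ℤ → E), ∀ t s : ℤ,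
        c t s = ∑ i ∈ Finset.range n, binomPoly K t i • d i (t + s - (i : ℤ))) ∧
    ((∃ n : ℕ, IsLocalOfOrder (fun t s => ⁅a t, b s⁆) n) ↔
      ∃ (n : ℕ) (d : ℕ → ℤ → g), ∀ t s : ℤ,
        ⁅a t, b s⁆ = ∑ i ∈ Finset.range n, binomPoly K t i • d i (t + s - (i : ℤ))) := by
  exact ⟨local_iff_kernel c, local_iff_kernel (fun t s => ⁅a t, b s⁆)⟩
end

section
/- Let K be a field of characteristic zero, g a Lie algebra over K, and a, b : ℤ → g distributions satisfying the weak commutator formula [a_t, b_s] = Σ_{i=0}^{n} (t choose i) cⁱ_{t+s−i} for all t, s ∈ ℤ, for some distributions c⁰, …, cⁿ : ℤ → g. Then each cⁱ is recovered as cⁱ_s = Σ_{k=0}^{i} (−1)^k (i choose k) [a_{i−k}, b_{s+k}] for all s ∈ ℤ; that is, cⁱ(w) = res_z (z−w)ⁱ [a(z), b(w)]. -/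
lemma prod_sub_cast (K : Type*) [Field K] [CharZero K] (m j : ℕ) :
    ∏ k ∈ Finset.range j, ((m : K) - (k : K)) = (m.descFactorial j : K) := by
  induction j with
  | zero => simp
  | succ j ih =>
    rw [Finset.prod_range_succ, ih, Nat.descFactorial_succ, Nat.cast_mul]
    rcases le_or_gt j m with hj | hj
    · rw [Nat.cast_sub hj]; ring
    · rw [Nat.descFactorial_eq_zero_iff_lt.mpr hj]
      simp

lemma binomPoly_nat (K : Type*) [Field K] [CharZero K] (m j : ℕ) :
    binomPoly K (m : ℤ) j = (m.choose j : K) := by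
  unfold binomPoly
  have : ∀ k ∈ Finset.range j, (((m : ℤ) : K) - (k : K)) = ((m : K) - (k : K)) := by
    intro k _; push_cast; ring
  rw [Finset.prod_congr rfl this, prod_sub_cast, Nat.descFactorial_eq_factorial_mul_choose,
    Nat.cast_mul, mul_div_cancel_left₀]
  exact_mod_cast (Nat.factorial_pos j).ne'

lemma choose_swap (i j k : ℕ) (hk : k ≤ i) :
    i.choose k * (i - k).choose j = i.choose j * (i - j).choose k := by
  rcases le_or_gt (k + j) i with h | h
  · have h1 := Nat.choose_mul (n := i) (k := k + j) (s := k) (Nat.le_add_right _ _)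
    have h2 := Nat.choose_mul (n := i) (k := k + j) (s := j) (Nat.le_add_left _ _)
    rw [Nat.add_sub_cancel_left] at h1
    rw [Nat.add_sub_cancel] at h2
    rw [← h1, ← h2, Nat.choose_symm_add]
  · rcases le_or_gt j i with hj | hj
    · rw [Nat.choose_eq_zero_of_lt (show i - k < j by omega),
        Nat.choose_eq_zero_of_lt (show i - j < k by omega)]
      simp
    · rw [Nat.choose_eq_zero_of_lt (show i - k < j by omega),
        Nat.choose_eq_zero_of_lt hj]
      simp

lemma key_sum (i j : ℕ) :
    (∑ k ∈ Finset.range (i + 1), (-1 : ℤ) ^ k * i.choose k * (i - k).choose j)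
      = if j = i then 1 else 0 := by
  have hcongr : ∀ k ∈ Finset.range (i + 1),
      (-1 : ℤ) ^ k * i.choose k * (i - k).choose j
        = (i.choose j : ℤ) * ((-1) ^ k * (i - j).choose k) := by
    intro k hk
    have hk' : k ≤ i := Nat.lt_succ_iff.mp (Finset.mem_range.mp hk)
    have h2 : ((i.choose k : ℤ)) * ((i - k).choose j : ℤ)
        = (i.choose j : ℤ) * ((i - j).choose k : ℤ) := by
      exact_mod_cast choose_swap i j k hk'
    linear_combination ((-1 : ℤ) ^ k) * h2
  rw [Finset.sum_congr rfl hcongr, ← Finset.mul_sum]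
  rcases le_or_gt j i with hj | hj
  · have hsub : Finset.range (i - j + 1) ⊆ Finset.range (i + 1) := by
      apply Finset.range_subset_range.mpr; omega
    have htrunc : (∑ k ∈ Finset.range (i + 1), ((-1 : ℤ) ^ k * (i - j).choose k))
        = ∑ k ∈ Finset.range (i - j + 1), ((-1 : ℤ) ^ k * (i - j).choose k) := by
      refine (Finset.sum_subset hsub ?_).symm
      intro k _ hknot
      have hlt : i - j < k := by
        simp only [Finset.mem_range] at hknot; omega
      rw [Nat.choose_eq_zero_of_lt hlt]
      simp
    rw [htrunc, Int.alternating_sum_range_choose]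
    rcases eq_or_ne j i with rfl | hne
    · simp
    · rw [if_neg (by omega), if_neg hne, mul_zero]
  · simp [Nat.choose_eq_zero_of_lt hj, hj.ne']

/-- If distributions `a, b` with values in a Lie algebra `g` satisfy the weak commutator
formula `[a_t, b_s] = Σ_{i=0}^{n} (t choose i) cⁱ_{t+s−i}`, then each coefficient
distribution is recovered as `cⁱ(w) = res_z (z−w)ⁱ [a(z), b(w)]`, i.e.
`cⁱ_s = Σ_{k=0}^{i} (−1)^k (i choose k) [a_{i−k}, b_{s+k}]`. -/
theorem weak_commutator_coefficients_recovered
    (K : Type*) [Field K] [CharZero K]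
    (g : Type*) [LieRing g] [LieAlgebra K g]
    (a b : ℤ → g) (n : ℕ) (c : ℕ → ℤ → g)
    (h : ∀ t s : ℤ,
      ⁅a t, b s⁆ = ∑ i ∈ Finset.range (n + 1), binomPoly K t i • c i (t + s - (i : ℤ))) :
    ∀ i : ℕ, i ≤ n → ∀ s : ℤ,
      c i s = ∑ k ∈ Finset.range (i + 1),
        ((-1 : ℤ) ^ k * (i.choose k : ℤ)) • ⁅a ((i : ℤ) - (k : ℤ)), b (s + (k : ℤ))⁆ := by
  intro i hi s
  have step : ∀ k ∈ Finset.range (i + 1),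
      ((-1 : ℤ) ^ k * (i.choose k : ℤ)) • ⁅a ((i : ℤ) - (k : ℤ)), b (s + (k : ℤ))⁆
        = ∑ j ∈ Finset.range (n + 1),
            ((((-1 : ℤ) ^ k * i.choose k * (i - k).choose j : ℤ)) : K) • c j (i + s - j) := by
    intro k hk
    have hk' : k ≤ i := Nat.lt_succ_iff.mp (Finset.mem_range.mp hk)
    have hcast : (i : ℤ) - (k : ℤ) = ((i - k : ℕ) : ℤ) := by omega
    rw [hcast, h]
    rw [← Int.cast_smul_eq_zsmul K, Finset.smul_sum]
    refine Finset.sum_congr rfl fun j _ => ?_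
    have harg : ((i - k : ℕ) : ℤ) + (s + (k : ℤ)) - (j : ℤ) = (i : ℤ) + s - j := by omega
    rw [harg, binomPoly_nat, smul_smul]
    push_cast
    ring_nf
  rw [Finset.sum_congr rfl step, Finset.sum_comm]
  have inner : ∀ j ∈ Finset.range (n + 1),
      (∑ k ∈ Finset.range (i + 1),
        ((((-1 : ℤ) ^ k * i.choose k * (i - k).choose j : ℤ)) : K) • c j (i + s - j))
        = (if j = i then (1 : K) else 0) • c j (i + s - j) := by
    intro j _
    rw [← Finset.sum_smul]
    congr 1
    rw [← Int.cast_sum, key_sum]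
    split <;> simp
  rw [Finset.sum_congr rfl inner]
  have harg : (i : ℤ) + s - (i : ℤ) = s := by ring
  simp [ite_smul, Finset.mem_range, Nat.lt_succ_of_le hi, harg]
end

section
/- Let K be a field of characteristic zero, E a K-vector space, n ∈ ℕ, and c⁰, …, cⁿ : ℤ → E distributions. Then the two-variable distribution c defined by c_{t,s} := Σ_{i=0}^{n} (t choose i) cⁱ_{t+s−i} is local of order ≤ n+1: Σ_{k=0}^{n+1} (−1)^k (n+1 choose k) c_{t+n+1−k, s+k} = 0 for all t, s ∈ ℤ. (The distribution kernel of a differential operator of order n is local of order n+1.) -/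
lemma binomPoly_diff (K : Type*) [Field K] [CharZero K] (t : ℤ) (j : ℕ) :
    binomPoly K t (j+1) - binomPoly K (t-1) (j+1) = binomPoly K (t-1) j := by
  unfold binomPoly
  have h1 : ∏ k ∈ Finset.range (j+1), ((t : K) - (k : K)) =
      (∏ k ∈ Finset.range j, (((t-1 : ℤ) : K) - (k : K))) * (t : K) := by
    rw [Finset.prod_range_succ']
    congr 1
    · apply Finset.prod_congr rfl; intro k _; push_cast; ring
    · push_cast; ring
  have h2 : ∏ k ∈ Finset.range (j+1), (((t-1 : ℤ) : K) - (k : K)) =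
      (∏ k ∈ Finset.range j, (((t-1 : ℤ) : K) - (k : K))) * (((t-1 : ℤ) : K) - (j : K)) :=
    Finset.prod_range_succ _ _
  rw [h1, h2]
  have hfac : ((j+1).factorial : K) = ((j:K)+1) * (j.factorial : K) := by
    rw [Nat.factorial_succ]; push_cast; ring
  rw [hfac]
  have hj1 : ((j:K)+1) ≠ 0 := by
    have := Nat.cast_add_one_ne_zero (R := K) j; exact_mod_cast this
  have hf : (j.factorial : K) ≠ 0 := by exact_mod_cast j.factorial_ne_zero
  field_simp
  push_cast
  ring

lemma fwdDiff_iter_zero' {M G : Type*} [AddCommMonoid M] [AddCommGroup G] (h : M) (m : ℕ) :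
    (fwdDiff h)^[m] (0 : M → G) = 0 := by
  induction m with
  | zero => rfl
  | succ m ih =>
    rw [Function.iterate_succ_apply]
    have : fwdDiff h (0 : M → G) = 0 := by funext x; simp [fwdDiff]
    rw [this, ih]

lemma binomPoly_iter_vanish (K : Type*) [Field K] [CharZero K] (m : ℕ) :
    ∀ i, i < m → ∀ a : ℤ, (fwdDiff (1:ℤ))^[m] (fun u : ℤ => binomPoly K (a - u) i) = 0 := by
  induction m with
  | zero => intro i hi; omega
  | succ m ih =>
    intro i hi a
    rw [Function.iterate_succ_apply]
    match i with
    | 0 =>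
      have h0 : fwdDiff (1:ℤ) (fun u : ℤ => binomPoly K (a - u) 0) = 0 := by
        funext u; simp [fwdDiff, binomPoly]
      rw [h0, fwdDiff_iter_zero']
    | j + 1 =>
      have hd : fwdDiff (1:ℤ) (fun u : ℤ => binomPoly K (a - u) (j+1))
          = (-1 : K) • (fun u : ℤ => binomPoly K ((a-1) - u) j) := by
        funext u
        have hb := binomPoly_diff K (a - u) j
        simp only [fwdDiff, Pi.smul_apply, smul_eq_mul]
        have h1 : a - (u + 1) = (a - u) - 1 := by ring
        have h2 : a - 1 - u = (a - u) - 1 := by ring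
        rw [h1, h2]
        linear_combination -hb
      rw [hd, fwdDiff_iter_const_smul, ih j (by omega) (a-1), smul_zero]

lemma fwdDiff_smul_const' {M R G : Type*} [AddCommMonoid M] [Ring R]
    [AddCommGroup G] [Module R G] (h : M) (f : M → R) (g : G) :
    fwdDiff h (fun y => f y • g) = fun y => (fwdDiff h f y) • g := by
  funext y
  simp only [fwdDiff, sub_smul]

lemma fwdDiff_iter_smul_const' {M R G : Type*} [AddCommMonoid M] [Ring R]
    [AddCommGroup G] [Module R G] (h : M) (f : M → R) (g : G) (n : ℕ) :
    (fwdDiff h)^[n] (fun y => f y • g) = fun y => ((fwdDiff h)^[n] f y) • g := by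
  induction n generalizing f with
  | zero => rfl
  | succ n ih =>
    rw [Function.iterate_succ_apply, Function.iterate_succ_apply, fwdDiff_smul_const', ih]

/-- The distribution kernel of a differential operator of order `n`,
`c_{t,s} = Σ_{i=0}^{n} (t choose i) cⁱ_{t+s−i}`, is local of order `≤ n+1`. -/
theorem diffop_kernel_is_local
    (K : Type*) [Field K] [CharZero K]
    (E : Type*) [AddCommGroup E] [Module K E]
    (n : ℕ) (d : ℕ → ℤ → E) (c : ℤ → ℤ → E)
    (hc : ∀ t s : ℤ,
      c t s = ∑ i ∈ Finset.range (n + 1), binomPoly K t i • d i (t + s - (i : ℤ))) :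
    IsLocalOfOrder c (n + 1) := by
  intro t s
  set a : ℤ := t + (n : ℤ) + 1 with ha
  set f : ℤ → E := fun u => c (a - u) (s + u) with hfdef
  have hf : f = ∑ i ∈ Finset.range (n+1),
      (fun u : ℤ => binomPoly K (a - u) i • d i (t + s + (n:ℤ) + 1 - (i:ℤ))) := by
    funext u
    rw [hfdef]
    simp only [Finset.sum_apply]
    rw [hc]
    apply Finset.sum_congr rfl
    intro i _
    congr 2
    rw [ha]; ring
  have hzero : (fwdDiff (1:ℤ))^[n+1] f = 0 := by
    rw [hf, fwdDiff_iter_finset_sum]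
    apply Finset.sum_eq_zero
    intro i hi
    rw [fwdDiff_iter_smul_const',
      binomPoly_iter_vanish K (n+1) i (by simpa using hi) a]
    funext u
    simp
  have hsum := fwdDiff_iter_eq_sum_shift (1:ℤ) f (n+1) 0
  rw [hzero] at hsum
  simp only [Pi.zero_apply, zero_add, nsmul_eq_mul, mul_one] at hsum
  -- hsum : 0 = ∑ k ∈ range (n+2), ((-1)^(n+1-k) * C(n+1,k)) • f ↑k
  have hterm : ∀ k ∈ Finset.range (n+1+1),
      ((-1 : ℤ) ^ k * ((n+1).choose k : ℤ)) • c (t + ((n+1 : ℕ) : ℤ) - (k:ℤ)) (s + (k:ℤ))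
      = ((-1 : ℤ) ^ (n+1)) • (((-1 : ℤ) ^ (n+1-k) * ((n+1).choose k : ℤ)) • f (k : ℤ)) := by
    intro k hk
    simp only [Finset.mem_range] at hk
    have harg : c (t + ((n+1 : ℕ) : ℤ) - (k:ℤ)) (s + (k:ℤ)) = f (k : ℤ) := by
      rw [hfdef, ha]
      congr 1
      push_cast
      ring
    rw [harg, smul_smul]
    congr 1
    have hkle : k ≤ n + 1 := by omega
    have hrw : (n+1) + (n+1-k) = k + 2*(n+1-k) := by omega
    have : (-1 : ℤ) ^ (n+1) * (-1 : ℤ) ^ (n+1-k) = (-1 : ℤ) ^ k := by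
      rw [← pow_add, hrw, pow_add, pow_mul]
      norm_num
    linear_combination (-((n+1).choose k : ℤ)) * this
  rw [Finset.sum_congr rfl hterm, ← Finset.smul_sum]
  rw [show (n+1+1) = (n+1)+1 from rfl, ← hsum]
  simp
end

section
/- Let K be a field of characteristic zero, E a K-vector space, and c : ℤ × ℤ → E a two-variable distribution that is local (local of order ≤ n for some n). Suppose there exists N ∈ ℤ such that c_{t,s} = 0 for all t > N and all s ∈ ℤ (i.e. c(z,w) lies in E⟦w^{±1}⟧((z)), the z-exponents of c are bounded below). Then c = 0. -/
/-- A local two-variable distribution whose `z`-exponents are bounded below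
(i.e. `c_{t,s} = 0` for all `t > N`) is zero. -/
theorem local_laurent_series_is_zero
    (K : Type*) [Field K] [CharZero K]
    (E : Type*) [AddCommGroup E] [Module K E]
    (c : ℤ → ℤ → E)
    (hloc : ∃ n : ℕ, IsLocalOfOrder c n)
    (N : ℤ) (hN : ∀ t : ℤ, N < t → ∀ s : ℤ, c t s = 0) :
    ∀ t s : ℤ, c t s = 0 := by
  obtain ⟨n, hloc⟩ := hloc
  suffices h : ∀ m : ℕ, ∀ t : ℤ, N + 1 - (m : ℤ) ≤ t → ∀ s, c t s = 0 by
    intro t s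
    exact h (N + 1 - t).toNat t (by omega) s
  intro m
  induction m with
  | zero => intro t ht s; exact hN t (by push_cast at ht; omega) s
  | succ m ih =>
    intro t ht s
    rcases le_or_gt (N + 1 - (m : ℤ)) t with h | h
    · exact ih t h s
    have key := hloc t (s - n)
    rw [Finset.sum_range_succ] at key
    have h0 : ∀ k ∈ Finset.range n,
        ((-1 : ℤ) ^ k * (n.choose k : ℤ)) • c (t + (n : ℤ) - (k : ℤ)) (s - n + (k : ℤ)) = 0 := by
      intro k hk
      simp only [Finset.mem_range] at hk
      rw [ih (t + (n : ℤ) - (k : ℤ)) (by push_cast at ht h ⊢; omega), smul_zero]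
    rw [Finset.sum_eq_zero h0, zero_add, Nat.choose_self] at key
    have harg : c (t + (n : ℤ) - (n : ℤ)) (s - (n : ℤ) + (n : ℤ)) = c t s := by ring_nf
    rw [harg] at key
    rcases neg_one_pow_eq_or ℤ n with h1 | h1 <;> rw [h1] at key
    · simpa using key
    · simpa using key
end

section
/- (Dong's Lemma.) Let K be a field of characteristic zero, g a Lie algebra over K, and a, b, c : ℤ → g distributions such that each of the pairs (a,b), (a,c), (b,c) is local of order ≤ n. Then for every i ∈ ℕ the pair (a_i b, c) is local of order ≤ 3n, where a_i b is the i-th product of distributions, (a_i b)_u := Σ_{k=0}^{i} (−1)^k (i choose k) [a_{i−k}, b_{u+k}]. -/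
set_option maxHeartbeats 1000000

open Finset

/-! ### Auxiliary machinery for Dong's lemma -/

/-- Binomial theorem for a difference of commuting ring elements, ℤ-scalar form. -/
lemma commute_sub_pow' {R : Type*} [Ring R] {A B : R} (h : Commute A B) (n : ℕ) :
    (A - B) ^ n = ∑ k ∈ Finset.range (n + 1),
      ((-1 : ℤ) ^ k * (n.choose k : ℤ)) • (A ^ (n - k) * B ^ k) := by
  rw [sub_eq_add_neg, add_comm, (h.symm.neg_left).add_pow]
  refine Finset.sum_congr rfl fun k hk => ?_
  rw [zsmul_eq_mul]
  push_cast
  calc (-B) ^ k * A ^ (n - k) * ((n.choose k : ℕ) : R)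
      = (-1) ^ k * (B ^ k * A ^ (n - k)) * (n.choose k : R) := by
        rw [neg_pow]; noncomm_ring
    _ = (-1) ^ k * (A ^ (n - k) * B ^ k) * (n.choose k : R) := by
        rw [(h.symm.pow_pow k (n - k)).eq]
    _ = (-1) ^ k * ((n.choose k : R) * (A ^ (n - k) * B ^ k)) := by
        rw [mul_assoc, (Nat.cast_commute (n.choose k) (A ^ (n - k) * B ^ k)).eq.symm]
    _ = (-1) ^ k * (n.choose k : R) * (A ^ (n - k) * B ^ k) := by rw [mul_assoc]

/-- A finite sum of additive endomorphisms, applied pointwise. -/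
lemma endSumApply {M : Type*} [AddCommMonoid M] {ι : Type*} (s : Finset ι)
    (T : ι → AddMonoid.End M) (f : M) : (∑ k ∈ s, T k) f = ∑ k ∈ s, T k f := by
  induction s using Finset.cons_induction with
  | empty => rfl
  | cons a s ha ih => rw [Finset.sum_cons, Finset.sum_cons, ← ih]; rfl

lemma swapApply {M : Type*} [AddCommMonoid M] {A B : AddMonoid.End M}
    (h : Commute A B) (f : M) : A (B f) = B (A f) :=
  DFunLike.congr_fun h.eq f

lemma subPowApply {M : Type*} [AddCommGroup M] {A B : AddMonoid.End M}
    (h : Commute A B) (n : ℕ) (f : M) :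
    ((A - B) ^ n) f = ∑ k ∈ Finset.range (n + 1),
      ((-1 : ℤ) ^ k * (n.choose k : ℤ)) • (A ^ (n - k)) ((B ^ k) f) := by
  rw [commute_sub_pow' h, endSumApply]
  rfl

section Shifts

private def SX (g : Type*) [AddCommGroup g] : AddMonoid.End (ℤ → ℤ → ℤ → g) :=
  AddMonoidHom.mk' (fun f => fun p q r => f (p + 1) q r) (fun _ _ => rfl)

private def SZ (g : Type*) [AddCommGroup g] : AddMonoid.End (ℤ → ℤ → ℤ → g) :=
  AddMonoidHom.mk' (fun f => fun p q r => f p (q + 1) r) (fun _ _ => rfl)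

private def SW (g : Type*) [AddCommGroup g] : AddMonoid.End (ℤ → ℤ → ℤ → g) :=
  AddMonoidHom.mk' (fun f => fun p q r => f p q (r + 1)) (fun _ _ => rfl)

variable {g : Type*} [AddCommGroup g]

private lemma SX_pow (m : ℕ) (f : ℤ → ℤ → ℤ → g) (p q r : ℤ) :
    (SX g ^ m) f p q r = f (p + m) q r := by
  induction m generalizing f with
  | zero => simp
  | succ m ih =>
    rw [pow_succ]
    show (SX g ^ m) (SX g f) p q r = _
    rw [ih]
    show f (p + m + 1) q r = _
    congr 1; push_cast; ring

private lemma SZ_pow (m : ℕ) (f : ℤ → ℤ → ℤ → g) (p q r : ℤ) :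
    (SZ g ^ m) f p q r = f p (q + m) r := by
  induction m generalizing f with
  | zero => simp
  | succ m ih =>
    rw [pow_succ]
    show (SZ g ^ m) (SZ g f) p q r = _
    rw [ih]
    show f p (q + m + 1) r = _
    congr 1; push_cast; ring

private lemma SW_pow (m : ℕ) (f : ℤ → ℤ → ℤ → g) (p q r : ℤ) :
    (SW g ^ m) f p q r = f p q (r + m) := by
  induction m generalizing f with
  | zero => simp
  | succ m ih =>
    rw [pow_succ]
    show (SW g ^ m) (SW g f) p q r = _
    rw [ih]
    show f p q (r + m + 1) = _
    congr 1; push_cast; ring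

private lemma hxz : Commute (SX g) (SZ g) := AddMonoidHom.ext fun _ => rfl
private lemma hxw : Commute (SX g) (SW g) := AddMonoidHom.ext fun _ => rfl
private lemma hzw : Commute (SZ g) (SW g) := AddMonoidHom.ext fun _ => rfl

private lemma EXZ (n : ℕ) (f : ℤ → ℤ → ℤ → g) (p q r : ℤ) :
    ((SX g - SZ g) ^ n) f p q r = ∑ k ∈ Finset.range (n + 1),
      ((-1 : ℤ) ^ k * (n.choose k : ℤ)) • f (p + (n : ℤ) - (k : ℤ)) (q + (k : ℤ)) r := by
  rw [subPowApply hxz]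
  simp only [Finset.sum_apply, Pi.smul_apply, SX_pow, SZ_pow]
  refine Finset.sum_congr rfl fun k hk => ?_
  rw [Nat.cast_sub (Finset.mem_range_succ_iff.mp hk), ← add_sub_assoc]

private lemma EZW (n : ℕ) (f : ℤ → ℤ → ℤ → g) (p q r : ℤ) :
    ((SZ g - SW g) ^ n) f p q r = ∑ k ∈ Finset.range (n + 1),
      ((-1 : ℤ) ^ k * (n.choose k : ℤ)) • f p (q + (n : ℤ) - (k : ℤ)) (r + (k : ℤ)) := by
  rw [subPowApply hzw]
  simp only [Finset.sum_apply, Pi.smul_apply, SZ_pow, SW_pow]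
  refine Finset.sum_congr rfl fun k hk => ?_
  rw [Nat.cast_sub (Finset.mem_range_succ_iff.mp hk), ← add_sub_assoc]

private lemma EXW (n : ℕ) (f : ℤ → ℤ → ℤ → g) (p q r : ℤ) :
    ((SX g - SW g) ^ n) f p q r = ∑ k ∈ Finset.range (n + 1),
      ((-1 : ℤ) ^ k * (n.choose k : ℤ)) • f (p + (n : ℤ) - (k : ℤ)) q (r + (k : ℤ)) := by
  rw [subPowApply hxw]
  simp only [Finset.sum_apply, Pi.smul_apply, SX_pow, SW_pow]
  refine Finset.sum_congr rfl fun k hk => ?_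
  rw [Nat.cast_sub (Finset.mem_range_succ_iff.mp hk), ← add_sub_assoc]

end Shifts

section LieSums
variable {g : Type*} [LieRing g]

private lemma sum_lie' {ι : Type*} (s : Finset ι) (f : ι → g) (y : g) :
    ⁅∑ j ∈ s, f j, y⁆ = ∑ j ∈ s, ⁅f j, y⁆ :=
  map_sum (AddMonoidHom.mk' (fun x => ⁅x, y⁆) (fun x₁ x₂ => add_lie x₁ x₂ y)) f s

private lemma lie_sum' {ι : Type*} (s : Finset ι) (f : ι → g) (y : g) :
    ⁅y, ∑ j ∈ s, f j⁆ = ∑ j ∈ s, ⁅y, f j⁆ :=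
  map_sum (AddMonoidHom.mk' (fun x => ⁅y, x⁆) (fun x₁ x₂ => lie_add y x₁ x₂)) f s

end LieSums

/-- A pair of `g`-valued distributions `a, b` is local of order `≤ n` if
`Σ_{k=0}^{n} (−1)^k (n choose k) ⁅a_{t+n−k}, b_{s+k}⁆ = 0` for all `t, s`
(the coefficient form of `(z−w)ⁿ [a(z), b(w)] = 0`). -/
def PairLocalOfOrder {g : Type*} [LieRing g] (a b : ℤ → g) (n : ℕ) : Prop :=
  ∀ t s : ℤ, ∑ k ∈ Finset.range (n + 1),
    ((-1 : ℤ) ^ k * (n.choose k : ℤ)) • ⁅a (t + (n : ℤ) - (k : ℤ)), b (s + (k : ℤ))⁆ = 0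

/-- The `i`-th product `a_i b` of two `g`-valued distributions:
`(a_i b)_u = Σ_{k=0}^{i} (−1)^k (i choose k) ⁅a_{i−k}, b_{u+k}⁆`. -/
def distProd {g : Type*} [LieRing g] (a b : ℤ → g) (i : ℕ) : ℤ → g :=
  fun u => ∑ k ∈ Finset.range (i + 1),
    ((-1 : ℤ) ^ k * (i.choose k : ℤ)) • ⁅a ((i : ℤ) - (k : ℤ)), b (u + (k : ℤ))⁆

/-- **Dong's Lemma.** If the pairs `(a,b)`, `(a,c)`, `(b,c)` of `g`-valued distributions
are local of order `≤ n`, then `(a_i b, c)` is local of order `≤ 3n` for every `i`. -/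
theorem dongs_lemma
    (K : Type*) [Field K] [CharZero K]
    (g : Type*) [LieRing g] [LieAlgebra K g]
    (a b c : ℤ → g) (n : ℕ)
    (hab : PairLocalOfOrder a b n)
    (hac : PairLocalOfOrder a c n)
    (hbc : PairLocalOfOrder b c n)
    (i : ℕ) :
    PairLocalOfOrder (distProd a b i) c (3 * n) := by
  intro t s
  set F : ℤ → ℤ → ℤ → g := fun p q r => ⁅⁅a p, b q⁆, c r⁆ with hF
  set U : AddMonoid.End (ℤ → ℤ → ℤ → g) := SX g - SW g with hU
  set V : AddMonoid.End (ℤ → ℤ → ℤ → g) := SZ g - SW g with hV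
  have hUV : Commute U V :=
    ((hxz.sub_right hxw).sub_left (hzw.sub_right (Commute.refl (SW g))))
  have hXZ : SX g - SZ g = U - V := (sub_sub_sub_cancel_right (SX g) (SZ g) (SW g)).symm
  -- locality of (a,b) kills (SX - SZ)^n F
  have h1 : ((SX g - SZ g) ^ n) F = 0 := by
    funext p q r
    rw [EXZ]
    have : ∑ k ∈ Finset.range (n + 1),
        ((-1 : ℤ) ^ k * (n.choose k : ℤ)) • F (p + (n : ℤ) - k) (q + k) r
        = ⁅∑ k ∈ Finset.range (n + 1),
            ((-1 : ℤ) ^ k * (n.choose k : ℤ)) • ⁅a (p + (n : ℤ) - k), b (q + k)⁆, c r⁆ := by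
      rw [sum_lie']
      exact Finset.sum_congr rfl fun k hk => by rw [zsmul_lie]
    rw [this, hab p q, zero_lie]
    rfl
  -- localities of (a,c), (b,c) kill U^n (V^n F)
  have h2 : (U ^ n) ((V ^ n) F) = 0 := by
    set F₁ : ℤ → ℤ → ℤ → g := fun p q r => ⁅a p, ⁅b q, c r⁆⁆ with hF₁
    set F₂ : ℤ → ℤ → ℤ → g := fun p q r => ⁅⁅a p, c r⁆, b q⁆ with hF₂
    have hsplit : F = F₁ + F₂ := by
      funext p q r
      show ⁅⁅a p, b q⁆, c r⁆ = ⁅a p, ⁅b q, c r⁆⁆ + ⁅⁅a p, c r⁆, b q⁆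
      rw [lie_lie, sub_eq_add_neg, ← lie_skew (b q) ⁅a p, c r⁆, neg_neg]
    have hV1 : (V ^ n) F₁ = 0 := by
      funext p q r
      rw [hV, EZW]
      have : ∑ k ∈ Finset.range (n + 1),
          ((-1 : ℤ) ^ k * (n.choose k : ℤ)) • F₁ p (q + (n : ℤ) - k) (r + k)
          = ⁅a p, ∑ k ∈ Finset.range (n + 1),
              ((-1 : ℤ) ^ k * (n.choose k : ℤ)) • ⁅b (q + (n : ℤ) - k), c (r + k)⁆⁆ := by
        rw [lie_sum']
        exact Finset.sum_congr rfl fun k hk => by rw [lie_zsmul]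
      rw [this, hbc q r, lie_zero]
      rfl
    have hU2 : (U ^ n) F₂ = 0 := by
      funext p q r
      rw [hU, EXW]
      have : ∑ k ∈ Finset.range (n + 1),
          ((-1 : ℤ) ^ k * (n.choose k : ℤ)) • F₂ (p + (n : ℤ) - k) q (r + k)
          = ⁅∑ k ∈ Finset.range (n + 1),
              ((-1 : ℤ) ^ k * (n.choose k : ℤ)) • ⁅a (p + (n : ℤ) - k), c (r + k)⁆, b q⁆ := by
        rw [sum_lie']
        exact Finset.sum_congr rfl fun k hk => by rw [zsmul_lie]
      rw [this, hac p r, zero_lie]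
      rfl
    rw [hsplit, map_add, hV1, zero_add, swapApply (hUV.pow_pow n n), hU2, map_zero]
  -- key vanishing: (SX - SZ)^i ((SZ - SW)^(3n) F) = 0
  have hUV' : Commute U (U - V) := (Commute.refl U).sub_right hUV
  have key : ((SX g - SZ g) ^ i) (((SZ g - SW g) ^ (3 * n)) F) = 0 := by
    have killA : ∀ m : ℕ, n ≤ m → ((U - V) ^ m) F = 0 := by
      intro m hm
      rw [show m = (m - n) + n by omega, pow_add]
      show ((U - V) ^ (m - n)) (((U - V) ^ n) F) = 0
      rw [← hXZ, h1, map_zero]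
    have hv : V ^ (2 * n) = ∑ k ∈ Finset.range (2 * n + 1),
        ((-1 : ℤ) ^ k * ((2 * n).choose k : ℤ)) • (U ^ (2 * n - k) * (U - V) ^ k) := by
      conv_lhs => rw [← sub_sub_cancel U V]
      exact commute_sub_pow' hUV' (2 * n)
    rw [hXZ, ← hV]
    have hsplit3n : ((V : AddMonoid.End (ℤ → ℤ → ℤ → g)) ^ (3 * n)) F
        = (V ^ (2 * n)) ((V ^ n) F) := by
      rw [show 3 * n = 2 * n + n by ring, pow_add]; rfl
    rw [hsplit3n, hv, endSumApply]
    have : ∀ k ∈ Finset.range (2 * n + 1),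
        ((U - V) ^ i) (((((-1 : ℤ) ^ k * ((2 * n).choose k : ℤ)) •
          (U ^ (2 * n - k) * (U - V) ^ k))) ((V ^ n) F)) = 0 := by
      intro k hk
      have hk' : k ≤ 2 * n := Finset.mem_range_succ_iff.mp hk
      show ((U - V) ^ i) (((-1 : ℤ) ^ k * ((2 * n).choose k : ℤ)) •
          ((U ^ (2 * n - k)) (((U - V) ^ k) ((V ^ n) F)))) = 0
      rcases le_or_gt n k with hnk | hnk
      · -- (U - V)^k kills via h1/killA
        have hz : ((U - V) ^ k) ((V ^ n) F) = 0 := by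
          rw [swapApply ((hUV.sub_left (Commute.refl V)).pow_pow k n), killA k hnk,
            map_zero]
        rw [hz, map_zero, smul_zero, map_zero]
      · -- U^(2n-k) kills via h2
        have hz : (U ^ (2 * n - k)) (((U - V) ^ k) ((V ^ n) F)) = 0 := by
          rw [swapApply (hUV'.pow_pow (2 * n - k) k)]
          have : (U ^ (2 * n - k)) ((V ^ n) F) = 0 := by
            rw [show 2 * n - k = (n - k) + n by omega, pow_add]
            show ((U ^ (n - k))) ((U ^ n) ((V ^ n) F)) = 0
            rw [h2, map_zero]
          rw [this, map_zero]
        rw [hz, smul_zero, map_zero]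
    rw [map_sum]
    exact Finset.sum_eq_zero this
  -- translate the goal into operator language
  have main : (∑ m ∈ Finset.range (3 * n + 1),
        ((-1 : ℤ) ^ m * ((3 * n).choose m : ℤ)) •
          ⁅distProd a b i (t + ((3 * n : ℕ) : ℤ) - (m : ℤ)), c (s + (m : ℤ))⁆)
      = ((SX g - SZ g) ^ i) (((SZ g - SW g) ^ (3 * n)) F) 0 t s := by
    calc ∑ m ∈ Finset.range (3 * n + 1),
          ((-1 : ℤ) ^ m * ((3 * n).choose m : ℤ)) •
            ⁅distProd a b i (t + ((3 * n : ℕ) : ℤ) - (m : ℤ)), c (s + (m : ℤ))⁆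
        = ∑ m ∈ Finset.range (3 * n + 1), ∑ k ∈ Finset.range (i + 1),
            ((-1 : ℤ) ^ m * ((3 * n).choose m : ℤ)) •
              (((-1 : ℤ) ^ k * (i.choose k : ℤ)) •
                F ((i : ℤ) - (k : ℤ)) (t + ((3 * n : ℕ) : ℤ) - (m : ℤ) + (k : ℤ))
                  (s + (m : ℤ))) := by
          refine Finset.sum_congr rfl fun m hm => ?_
          simp only [distProd]
          rw [sum_lie', Finset.smul_sum]
          refine Finset.sum_congr rfl fun k hk => ?_
          rw [zsmul_lie]
      _ = ∑ k ∈ Finset.range (i + 1), ∑ m ∈ Finset.range (3 * n + 1),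
            ((-1 : ℤ) ^ k * (i.choose k : ℤ)) •
              (((-1 : ℤ) ^ m * ((3 * n).choose m : ℤ)) •
                F ((i : ℤ) - (k : ℤ)) (t + ((3 * n : ℕ) : ℤ) - (m : ℤ) + (k : ℤ))
                  (s + (m : ℤ))) := by
          rw [Finset.sum_comm]
          exact Finset.sum_congr rfl fun k _ => Finset.sum_congr rfl fun m _ =>
            smul_comm _ _ _
      _ = ((SX g - SZ g) ^ i) (((SZ g - SW g) ^ (3 * n)) F) 0 t s := by
          rw [EXZ]
          refine Finset.sum_congr rfl fun k hk => ?_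
          rw [EZW, Finset.smul_sum]
          refine Finset.sum_congr rfl fun m hm => ?_
          have e1 : ((i : ℤ) - (k : ℤ)) = 0 + (i : ℤ) - (k : ℤ) := by ring
          have e2 : (t + ((3 * n : ℕ) : ℤ) - (m : ℤ) + (k : ℤ))
              = t + (k : ℤ) + ((3 * n : ℕ) : ℤ) - (m : ℤ) := by ring
          rw [e1, e2]
  rw [main, key]
  rfl
end

section
/- Let R be a vertex Lie algebra over a field K of characteristic zero (in coefficient form). Define [a,b]_lie := Σ_{i≥0} (−1)^i T^{i+1}(a_i b)/(i+1)! (a finite sum by weak locality). Then [ , ]_lie is a Lie bracket on R: it is bilinear, skew-symmetric ([a,b]_lie = −[b,a]_lie), and satisfies the Jacobi identity; moreover T is a derivation of [ , ]_lie, i.e. T[a,b]_lie = [Ta, b]_lie + [a, Tb]_lie. -/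
/-- A vertex Lie algebra over a field `K` of characteristic zero, in coefficient form:
a `K`-vector space `R` with an operator `T` and bilinear `t`-th products `p t`
(`t ∈ ℕ`) satisfying weak locality, the translation axioms, the conformal Jacobi
identity and conformal skew-symmetry. -/
structure VertexLieAlgebra (K : Type*) [Field K]
    (R : Type*) [AddCommGroup R] [Module K R] where
  T : R →ₗ[K] R
  p : ℕ → R →ₗ[K] R →ₗ[K] R
  weak_local : ∀ a b : R, ∃ N : ℕ, ∀ t : ℕ, N ≤ t → p t a b = 0
  trans_zero : ∀ a b : R, p 0 (T a) b = 0
  trans_succ : ∀ (t : ℕ) (a b : R), p (t + 1) (T a) b = -(((t + 1 : ℕ) : K)) • p t a b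
  trans_T : ∀ (t : ℕ) (a b : R), T (p t a b) = p t (T a) b + p t a (T b)
  jacobi : ∀ (t s : ℕ) (a b c : R),
    p t a (p s b c) - p s b (p t a c) =
      ∑ i ∈ Finset.range (t + 1), (t.choose i : K) • p (t + s - i) (p i a b) c
  skew : ∀ (a b : R) (N : ℕ), (∀ m : ℕ, N ≤ m → p m b a = 0) →
    ∀ r : ℕ, p r a b =
      ∑ i ∈ Finset.range N,
        (((-1 : K) ^ (r + 1 + i)) * ((Nat.factorial i : K)⁻¹)) • (T ^ i) (p (r + i) b a)

/-- The bracket `[a,b]_lie := Σ_{i≥0} (−1)^i T^{i+1}(a_i b)/(i+1)!` of a vertex Lie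
algebra (a finite sum by weak locality, expressed as a `finsum`). -/
noncomputable def VertexLieAlgebra.lieBr {K : Type*} [Field K]
    {R : Type*} [AddCommGroup R] [Module K R]
    (V : VertexLieAlgebra K R) (a b : R) : R :=
  ∑ᶠ i : ℕ, (((-1 : K) ^ i) * ((Nat.factorial (i + 1) : K)⁻¹)) • (V.T ^ (i + 1)) (V.p i a b)

set_option linter.unusedSectionVars false
namespace VLAux

open Finset

variable {K : Type*} [Field K] [CharZero K] {R : Type*} [AddCommGroup R] [Module K R]
variable (V : VertexLieAlgebra K R)

/-- coefficient in the bracket -/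
noncomputable def cc (K : Type*) [Field K] (i : ℕ) : K :=
  (-1 : K) ^ i * ((Nat.factorial (i + 1) : K)⁻¹)

lemma fact_ne (n : ℕ) : ((Nat.factorial n : ℕ) : K) ≠ 0 :=
  Nat.cast_ne_zero.2 (Nat.factorial_ne_zero n)

lemma lieBr_def (a b : R) :
    V.lieBr a b = ∑ᶠ i : ℕ, cc K i • (V.T ^ (i + 1)) (V.p i a b) := rfl

lemma p_T_left (j : ℕ) (x y : R) :
    V.p j (V.T x) y = -((j : ℕ) : K) • V.p (j - 1) x y := by
  cases j with
  | zero => simp [V.trans_zero]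
  | succ t => simpa using V.trans_succ t x y

lemma p_Tpow_left (k j : ℕ) (x y : R) :
    V.p j ((V.T ^ k) x) y
      = ((-1 : K) ^ k * (j.descFactorial k : K)) • V.p (j - k) x y := by
  induction k generalizing x with
  | zero => simp
  | succ k ih =>
    have : (V.T ^ (k + 1)) x = (V.T ^ k) (V.T x) := by
      rw [pow_succ, Module.End.mul_apply]
    rw [this, ih, p_T_left, smul_smul, Nat.sub_sub]
    congr 1
    rw [Nat.descFactorial_succ]
    push_cast
    ring

lemma p_T_right (t : ℕ) (a x : R) :
    V.p t a (V.T x) = V.T (V.p t a x) + ((t : ℕ) : K) • V.p (t - 1) a x := by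
  have h := V.trans_T t a x
  rw [p_T_left] at h
  rw [h, neg_smul]
  abel

lemma p_Tpow_right (k t : ℕ) (a x : R) :
    V.p t a ((V.T ^ k) x)
      = ∑ l ∈ range (k + 1),
          ((k.choose l : K) * (t.descFactorial l : K)) •
            (V.T ^ (k - l)) (V.p (t - l) a x) := by
  induction k generalizing x with
  | zero => simp
  | succ k ih =>
    have hx : (V.T ^ (k + 1)) x = (V.T ^ k) (V.T x) := by
      rw [pow_succ, Module.End.mul_apply]
    rw [hx, ih]
    have hterm : ∀ l ∈ range (k + 1),
        ((k.choose l : K) * (t.descFactorial l : K)) •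
            (V.T ^ (k - l)) (V.p (t - l) a (V.T x))
        = ((k.choose l : K) * (t.descFactorial l : K)) •
            (V.T ^ (k + 1 - l)) (V.p (t - l) a x)
          + ((k.choose l : K) * (t.descFactorial (l + 1) : K)) •
            (V.T ^ (k + 1 - (l + 1))) (V.p (t - (l + 1)) a x) := by
      intro l hl
      rw [mem_range, Nat.lt_succ_iff] at hl
      rw [p_T_right, map_add, map_smul, smul_add, smul_smul]
      congr 1
      · congr 1
        have h2 : (V.T ^ (k - l)) (V.T (V.p (t - l) a x))
            = (V.T ^ (k - l + 1)) (V.p (t - l) a x) := by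
          rw [pow_succ, Module.End.mul_apply]
        rw [h2]
        congr 2
        omega
      · congr 1
        · rw [Nat.descFactorial_succ]
          push_cast
          ring
        · have h3 : k - l = k + 1 - (l + 1) := by omega
          have h4 : t - l - 1 = t - (l + 1) := by omega
          rw [h3, h4]
    rw [Finset.sum_congr rfl hterm, Finset.sum_add_distrib]
    have hA : (∑ l ∈ range (k + 1),
        ((k.choose l : K) * (t.descFactorial l : K)) •
          (V.T ^ (k + 1 - l)) (V.p (t - l) a x))
      = ∑ l ∈ range (k + 2),
        ((k.choose l : K) * (t.descFactorial l : K)) •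
          (V.T ^ (k + 1 - l)) (V.p (t - l) a x) := by
      rw [Finset.sum_range_succ (n := k + 1)]
      simp
    rw [hA]
    rw [Finset.sum_range_succ' _ (k + 1), Finset.sum_range_succ'
      (fun l => (((k+1).choose l : K) * (t.descFactorial l : K)) •
        (V.T ^ (k + 1 - l)) (V.p (t - l) a x)) (k + 1)]
    have hsplit : ∀ l ∈ range (k + 1),
        ((((k+1).choose (l+1) : ℕ) : K) * (t.descFactorial (l+1) : K)) •
          (V.T ^ (k + 1 - (l+1))) (V.p (t - (l+1)) a x)
        = (((k.choose (l+1) : ℕ) : K) * (t.descFactorial (l+1) : K)) •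
            (V.T ^ (k + 1 - (l+1))) (V.p (t - (l+1)) a x)
          + (((k.choose l : ℕ) : K) * (t.descFactorial (l+1) : K)) •
            (V.T ^ (k + 1 - (l+1))) (V.p (t - (l+1)) a x) := by
      intro l hl
      rw [Nat.choose_succ_succ']
      push_cast
      rw [add_mul, add_smul, add_comm]
    rw [Finset.sum_congr rfl hsplit, Finset.sum_add_distrib]
    simp only [Nat.choose_zero_right]
    abel

lemma lieBr_eq_sum (a b : R) (N : ℕ) (h : ∀ t, N ≤ t → V.p t a b = 0) :
    V.lieBr a b = ∑ i ∈ range N, cc K i • (V.T ^ (i + 1)) (V.p i a b) := by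
  rw [lieBr_def]
  apply finsum_eq_finset_sum_of_support_subset
  intro i hi
  simp only [Function.mem_support] at hi
  by_contra hN
  simp only [Finset.coe_range, Set.mem_Iio, not_lt] at hN
  exact hi (by rw [h i hN, map_zero, smul_zero])

lemma add_left (a a' b : R) : V.lieBr (a + a') b = V.lieBr a b + V.lieBr a' b := by
  obtain ⟨N1, h1⟩ := V.weak_local a b
  obtain ⟨N2, h2⟩ := V.weak_local a' b
  set N := max N1 N2 with hN
  have hb1 : ∀ t, N ≤ t → V.p t a b = 0 := fun t ht => h1 t (le_trans (le_max_left _ _) ht)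
  have hb2 : ∀ t, N ≤ t → V.p t a' b = 0 := fun t ht => h2 t (le_trans (le_max_right _ _) ht)
  have hb3 : ∀ t, N ≤ t → V.p t (a + a') b = 0 := by
    intro t ht; rw [map_add, LinearMap.add_apply, hb1 t ht, hb2 t ht, add_zero]
  rw [lieBr_eq_sum V _ _ N hb1, lieBr_eq_sum V _ _ N hb2, lieBr_eq_sum V _ _ N hb3,
    ← Finset.sum_add_distrib]
  refine Finset.sum_congr rfl fun i _ => ?_
  rw [map_add, LinearMap.add_apply, map_add, smul_add]

lemma smul_left (k : K) (a b : R) : V.lieBr (k • a) b = k • V.lieBr a b := by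
  obtain ⟨N, h1⟩ := V.weak_local a b
  have hb2 : ∀ t, N ≤ t → V.p t (k • a) b = 0 := by
    intro t ht; rw [map_smul, LinearMap.smul_apply, h1 t ht, smul_zero]
  rw [lieBr_eq_sum V _ _ N h1, lieBr_eq_sum V _ _ N hb2, Finset.smul_sum]
  refine Finset.sum_congr rfl fun i _ => ?_
  rw [map_smul, LinearMap.smul_apply, map_smul, smul_comm]

lemma add_right (a b b' : R) : V.lieBr a (b + b') = V.lieBr a b + V.lieBr a b' := by
  obtain ⟨N1, h1⟩ := V.weak_local a b
  obtain ⟨N2, h2⟩ := V.weak_local a b'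
  set N := max N1 N2 with hN
  have hb1 : ∀ t, N ≤ t → V.p t a b = 0 := fun t ht => h1 t (le_trans (le_max_left _ _) ht)
  have hb2 : ∀ t, N ≤ t → V.p t a b' = 0 := fun t ht => h2 t (le_trans (le_max_right _ _) ht)
  have hb3 : ∀ t, N ≤ t → V.p t a (b + b') = 0 := by
    intro t ht; rw [map_add, hb1 t ht, hb2 t ht, add_zero]
  rw [lieBr_eq_sum V _ _ N hb1, lieBr_eq_sum V _ _ N hb2, lieBr_eq_sum V _ _ N hb3,
    ← Finset.sum_add_distrib]
  refine Finset.sum_congr rfl fun i _ => ?_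
  rw [map_add, map_add, smul_add]

lemma smul_right (k : K) (a b : R) : V.lieBr a (k • b) = k • V.lieBr a b := by
  obtain ⟨N, h1⟩ := V.weak_local a b
  have hb2 : ∀ t, N ≤ t → V.p t a (k • b) = 0 := by
    intro t ht; rw [map_smul, h1 t ht, smul_zero]
  rw [lieBr_eq_sum V _ _ N h1, lieBr_eq_sum V _ _ N hb2, Finset.smul_sum]
  refine Finset.sum_congr rfl fun i _ => ?_
  rw [map_smul, map_smul, smul_comm]

lemma deriv (a b : R) :
    V.T (V.lieBr a b) = V.lieBr (V.T a) b + V.lieBr a (V.T b) := by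
  obtain ⟨N, h1⟩ := V.weak_local a b
  have h1' : ∀ t, N + 1 ≤ t → V.p t a b = 0 := fun t ht => h1 t (by omega)
  have h2 : ∀ t, N + 1 ≤ t → V.p t (V.T a) b = 0 := by
    intro t ht
    rw [p_T_left, h1 (t-1) (by omega), smul_zero]
  have h3 : ∀ t, N + 1 ≤ t → V.p t a (V.T b) = 0 := by
    intro t ht
    have h5 := V.trans_T t a b
    rw [h2 t ht, h1' t ht, map_zero, zero_add] at h5
    exact h5.symm
  rw [lieBr_eq_sum V _ _ (N + 1) h1', lieBr_eq_sum V _ _ (N + 1) h2,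
    lieBr_eq_sum V _ _ (N + 1) h3, map_sum, ← Finset.sum_add_distrib]
  refine Finset.sum_congr rfl fun i _ => ?_
  rw [map_smul, ← smul_add]
  congr 1
  have hTT : V.T ((V.T ^ (i + 1)) (V.p i a b)) = (V.T ^ (i + 1)) (V.T (V.p i a b)) := by
    rw [← Module.End.mul_apply, ← pow_succ', pow_succ, Module.End.mul_apply]
  rw [hTT, V.trans_T, map_add]

lemma diag_sum {M : Type*} [AddCommMonoid M] (A B C : ℕ) (g : ℕ → ℕ → M)
    (hg : ∀ u s, C ≤ u + s → g u s = 0) (hA : C ≤ A) (hB : C ≤ B) :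
    ∑ u ∈ range A, ∑ s ∈ range B, g u s
      = ∑ n ∈ range C, ∑ u ∈ range (n + 1), g u (n - u) := by
  have step1 : ∑ u ∈ range A, ∑ s ∈ range B, g u s
      = ∑ u ∈ range C, ∑ s ∈ range C, g u s := by
    rw [← Finset.sum_subset (Finset.range_subset_range.2 hA) (fun u _ hu =>
      Finset.sum_eq_zero fun s _ => hg u s (by
        rw [Finset.mem_range, not_lt] at hu; omega))]
    refine Finset.sum_congr rfl fun u _ => ?_
    rw [← Finset.sum_subset (Finset.range_subset_range.2 hB) (fun s _ hs =>
      hg u s (by rw [Finset.mem_range, not_lt] at hs; omega))]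
  rw [step1, Finset.sum_range_diag_flip C g]
  refine Finset.sum_congr rfl fun m hm => ?_
  rw [Finset.mem_range] at hm
  rw [← Finset.sum_subset (Finset.range_subset_range.2 (Nat.sub_le C m)) (fun s _ hs =>
    hg m s (by rw [Finset.mem_range, not_lt] at hs; omega))]

lemma hockey (i n : ℕ) :
    ∑ u ∈ range (n + 1), (i + u).choose i = (i + n + 1).choose (i + 1) := by
  induction n with
  | zero => simp
  | succ n ih =>
    rw [Finset.sum_range_succ, ih]
    have h1 : i + (n + 1) + 1 = (i + n + 1) + 1 := by omega
    have h2 : i + (n + 1) = i + n + 1 := by omega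
    rw [h1, h2]
    have h3 := Nat.choose_succ_succ (i + n + 1) i
    simp only [Nat.succ_eq_add_one] at h3
    omega

lemma aux_frac (A B Cf D u v : K) (hC : Cf ≠ 0) (hD : D ≠ 0) (hsum : D = u + v) :
    -(A * (u * B) * (D * Cf)⁻¹) + A * B * Cf⁻¹ = v * A * B * (D * Cf)⁻¹ := by
  subst hsum
  field_simp
  ring

lemma inv_sum (m : ℕ) : ∀ y : ℕ,
    ∑ l ∈ range (m + 1), (-1 : K) ^ l * (m.choose l : K) * (((y + l + 1 : ℕ) : K))⁻¹
      = (m.factorial : K) * (y.factorial : K) * (((y + m + 1).factorial : K))⁻¹ := by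
  induction m with
  | zero =>
    intro y
    rw [Finset.sum_range_one]
    have h1 : (y + 0 + 1).factorial = (y + 1) * y.factorial := by
      simp [Nat.factorial_succ]
    rw [h1]
    have h2 : ((y + 1 : ℕ) : K) ≠ 0 := Nat.cast_ne_zero.2 (by omega)
    have h3 := fact_ne (K := K) y
    push_cast
    field_simp
    simp
  | succ m ih =>
    intro y
    rw [Finset.sum_range_succ' _ (m + 1)]
    have hsplit : ∀ l ∈ range (m + 1),
        (-1 : K) ^ (l + 1) * (((m + 1).choose (l + 1) : ℕ) : K) * (((y + (l + 1) + 1 : ℕ) : K))⁻¹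
        = (-((-1 : K) ^ l * ((m.choose l : ℕ) : K) * ((((y + 1) + l + 1 : ℕ) : K))⁻¹))
          + (-1 : K) ^ (l + 1) * ((m.choose (l + 1) : ℕ) : K) * (((y + (l + 1) + 1 : ℕ) : K))⁻¹ := by
      intro l hl
      rw [Nat.choose_succ_succ]
      have hc : ((y + (l + 1) + 1 : ℕ) : K) = (((y + 1) + l + 1 : ℕ) : K) := by push_cast; ring
      rw [hc]
      push_cast
      ring
    rw [Finset.sum_congr rfl hsplit, Finset.sum_add_distrib, Finset.sum_neg_distrib, ih (y + 1)]
    have hext : ∑ l ∈ range (m + 1 + 1),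
          (-1 : K) ^ l * ((m.choose l : ℕ) : K) * (((y + l + 1 : ℕ) : K))⁻¹
        = ∑ l ∈ range (m + 1), (-1 : K) ^ l * ((m.choose l : ℕ) : K) * (((y + l + 1 : ℕ) : K))⁻¹ := by
      rw [Finset.sum_range_succ]
      simp [Nat.choose_succ_self]
    have hpiece : (∑ x ∈ range (m + 1),
          (-1 : K) ^ (x + 1) * ((m.choose (x + 1) : ℕ) : K) * (((y + (x + 1) + 1 : ℕ) : K))⁻¹)
        + (-1 : K) ^ 0 * ((m.choose 0 : ℕ) : K) * (((y + 0 + 1 : ℕ) : K))⁻¹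
        = (m.factorial : K) * (y.factorial : K) * (((y + m + 1).factorial : K))⁻¹ := by
      rw [← Finset.sum_range_succ'
        (fun l => (-1 : K) ^ l * ((m.choose l : ℕ) : K) * (((y + l + 1 : ℕ) : K))⁻¹) (m + 1),
        hext, ih y]
    simp only [pow_zero, Nat.choose_zero_right, Nat.cast_one, one_mul] at hpiece ⊢
    rw [add_assoc, hpiece]
    have e0 : y + 1 + m + 1 = (y + m + 1) + 1 := by omega
    have e1 : y + (m + 1) + 1 = (y + m + 1) + 1 := by omega
    rw [e0, e1, Nat.factorial_succ (y + m + 1), Nat.factorial_succ m, Nat.factorial_succ y]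
    have hf := fact_ne (K := K) (y + m + 1)
    have hc : ((y + m + 1 + 1 : ℕ) : K) ≠ 0 := Nat.cast_ne_zero.2 (by omega)
    simp only [Nat.cast_mul]
    refine aux_frac _ _ _ _ _ _ hf hc ?_
    push_cast
    ring

lemma alt_choose_sum (n : ℕ) :
    ∑ r ∈ range (n + 1), (-1 : K) ^ r * ((n + 1).choose (r + 1) : K) = 1 := by
  have hInt := Int.alternating_sum_range_choose (n := n + 1)
  rw [if_neg (Nat.succ_ne_zero n)] at hInt
  have halt : (∑ i ∈ range (n + 2), (-1 : K) ^ i * ((n + 1).choose i : K)) = 0 := by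
    have h := congrArg (fun z : ℤ => (z : K)) hInt
    push_cast at h
    simpa using h
  rw [Finset.sum_range_succ' _ (n + 1)] at halt
  simp only [pow_zero, Nat.choose_zero_right, Nat.cast_one, one_mul] at halt
  have h2 : ∑ r ∈ range (n + 1), (-1 : K) ^ (r + 1) * ((n + 1).choose (r + 1) : K)
      = - ∑ r ∈ range (n + 1), (-1 : K) ^ r * ((n + 1).choose (r + 1) : K) := by
    rw [← Finset.sum_neg_distrib]
    refine Finset.sum_congr rfl fun r _ => by ring
  rw [h2] at halt
  linear_combination -halt

lemma S1 (n : ℕ) :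
    ∑ r ∈ range (n + 1), (-1 : K) ^ r * (((r + 1).factorial : K)⁻¹ * ((n - r).factorial : K)⁻¹)
      = ((n + 1).factorial : K)⁻¹ := by
  have hterm : ∀ r ∈ range (n + 1),
      (-1 : K) ^ r * (((r + 1).factorial : K)⁻¹ * ((n - r).factorial : K)⁻¹)
      = ((-1 : K) ^ r * (((n + 1).choose (r + 1) : ℕ) : K)) * (((n + 1).factorial : K)⁻¹) := by
    intro r hr
    rw [mem_range] at hr
    have hnat : ((n + 1).choose (r + 1)) * (r + 1).factorial * (n - r).factorial
        = (n + 1).factorial := by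
      have h := Nat.choose_mul_factorial_mul_factorial (show r + 1 ≤ n + 1 by omega)
      rw [show n + 1 - (r + 1) = n - r by omega] at h
      exact h
    have hK : (((n + 1).choose (r + 1) : ℕ) : K) * ((r + 1).factorial : K)
        * ((n - r).factorial : K) = ((n + 1).factorial : K) := by
      exact_mod_cast congrArg (fun k : ℕ => (k : K)) hnat
    have f1 := fact_ne (K := K) (r + 1)
    have f2 := fact_ne (K := K) (n - r)
    have f3 := fact_ne (K := K) (n + 1)
    field_simp
    linear_combination (-1 : K) * hK
  rw [Finset.sum_congr rfl hterm, ← Finset.sum_mul, alt_choose_sum, one_mul]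

lemma skew_br (a b : R) : V.lieBr a b = - V.lieBr b a := by
  obtain ⟨N1, h1⟩ := V.weak_local a b
  obtain ⟨N2, h2⟩ := V.weak_local b a
  set N := max N1 N2 with hN
  have hab : ∀ t, N ≤ t → V.p t a b = 0 := fun t ht => h1 t (le_trans (le_max_left _ _) ht)
  have hba : ∀ t, N ≤ t → V.p t b a = 0 := fun t ht => h2 t (le_trans (le_max_right _ _) ht)
  rw [lieBr_eq_sum V a b N hab]
  have hsub : ∀ r ∈ range N,
      cc K r • (V.T ^ (r + 1)) (V.p r a b)
      = ∑ i ∈ range N, (cc K r * ((-1 : K) ^ (r + 1 + i) * ((Nat.factorial i : K)⁻¹))) •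
          (V.T ^ (r + 1 + i)) (V.p (r + i) b a) := by
    intro r _
    rw [V.skew a b N hba r, map_sum, Finset.smul_sum]
    refine Finset.sum_congr rfl fun i _ => ?_
    rw [map_smul, smul_smul]
    congr 1
    rw [← Module.End.mul_apply, ← pow_add]
  rw [Finset.sum_congr rfl hsub]
  have hg : ∀ u s : ℕ, N ≤ u + s →
      (cc K u * ((-1 : K) ^ (u + 1 + s) * ((Nat.factorial s : K)⁻¹))) •
        (V.T ^ (u + 1 + s)) (V.p (u + s) b a) = 0 := by
    intro u s hus
    rw [hba _ hus, map_zero, smul_zero]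
  rw [diag_sum N N N _ hg le_rfl le_rfl]
  have hinner : ∀ n ∈ range N,
      (∑ u ∈ range (n + 1),
        (cc K u * ((-1 : K) ^ (u + 1 + (n - u)) * ((Nat.factorial (n - u) : K)⁻¹))) •
          (V.T ^ (u + 1 + (n - u))) (V.p (u + (n - u)) b a))
      = (- cc K n) • (V.T ^ (n + 1)) (V.p n b a) := by
    intro n _
    have hstep : ∀ u ∈ range (n + 1),
        (cc K u * ((-1 : K) ^ (u + 1 + (n - u)) * ((Nat.factorial (n - u) : K)⁻¹))) •
          (V.T ^ (u + 1 + (n - u))) (V.p (u + (n - u)) b a)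
        = (cc K u * ((-1 : K) ^ (n + 1) * ((Nat.factorial (n - u) : K)⁻¹))) •
          (V.T ^ (n + 1)) (V.p n b a) := by
      intro u hu
      rw [mem_range, Nat.lt_succ_iff] at hu
      have e1 : u + 1 + (n - u) = n + 1 := by omega
      have e2 : u + (n - u) = n := by omega
      rw [e1, e2]
    rw [Finset.sum_congr rfl hstep, ← Finset.sum_smul]
    congr 1
    have : ∀ u ∈ range (n + 1),
        cc K u * ((-1 : K) ^ (n + 1) * ((Nat.factorial (n - u) : K)⁻¹))
        = (-1 : K) ^ (n + 1) * ((-1 : K) ^ u * (((u + 1).factorial : K)⁻¹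
            * ((n - u).factorial : K)⁻¹)) := by
      intro u _
      rw [cc]
      ring
    rw [Finset.sum_congr rfl this, ← Finset.mul_sum, S1, cc]
    ring
  rw [Finset.sum_congr rfl hinner, lieBr_eq_sum V b a N hba, ← Finset.sum_neg_distrib]
  refine Finset.sum_congr rfl fun n _ => ?_
  rw [neg_smul]

/-- coefficient in the normal form of `[[x,y],z]` -/
noncomputable def dd (K : Type*) [Field K] (i m : ℕ) : K :=
  (-1 : K) ^ (i + m) * (((i + 1).factorial : K)⁻¹ *
    ((m.factorial : K)⁻¹ * (((i + m + 2 : ℕ) : K)⁻¹)))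

/-- coefficient in the normal form of `[x,[y,z]]` -/
noncomputable def ff (K : Type*) [Field K] (t s : ℕ) : K :=
  (-1 : K) ^ (t + s) * (((t + s + 2).factorial : K)⁻¹)

lemma exists_N (a b c : R) : ∃ N : ℕ, 1 ≤ N ∧
    (∀ t, N ≤ t → V.p t a b = 0) ∧
    (∀ t, N ≤ t → V.p t b c = 0) ∧
    (∀ t, N ≤ t → V.p t a c = 0) ∧
    (∀ i t, N ≤ t → V.p t (V.p i a b) c = 0) ∧
    (∀ i t, N ≤ t → V.p t a (V.p i b c) = 0) ∧
    (∀ i t, N ≤ t → V.p t b (V.p i a c) = 0) := by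
  obtain ⟨N1, h1⟩ := V.weak_local a b
  obtain ⟨N2, h2⟩ := V.weak_local b c
  obtain ⟨N3, h3⟩ := V.weak_local a c
  set N0 := max (max N1 N2) N3 with hN0
  choose g1 hg1 using fun i => V.weak_local (V.p i a b) c
  choose g2 hg2 using fun i => V.weak_local a (V.p i b c)
  choose g3 hg3 using fun i => V.weak_local b (V.p i a c)
  set S1 := (range N0).sup g1
  set S2 := (range N0).sup g2
  set S3 := (range N0).sup g3
  refine ⟨N0 + S1 + S2 + S3 + 1, by omega, fun t ht => h1 t (by omega),
    fun t ht => h2 t (by omega), fun t ht => h3 t (by omega), ?_, ?_, ?_⟩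
  · intro i t ht
    by_cases hi : i < N0
    · exact hg1 i t (le_trans (le_trans (Finset.le_sup (Finset.mem_range.2 hi)) (by omega)) le_rfl)
    · rw [h1 i (by omega), map_zero, LinearMap.zero_apply]
  · intro i t ht
    by_cases hi : i < N0
    · exact hg2 i t (le_trans (le_trans (Finset.le_sup (Finset.mem_range.2 hi)) (by omega)) le_rfl)
    · rw [h2 i (by omega), map_zero]
  · intro i t ht
    by_cases hi : i < N0
    · exact hg3 i t (le_trans (le_trans (Finset.le_sup (Finset.mem_range.2 hi)) (by omega)) le_rfl)
    · rw [h3 i (by omega), map_zero]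

lemma cIdent (i k : ℕ) :
    cc K (i + 1 + k) * (cc K i * ((-1 : K) ^ (i + 1) *
        (((i + 1 + k).descFactorial (i + 1) : ℕ) : K)))
      = dd K i k := by
  have hnat : k.factorial * ((i + 1 + k).descFactorial (i + 1)) = (i + 1 + k).factorial := by
    have h := Nat.factorial_mul_descFactorial (show i + 1 ≤ i + 1 + k by omega)
    rwa [show i + 1 + k - (i + 1) = k by omega] at h
  have f1 := fact_ne (K := K) (i + 1 + k)
  have f2 := fact_ne (K := K) k
  have f3 := fact_ne (K := K) (i + 1)
  have f4 : ((i + k + 2 : ℕ) : K) ≠ 0 := Nat.cast_ne_zero.2 (by omega)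
  have hdf : (((i + 1 + k).descFactorial (i + 1) : ℕ) : K)
      = ((i + 1 + k).factorial : K) / (k.factorial : K) := by
    rw [eq_div_iff f2]
    exact_mod_cast congrArg (fun t : ℕ => (t : K)) (by rw [mul_comm] at hnat; exact hnat)
  have e2 : ((i + 1 + k + 1).factorial : K)
      = ((i + k + 2 : ℕ) : K) * ((i + 1 + k).factorial : K) := by
    rw [show i + 1 + k + 1 = (i + 1 + k) + 1 by omega, Nat.factorial_succ]
    push_cast
    ring
  have hsign : (-1 : K) ^ (i + 1 + k) * ((-1 : K) ^ i * (-1 : K) ^ (i + 1))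
      = (-1 : K) ^ (i + k) := by
    rw [← pow_add, ← pow_add, show i + 1 + k + (i + (i + 1)) = (i + k) + 2 * (i + 1) by omega,
      pow_add, pow_mul, neg_one_sq, one_pow, mul_one]
  calc cc K (i + 1 + k) * (cc K i * ((-1 : K) ^ (i + 1) *
        (((i + 1 + k).descFactorial (i + 1) : ℕ) : K)))
      = ((-1 : K) ^ (i + 1 + k) * ((-1 : K) ^ i * (-1 : K) ^ (i + 1))) *
          (((i + 1 + k + 1).factorial : K)⁻¹ * (((i + 1).factorial : K)⁻¹ *
            (((i + 1 + k).descFactorial (i + 1) : ℕ) : K))) := by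
        rw [cc, cc]; ring
    _ = (-1 : K) ^ (i + k) * (((i + 1 + k + 1).factorial : K)⁻¹ * (((i + 1).factorial : K)⁻¹ *
            (((i + 1 + k).descFactorial (i + 1) : ℕ) : K))) := by rw [hsign]
    _ = dd K i k := by
        rw [dd, hdf, e2]
        congr 1
        have f4' : ((i : K) + (k : K) + 2) ≠ 0 := by push_cast at f4; exact f4
        field_simp

lemma aux1 (x y z : R) (N : ℕ) (hN : 1 ≤ N)
    (h1 : ∀ t, N ≤ t → V.p t x y = 0)
    (h4 : ∀ i t, N ≤ t → V.p t (V.p i x y) z = 0) :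
    V.lieBr (V.lieBr x y) z
      = ∑ i ∈ range N, ∑ m ∈ range N,
          dd K i m • (V.T ^ (i + m + 2)) (V.p m (V.p i x y) z) := by
  have hexp : ∀ j : ℕ, V.p j (V.lieBr x y) z
      = ∑ i ∈ range N, (cc K i * ((-1 : K) ^ (i + 1) * ((j.descFactorial (i + 1) : ℕ) : K))) •
          V.p (j - (i + 1)) (V.p i x y) z := by
    intro j
    rw [lieBr_eq_sum V x y N h1, map_sum, LinearMap.sum_apply]
    refine Finset.sum_congr rfl fun i _ => ?_
    rw [map_smul, LinearMap.smul_apply, p_Tpow_left, smul_smul]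
  have hloc : ∀ j, 2 * N ≤ j → V.p j (V.lieBr x y) z = 0 := by
    intro j hj
    rw [hexp j]
    refine Finset.sum_eq_zero fun i hi => ?_
    rw [mem_range] at hi
    rw [h4 i (j - (i + 1)) (by omega), smul_zero]
  rw [lieBr_eq_sum V _ z (2 * N) hloc]
  have hstep : ∀ j ∈ range (2 * N),
      cc K j • (V.T ^ (j + 1)) (V.p j (V.lieBr x y) z)
      = ∑ i ∈ range N,
          (cc K j * (cc K i * ((-1 : K) ^ (i + 1) * ((j.descFactorial (i + 1) : ℕ) : K)))) •
            (V.T ^ (j + 1)) (V.p (j - (i + 1)) (V.p i x y) z) := by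
    intro j _
    rw [hexp j, map_sum, Finset.smul_sum]
    refine Finset.sum_congr rfl fun i _ => ?_
    rw [map_smul, smul_smul]
  rw [Finset.sum_congr rfl hstep, Finset.sum_comm]
  refine Finset.sum_congr rfl fun i hi => ?_
  rw [mem_range] at hi
  have hzero : ∀ j ∈ range (2 * N), j ∉ Finset.Ico (i + 1) (2 * N) →
      (cc K j * (cc K i * ((-1 : K) ^ (i + 1) * ((j.descFactorial (i + 1) : ℕ) : K)))) •
        (V.T ^ (j + 1)) (V.p (j - (i + 1)) (V.p i x y) z) = 0 := by
    intro j hj hj2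
    rw [mem_range] at hj
    rw [Finset.mem_Ico, not_and_or, not_le, not_lt] at hj2
    have hji : j < i + 1 := by omega
    rw [Nat.descFactorial_of_lt hji]
    norm_num
  have hsub : Finset.Ico (i + 1) (2 * N) ⊆ range (2 * N) := by
    intro j hj
    rw [Finset.mem_Ico] at hj
    exact Finset.mem_range.2 hj.2
  rw [← Finset.sum_subset hsub hzero, Finset.sum_Ico_eq_sum_range]
  have hterm : ∀ k ∈ range (2 * N - (i + 1)),
      (cc K (i + 1 + k) * (cc K i * ((-1 : K) ^ (i + 1) *
          (((i + 1 + k).descFactorial (i + 1) : ℕ) : K)))) •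
        (V.T ^ (i + 1 + k + 1)) (V.p (i + 1 + k - (i + 1)) (V.p i x y) z)
      = dd K i k • (V.T ^ (i + k + 2)) (V.p k (V.p i x y) z) := by
    intro k _
    rw [cIdent, show i + 1 + k + 1 = i + k + 2 by omega, show i + 1 + k - (i + 1) = k by omega]
  rw [Finset.sum_congr rfl hterm]
  rw [← Finset.sum_subset (Finset.range_subset_range.2 (show N ≤ 2 * N - (i + 1) by omega))
    (fun k _ hk2 => by
      rw [mem_range, not_lt] at hk2
      rw [h4 i k hk2, map_zero, smul_zero])]

lemma cIdent2 (t s : ℕ) : ∀ l ∈ range (s + 2),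
    cc K (l + t) * (cc K s * ((((s + 1).choose l : ℕ) : K) *
        (((l + t).descFactorial l : ℕ) : K)))
    = ((-1 : K) ^ (t + s) * (((s + 1).factorial : K)⁻¹ * (t.factorial : K)⁻¹)) *
        ((-1 : K) ^ l * (((s + 1).choose l : ℕ) : K) * (((t + l + 1 : ℕ) : K))⁻¹) := by
  intro l _
  have hnat : t.factorial * ((l + t).descFactorial l) = (l + t).factorial := by
    have h := Nat.factorial_mul_descFactorial (show l ≤ l + t by omega)
    rwa [show l + t - l = t by omega] at h
  have f1 := fact_ne (K := K) (l + t)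
  have f2 := fact_ne (K := K) t
  have f3 := fact_ne (K := K) (s + 1)
  have f4 : ((t + l + 1 : ℕ) : K) ≠ 0 := Nat.cast_ne_zero.2 (by omega)
  have hdf : (((l + t).descFactorial l : ℕ) : K) = ((l + t).factorial : K) / (t.factorial : K) := by
    rw [eq_div_iff f2]
    exact_mod_cast congrArg (fun u : ℕ => (u : K)) (by rw [mul_comm] at hnat; exact hnat)
  have e2 : ((l + t + 1).factorial : K) = ((t + l + 1 : ℕ) : K) * ((l + t).factorial : K) := by
    rw [Nat.factorial_succ]
    push_cast
    ring
  rw [cc, cc, hdf, e2, mul_inv, div_eq_mul_inv]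
  linear_combination ((-1 : K) ^ l * (-1 : K) ^ t * (-1 : K) ^ s * (((s + 1).choose l : ℕ) : K) *
    (((t + l + 1 : ℕ) : K))⁻¹ * (((s + 1).factorial : K))⁻¹ * ((t.factorial : K))⁻¹) *
    (inv_mul_cancel₀ f1)

lemma cSum2 (t s : ℕ) :
    ∑ l ∈ range (s + 2), cc K (l + t) * (cc K s * ((((s + 1).choose l : ℕ) : K) *
        (((l + t).descFactorial l : ℕ) : K)))
      = ff K t s := by
  rw [Finset.sum_congr rfl (cIdent2 t s), ← Finset.mul_sum]
  have hi := inv_sum (K := K) (s + 1) t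
  rw [show t + (s + 1) + 1 = t + s + 2 by omega] at hi
  rw [hi, ff]
  have f1 := fact_ne (K := K) (s + 1)
  have f2 := fact_ne (K := K) t
  field_simp

lemma aux2 (x y z : R) (N : ℕ) (hN : 1 ≤ N)
    (h2 : ∀ t, N ≤ t → V.p t y z = 0)
    (h5 : ∀ j t, N ≤ t → V.p t x (V.p j y z) = 0) :
    V.lieBr x (V.lieBr y z)
      = ∑ t ∈ range (2 * N), ∑ s ∈ range (2 * N),
          ff K t s • (V.T ^ (t + s + 2)) (V.p t x (V.p s y z)) := by
  have hexp : ∀ t : ℕ, V.p t x (V.lieBr y z)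
      = ∑ s ∈ range N, ∑ l ∈ range (s + 2),
          (cc K s * ((((s + 1).choose l : ℕ) : K) * ((t.descFactorial l : ℕ) : K))) •
            (V.T ^ (s + 1 - l)) (V.p (t - l) x (V.p s y z)) := by
    intro t
    rw [lieBr_eq_sum V y z N h2, map_sum]
    refine Finset.sum_congr rfl fun s _ => ?_
    rw [map_smul, p_Tpow_right, Finset.smul_sum]
    refine Finset.sum_congr rfl fun l _ => ?_
    rw [smul_smul]
  have hloc : ∀ t, 2 * N ≤ t → V.p t x (V.lieBr y z) = 0 := by
    intro t ht
    rw [hexp t]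
    refine Finset.sum_eq_zero fun s hs => Finset.sum_eq_zero fun l hl => ?_
    rw [mem_range] at hs hl
    rw [h5 s (t - l) (by omega), map_zero, smul_zero]
  rw [lieBr_eq_sum V x _ (2 * N) hloc]
  have hstep : ∀ t ∈ range (2 * N),
      cc K t • (V.T ^ (t + 1)) (V.p t x (V.lieBr y z))
      = ∑ s ∈ range N, ∑ l ∈ range (s + 2),
          (cc K t * (cc K s * ((((s + 1).choose l : ℕ) : K) * ((t.descFactorial l : ℕ) : K)))) •
            (V.T ^ (t + s + 2 - l)) (V.p (t - l) x (V.p s y z)) := by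
    intro t _
    rw [hexp t, map_sum, Finset.smul_sum]
    refine Finset.sum_congr rfl fun s hs => ?_
    rw [map_sum, Finset.smul_sum]
    refine Finset.sum_congr rfl fun l hl => ?_
    rw [mem_range] at hl
    rw [map_smul, smul_smul, ← Module.End.mul_apply, ← pow_add,
      show t + 1 + (s + 1 - l) = t + s + 2 - l by omega]
  rw [Finset.sum_congr rfl hstep, Finset.sum_comm]
  -- now : ∑ s ∈ range N, ∑ t ∈ range (2N), ∑ l ∈ range (s+2), …
  have hmid : ∀ s ∈ range N,
      (∑ t ∈ range (2 * N), ∑ l ∈ range (s + 2),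
        (cc K t * (cc K s * ((((s + 1).choose l : ℕ) : K) * ((t.descFactorial l : ℕ) : K)))) •
          (V.T ^ (t + s + 2 - l)) (V.p (t - l) x (V.p s y z)))
      = ∑ t ∈ range N, ff K t s • (V.T ^ (t + s + 2)) (V.p t x (V.p s y z)) := by
    intro s hs
    rw [mem_range] at hs
    rw [Finset.sum_comm]
    have hfix : ∀ l ∈ range (s + 2),
        (∑ t ∈ range (2 * N),
          (cc K t * (cc K s * ((((s + 1).choose l : ℕ) : K) * ((t.descFactorial l : ℕ) : K)))) •
            (V.T ^ (t + s + 2 - l)) (V.p (t - l) x (V.p s y z)))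
        = ∑ t ∈ range N,
            (cc K (l + t) * (cc K s * ((((s + 1).choose l : ℕ) : K) *
              (((l + t).descFactorial l : ℕ) : K)))) •
              (V.T ^ (t + s + 2)) (V.p t x (V.p s y z)) := by
      intro l hl
      rw [mem_range] at hl
      have hzero : ∀ t ∈ range (2 * N), t ∉ Finset.Ico l (2 * N) →
          (cc K t * (cc K s * ((((s + 1).choose l : ℕ) : K) * ((t.descFactorial l : ℕ) : K)))) •
            (V.T ^ (t + s + 2 - l)) (V.p (t - l) x (V.p s y z)) = 0 := by
        intro t ht ht2
        rw [mem_range] at ht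
        rw [Finset.mem_Ico, not_and_or, not_le, not_lt] at ht2
        have htl : t < l := by omega
        rw [Nat.descFactorial_of_lt htl]
        norm_num
      have hsub : Finset.Ico l (2 * N) ⊆ range (2 * N) := by
        intro t ht
        rw [Finset.mem_Ico] at ht
        exact Finset.mem_range.2 ht.2
      rw [← Finset.sum_subset hsub hzero, Finset.sum_Ico_eq_sum_range]
      have hterm : ∀ t ∈ range (2 * N - l),
          (cc K (l + t) * (cc K s * ((((s + 1).choose l : ℕ) : K) *
              (((l + t).descFactorial l : ℕ) : K)))) •
            (V.T ^ (l + t + s + 2 - l)) (V.p (l + t - l) x (V.p s y z))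
          = (cc K (l + t) * (cc K s * ((((s + 1).choose l : ℕ) : K) *
              (((l + t).descFactorial l : ℕ) : K)))) •
            (V.T ^ (t + s + 2)) (V.p t x (V.p s y z)) := by
        intro t _
        rw [show l + t + s + 2 - l = t + s + 2 by omega, show l + t - l = t by omega]
      rw [Finset.sum_congr rfl hterm]
      rw [← Finset.sum_subset (Finset.range_subset_range.2 (show N ≤ 2 * N - l by omega))
        (fun t _ ht2 => by
          rw [mem_range, not_lt] at ht2
          rw [h5 s t ht2, map_zero, smul_zero])]
    rw [Finset.sum_congr rfl hfix, Finset.sum_comm]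
    refine Finset.sum_congr rfl fun t _ => ?_
    rw [← Finset.sum_smul, cSum2]
  rw [Finset.sum_congr rfl hmid]
  -- extend s-range and t-range from N to 2N, then swap
  have hext1 : ∀ s ∈ range (2 * N), s ∉ range N →
      (∑ t ∈ range N, ff K t s • (V.T ^ (t + s + 2)) (V.p t x (V.p s y z))) = 0 := by
    intro s _ hs
    rw [mem_range, not_lt] at hs
    exact Finset.sum_eq_zero fun t _ => by rw [h2 s hs, map_zero, map_zero, smul_zero]
  rw [Finset.sum_subset (Finset.range_subset_range.2 (by omega)) hext1]
  have hext2 : ∀ s ∈ range (2 * N),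
      (∑ t ∈ range N, ff K t s • (V.T ^ (t + s + 2)) (V.p t x (V.p s y z)))
      = ∑ t ∈ range (2 * N), ff K t s • (V.T ^ (t + s + 2)) (V.p t x (V.p s y z)) := by
    intro s _
    refine Finset.sum_subset (Finset.range_subset_range.2 (by omega)) fun t _ ht2 => ?_
    rw [mem_range, not_lt] at ht2
    rw [h5 s t ht2, map_zero, smul_zero]
  rw [Finset.sum_congr rfl hext2, Finset.sum_comm]

lemma cIdent3 (i n : ℕ) :
    (((-1 : K) ^ (i + n) * (((i + n + 2).factorial : K))⁻¹) * (((i + n + 1).choose (i + 1) : ℕ) : K))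
      = dd K i n := by
  have hnat : (i + n + 1).choose (i + 1) * (i + 1).factorial * n.factorial
      = (i + n + 1).factorial := by
    have h := Nat.choose_mul_factorial_mul_factorial (show i + 1 ≤ i + n + 1 by omega)
    rwa [show i + n + 1 - (i + 1) = n by omega] at h
  have hK : (((i + n + 1).choose (i + 1) : ℕ) : K) * (((i + 1).factorial : K)) * ((n.factorial : K))
      = ((i + n + 1).factorial : K) := by
    exact_mod_cast congrArg (fun u : ℕ => (u : K)) hnat
  have e2 : ((i + n + 2).factorial : K)
      = ((i + n + 2 : ℕ) : K) * ((i + n + 1).factorial : K) := by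
    rw [show i + n + 2 = (i + n + 1) + 1 by omega, Nat.factorial_succ]
    push_cast
    ring
  have f1 := fact_ne (K := K) (i + n + 1)
  have f2 := fact_ne (K := K) (i + 1)
  have f3 := fact_ne (K := K) n
  have f4 : ((i + n + 2 : ℕ) : K) ≠ 0 := Nat.cast_ne_zero.2 (by omega)
  have hinv : (((i + 1).factorial : K))⁻¹ * ((n.factorial : K))⁻¹
      = (((i + n + 1).choose (i + 1) : ℕ) : K) * (((i + n + 1).factorial : K))⁻¹ := by
    field_simp
    linear_combination -hK
  rw [dd, e2, mul_inv]
  linear_combination (-((-1 : K) ^ (i + n)) * (((i + n + 2 : ℕ) : K))⁻¹) * hinv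

lemma main_comb (a b c : R) (N : ℕ) (hN : 1 ≤ N)
    (h1 : ∀ t, N ≤ t → V.p t a b = 0)
    (h4 : ∀ i t, N ≤ t → V.p t (V.p i a b) c = 0) :
    (∑ t ∈ range (2 * N), ∑ s ∈ range (2 * N),
        ff K t s • (V.T ^ (t + s + 2)) (V.p t a (V.p s b c)))
    - (∑ t ∈ range (2 * N), ∑ s ∈ range (2 * N),
        ff K t s • (V.T ^ (t + s + 2)) (V.p t b (V.p s a c)))
    = ∑ i ∈ range N, ∑ m ∈ range N,
        dd K i m • (V.T ^ (i + m + 2)) (V.p m (V.p i a b) c) := by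
  have e1 : (∑ t ∈ range (2 * N), ∑ s ∈ range (2 * N),
        ff K t s • (V.T ^ (t + s + 2)) (V.p t b (V.p s a c)))
      = ∑ t ∈ range (2 * N), ∑ s ∈ range (2 * N),
        ff K s t • (V.T ^ (s + t + 2)) (V.p s b (V.p t a c)) := Finset.sum_comm
  rw [e1, ← Finset.sum_sub_distrib]
  have hts : ∀ t ∈ range (2 * N),
      (∑ s ∈ range (2 * N), ff K t s • (V.T ^ (t + s + 2)) (V.p t a (V.p s b c)))
      - (∑ s ∈ range (2 * N), ff K s t • (V.T ^ (s + t + 2)) (V.p s b (V.p t a c)))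
      = ∑ i ∈ range (2 * N), ∑ s ∈ range (2 * N),
          (ff K t s * (t.choose i : K)) • (V.T ^ (t + s + 2)) (V.p (t + s - i) (V.p i a b) c) := by
    intro t ht
    rw [mem_range] at ht
    rw [← Finset.sum_sub_distrib]
    have hin : ∀ s ∈ range (2 * N),
        ff K t s • (V.T ^ (t + s + 2)) (V.p t a (V.p s b c))
        - ff K s t • (V.T ^ (s + t + 2)) (V.p s b (V.p t a c))
        = ∑ i ∈ range (2 * N),
            (ff K t s * (t.choose i : K)) • (V.T ^ (t + s + 2)) (V.p (t + s - i) (V.p i a b) c) := by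
      intro s hs
      rw [show ff K s t = ff K t s by rw [ff, ff, add_comm s t], show s + t + 2 = t + s + 2 by omega,
        ← smul_sub, ← map_sub, V.jacobi t s a b c, map_sum, Finset.smul_sum]
      rw [Finset.sum_congr rfl (fun i _ => by rw [map_smul, smul_smul] :
        ∀ i ∈ range (t + 1), ff K t s • (V.T ^ (t + s + 2)) ((t.choose i : K) •
            V.p (t + s - i) (V.p i a b) c)
          = (ff K t s * (t.choose i : K)) • (V.T ^ (t + s + 2)) (V.p (t + s - i) (V.p i a b) c))]
      refine Finset.sum_subset (Finset.range_subset_range.2 (by omega)) ?_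
      intro i _ hi2
      rw [mem_range, not_lt] at hi2
      rw [Nat.choose_eq_zero_of_lt (by omega)]
      norm_num
    rw [Finset.sum_congr rfl hin, Finset.sum_comm]
  rw [Finset.sum_congr rfl hts, Finset.sum_comm]
  -- outer sum now over i ∈ range (2N)
  have hrow : ∀ i ∈ range (2 * N),
      (∑ t ∈ range (2 * N), ∑ s ∈ range (2 * N),
        (ff K t s * (t.choose i : K)) • (V.T ^ (t + s + 2)) (V.p (t + s - i) (V.p i a b) c))
      = ∑ m ∈ range N, dd K i m • (V.T ^ (i + m + 2)) (V.p m (V.p i a b) c) := by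
    intro i hi
    rw [mem_range] at hi
    by_cases hiN : N ≤ i
    · rw [Finset.sum_eq_zero, eq_comm, Finset.sum_eq_zero]
      · intro m _
        rw [h1 i hiN, map_zero, LinearMap.zero_apply, map_zero, smul_zero]
      · intro t _
        refine Finset.sum_eq_zero fun s _ => ?_
        rw [h1 i hiN, map_zero, LinearMap.zero_apply, map_zero, smul_zero]
    · push_neg at hiN
      have hzero : ∀ t ∈ range (2 * N), t ∉ Finset.Ico i (2 * N) →
          (∑ s ∈ range (2 * N),
            (ff K t s * (t.choose i : K)) • (V.T ^ (t + s + 2)) (V.p (t + s - i) (V.p i a b) c))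
            = 0 := by
        intro t ht ht2
        rw [mem_range] at ht
        rw [Finset.mem_Ico, not_and_or, not_le, not_lt] at ht2
        refine Finset.sum_eq_zero fun s _ => ?_
        rw [Nat.choose_eq_zero_of_lt (by omega)]
        norm_num
      have hsub : Finset.Ico i (2 * N) ⊆ range (2 * N) := by
        intro t ht
        rw [Finset.mem_Ico] at ht
        exact Finset.mem_range.2 ht.2
      rw [← Finset.sum_subset hsub hzero, Finset.sum_Ico_eq_sum_range]
      have hterm : ∀ u ∈ range (2 * N - i), ∀ s ∈ range (2 * N),
          (ff K (i + u) s * ((i + u).choose i : K)) •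
            (V.T ^ (i + u + s + 2)) (V.p (i + u + s - i) (V.p i a b) c)
          = (ff K (i + u) s * ((i + u).choose i : K)) •
            (V.T ^ (i + u + s + 2)) (V.p (u + s) (V.p i a b) c) := by
        intro u _ s _
        rw [show i + u + s - i = u + s by omega]
      rw [Finset.sum_congr rfl (fun u hu => Finset.sum_congr rfl (fun s hs => hterm u hu s hs))]
      rw [diag_sum (2 * N - i) (2 * N) N
        (fun u s => (ff K (i + u) s * ((i + u).choose i : K)) •
          (V.T ^ (i + u + s + 2)) (V.p (u + s) (V.p i a b) c))
        (fun u s hus => by rw [h4 i (u + s) hus, map_zero, smul_zero])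
        (by omega) (by omega)]
      refine Finset.sum_congr rfl fun n hn => ?_
      have hterm2 : ∀ u ∈ range (n + 1),
          (ff K (i + u) (n - u) * ((i + u).choose i : K)) •
            (V.T ^ (i + u + (n - u) + 2)) (V.p (u + (n - u)) (V.p i a b) c)
          = (((-1 : K) ^ (i + n) * (((i + n + 2).factorial : K))⁻¹) * ((i + u).choose i : K)) •
            (V.T ^ (i + n + 2)) (V.p n (V.p i a b) c) := by
        intro u hu
        rw [mem_range, Nat.lt_succ_iff] at hu
        rw [show ff K (i + u) (n - u) = (-1 : K) ^ (i + n) * (((i + n + 2).factorial : K))⁻¹ by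
            rw [ff, show i + u + (n - u) = i + n by omega],
          show u + (n - u) = n by omega, show i + u + (n - u) + 2 = i + n + 2 by omega]
      rw [Finset.sum_congr rfl hterm2, ← Finset.sum_smul]
      congr 1
      rw [← Finset.mul_sum]
      have hsum : (∑ u ∈ range (n + 1), (((i + u).choose i : ℕ) : K))
          = (((i + n + 1).choose (i + 1) : ℕ) : K) := by
        rw [← Nat.cast_sum, hockey]
      rw [hsum, cIdent3]
  rw [Finset.sum_congr rfl hrow]
  rw [← Finset.sum_subset (Finset.range_subset_range.2 (show N ≤ 2 * N by omega))
    (fun i _ hi2 => by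
      rw [mem_range, not_lt] at hi2
      exact Finset.sum_eq_zero fun m _ => by
        rw [h1 i hi2, map_zero, LinearMap.zero_apply, map_zero, smul_zero])]

lemma leibniz (a b c : R) :
    V.lieBr (V.lieBr a b) c = V.lieBr a (V.lieBr b c) - V.lieBr b (V.lieBr a c) := by
  obtain ⟨N, hN, h1, h2, h3, h4, h5, h6⟩ := exists_N V a b c
  rw [aux1 V a b c N hN h1 h4, aux2 V a b c N hN h2 h5, aux2 V b a c N hN h3 h6,
    main_comb V a b c N hN h1 h4]

lemma neg_left (x y : R) : V.lieBr (-x) y = -V.lieBr x y := by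
  have h := smul_left V (-1 : K) x y
  rwa [neg_one_smul, neg_one_smul] at h

lemma jacobi_br (a b c : R) :
    V.lieBr (V.lieBr a b) c + V.lieBr (V.lieBr b c) a + V.lieBr (V.lieBr c a) b = 0 := by
  have hL := leibniz V a b c
  have s1 : V.lieBr (V.lieBr b c) a = - V.lieBr a (V.lieBr b c) := skew_br V _ a
  have s2 : V.lieBr (V.lieBr c a) b = V.lieBr b (V.lieBr a c) := by
    rw [skew_br V c a, neg_left, skew_br V _ b, neg_neg]
  rw [hL, s1, s2]
  abel

end VLAux

/-- For a vertex Lie algebra `R`, the bracket `[a,b]_lie = Σ (−1)^i T^{i+1}(a_i b)/(i+1)!`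
is a Lie bracket: it is bilinear, skew-symmetric and satisfies the Jacobi identity;
moreover `T` is a derivation of it. -/
theorem lieBr_is_lie_bracket
    (K : Type*) [Field K] [CharZero K]
    (R : Type*) [AddCommGroup R] [Module K R]
    (V : VertexLieAlgebra K R) :
    (∀ a a' b : R, V.lieBr (a + a') b = V.lieBr a b + V.lieBr a' b) ∧
    (∀ a b b' : R, V.lieBr a (b + b') = V.lieBr a b + V.lieBr a b') ∧
    (∀ (k : K) (a b : R), V.lieBr (k • a) b = k • V.lieBr a b) ∧
    (∀ (k : K) (a b : R), V.lieBr a (k • b) = k • V.lieBr a b) ∧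
    (∀ a b : R, V.lieBr a b = - V.lieBr b a) ∧
    (∀ a b c : R,
      V.lieBr (V.lieBr a b) c + V.lieBr (V.lieBr b c) a + V.lieBr (V.lieBr c a) b = 0) ∧
    (∀ a b : R, V.T (V.lieBr a b) = V.lieBr (V.T a) b + V.lieBr a (V.T b)) :=
  ⟨VLAux.add_left V, VLAux.add_right V, VLAux.smul_left V, VLAux.smul_right V,
    VLAux.skew_br V, VLAux.jacobi_br V, VLAux.deriv V⟩
end

section
/- Let K be a field of characteristic zero and R a K-vector space equipped with a linear operator T and bilinear products (a,b) ↦ a_t b for t ∈ ℕ satisfying: (Ta)_t b = −t·a_{t−1} b (with a_{−1}b := 0), T(a_t b) = (Ta)_t b + a_t(Tb), and weak locality (for all a, b ∈ R there is N with a_t b = 0 for all t ≥ N). If c ∈ R is a torsion element of the K[T]-module R, i.e. p(T)c = 0 for some nonzero polynomial p ∈ K[T], then c is central for all the products: c_t a = 0 and a_t c = 0 for all a ∈ R and all t ∈ ℕ. (The torsion submodule of a conformal algebra is contained in its centre.) -/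
section TorsionCentralAux
variable {K : Type*} [Field K] [CharZero K]
variable {R : Type*} [AddCommGroup R] [Module K R]
variable (T : Module.End K R) (p : ℕ → R →ₗ[K] R →ₗ[K] R)

/-- Left shift lemma. -/
private theorem torsion_auxA
    (trans_zero : ∀ a b : R, p 0 (T a) b = 0)
    (trans_succ : ∀ (t : ℕ) (a b : R), p (t + 1) (T a) b = -(((t + 1 : ℕ) : K)) • p t a b) :
    ∀ (j s : ℕ) (a b : R),
      p s ((T ^ j) a) b = (((-1 : K) ^ j * (s.descFactorial j : ℕ)) : K) • p (s - j) a b := by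
  intro j
  induction j with
  | zero => intro s a b; simp
  | succ j ih =>
    intro s a b
    have h1 : (T ^ (j+1)) a = (T ^ j) (T a) := by
      rw [pow_succ]; rfl
    rw [h1, ih s (T a) b]
    rcases Nat.eq_zero_or_pos (s - j) with h | h
    · rw [h, trans_zero]
      have hs : s < j + 1 := by omega
      rw [Nat.descFactorial_eq_zero_iff_lt.mpr hs]
      simp
    · obtain ⟨m, hm⟩ : ∃ m, s - j = m + 1 := ⟨s - j - 1, by omega⟩
      have hs : s = j + m + 1 := by omega
      rw [hm, trans_succ m a b, smul_smul]
      have h2 : s - (j + 1) = m := by omega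
      rw [h2]
      congr 1
      have h3 : s.descFactorial (j+1) = (m+1) * s.descFactorial j := by
        rw [Nat.descFactorial_succ, hm]
      rw [h3]
      push_cast
      ring

private theorem torsion_auxB
    (trans_zero : ∀ a b : R, p 0 (T a) b = 0)
    (trans_succ : ∀ (t : ℕ) (a b : R), p (t + 1) (T a) b = -(((t + 1 : ℕ) : K)) • p t a b)
    (trans_T : ∀ (t : ℕ) (a b : R), T (p t a b) = p t (T a) b + p t a (T b)) :
    ∀ (j s : ℕ) (a b : R),
      p s a ((T ^ j) b) =
        ∑ i ∈ Finset.range (j + 1),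
          ((j.choose i * s.descFactorial i : ℕ) : K) • (T ^ (j - i)) (p (s - i) a b) := by
  -- helper: p m a (T b) = T (p m a b) + m • p (m-1) a b
  have helper : ∀ (m : ℕ) (a b : R),
      p m a (T b) = T (p m a b) + ((m : ℕ) : K) • p (m - 1) a b := by
    intro m a b
    have h := trans_T m a b
    have hA : p m (T a) b = -((m : ℕ) : K) • p (m - 1) a b := by
      cases m with
      | zero => simp [trans_zero]
      | succ n => simpa using trans_succ n a b
    rw [hA] at h
    have := h.symm
    rw [neg_smul] at this
    linear_combination (norm := module) this
  intro j
  induction j with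
  | zero => intro s a b; simp
  | succ j ih =>
    intro s a b
    have h1 : (T ^ (j + 1)) b = (T ^ j) (T b) := by rw [pow_succ]; rfl
    rw [h1, ih s a (T b)]
    -- rewrite each summand
    have step : ∀ i ∈ Finset.range (j + 1),
        ((j.choose i * s.descFactorial i : ℕ) : K) • (T ^ (j - i)) (p (s - i) a (T b))
        = ((j.choose i * s.descFactorial i : ℕ) : K) • (T ^ (j + 1 - i)) (p (s - i) a b)
          + ((j.choose i * s.descFactorial (i + 1) : ℕ) : K) •
              (T ^ (j + 1 - (i + 1))) (p (s - (i + 1)) a b) := by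
      intro i hi
      rw [Finset.mem_range] at hi
      have hij : i ≤ j := by omega
      have hTT : ∀ x : R, (T ^ (j - i)) (T x) = (T ^ (j + 1 - i)) x := by
        intro x
        rw [show j + 1 - i = (j - i) + 1 by omega, pow_succ]
        rfl
      rw [helper (s - i) a b, map_add, map_smul, smul_add, smul_smul, hTT]
      congr 1
      have h2 : j + 1 - (i + 1) = j - i := by omega
      have h3 : s - (i + 1) = s - i - 1 := by omega
      rw [h2, h3, ← Nat.cast_mul]
      exact congrArg (fun n : ℕ => ((n : K) • (T ^ (j - i)) (p (s - i - 1) a b)))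
        (by rw [Nat.descFactorial_succ]; ring)
    rw [Finset.sum_congr rfl step, Finset.sum_add_distrib]
    -- now prove the combined identity
    set f : ℕ → R := fun i => (T ^ (j + 1 - i)) (p (s - i) a b) with hf
    show (∑ i ∈ Finset.range (j + 1), ((j.choose i * s.descFactorial i : ℕ) : K) • f i)
        + (∑ i ∈ Finset.range (j + 1), ((j.choose i * s.descFactorial (i + 1) : ℕ) : K) • f (i + 1))
        = ∑ i ∈ Finset.range (j + 1 + 1), (((j + 1).choose i * s.descFactorial i : ℕ) : K) • f i
    rw [Finset.sum_range_succ' (fun i => (((j + 1).choose i * s.descFactorial i : ℕ) : K) • f i) (j + 1)]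
    have hsum1 : (∑ i ∈ Finset.range (j + 1), ((j.choose i * s.descFactorial i : ℕ) : K) • f i)
        = (∑ i ∈ Finset.range (j + 1), ((j.choose (i + 1) * s.descFactorial (i + 1) : ℕ) : K) • f (i + 1))
          + ((j.choose 0 * s.descFactorial 0 : ℕ) : K) • f 0 := by
      rw [← Finset.sum_range_succ' (fun i => ((j.choose i * s.descFactorial i : ℕ) : K) • f i) (j + 1)]
      conv_rhs => rw [Finset.sum_range_succ]
      have : ((j.choose (j + 1) * s.descFactorial (j + 1) : ℕ) : K) • f (j + 1) = 0 := by
        rw [Nat.choose_succ_self, zero_mul, Nat.cast_zero, zero_smul]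
      rw [this, add_zero]
    rw [hsum1]
    have hpascal : ∀ i : ℕ,
        ((((j + 1).choose (i + 1)) * s.descFactorial (i + 1) : ℕ) : K) • f (i + 1)
        = ((j.choose (i + 1) * s.descFactorial (i + 1) : ℕ) : K) • f (i + 1)
          + ((j.choose i * s.descFactorial (i + 1) : ℕ) : K) • f (i + 1) := by
      intro i
      rw [← add_smul]
      congr 1
      rw [Nat.choose_succ_succ]
      push_cast
      ring
    simp_rw [hpascal]
    rw [Finset.sum_add_distrib]
    simp only [Nat.choose_zero_right]
    abel

end TorsionCentralAux

/-- The torsion submodule of a conformal algebra is contained in its centre: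
if `R` is a `K`-vector space with an operator `T` and weakly local `t`-th products
satisfying the translation axioms, then any `K[T]`-torsion element `c` satisfies
`c_t a = 0` and `a_t c = 0` for all `a` and `t`. -/
theorem torsion_is_central
    (K : Type*) [Field K] [CharZero K]
    (R : Type*) [AddCommGroup R] [Module K R]
    (T : Module.End K R)
    (p : ℕ → R →ₗ[K] R →ₗ[K] R)
    (weak_local : ∀ a b : R, ∃ N : ℕ, ∀ t : ℕ, N ≤ t → p t a b = 0)
    (trans_zero : ∀ a b : R, p 0 (T a) b = 0)
    (trans_succ : ∀ (t : ℕ) (a b : R), p (t + 1) (T a) b = -(((t + 1 : ℕ) : K)) • p t a b)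
    (trans_T : ∀ (t : ℕ) (a b : R), T (p t a b) = p t (T a) b + p t a (T b))
    (c : R)
    (htor : ∃ q : Polynomial K, q ≠ 0 ∧ (Polynomial.aeval T q) c = 0) :
    ∀ (a : R) (t : ℕ), p t c a = 0 ∧ p t a c = 0 := by
  have auxA := torsion_auxA T p trans_zero trans_succ
  have auxB := torsion_auxB T p trans_zero trans_succ trans_T
  obtain ⟨q, hq0, hqc⟩ := htor
  set d := q.natDegree with hd
  have hld : q.coeff d ≠ 0 := by
    rw [hd, ← Polynomial.leadingCoeff]
    exact Polynomial.leadingCoeff_ne_zero.mpr hq0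
  have hdfK : ∀ t : ℕ, (((t + d).descFactorial d : ℕ) : K) ≠ 0 := by
    intro t
    have : (t + d).descFactorial d ≠ 0 := by
      intro h
      rw [Nat.descFactorial_eq_zero_iff_lt] at h
      omega
    exact_mod_cast this
  -- expansion of aeval
  have hexp : (Polynomial.aeval T q) c = ∑ i ∈ Finset.range (d + 1), q.coeff i • (T ^ i) c := by
    rw [Polynomial.aeval_eq_sum_range]
    simp [LinearMap.sum_apply, LinearMap.smul_apply]
    rw [hd]
  intro a t
  obtain ⟨N1, hN1⟩ := weak_local c a
  obtain ⟨N2, hN2⟩ := weak_local a c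
  set N := max N1 N2 with hN
  have main : ∀ (k u : ℕ), N ≤ u + k → p u c a = 0 ∧ p u a c = 0 := by
    intro k
    induction k with
    | zero =>
      intro u hu
      have h1 : N1 ≤ N := le_max_left _ _
      have h2 : N2 ≤ N := le_max_right _ _
      exact ⟨hN1 u (by omega), hN2 u (by omega)⟩
    | succ k ih =>
      intro u hu
      by_cases hcase : N ≤ u + k
      · exact ih u hcase
      have H : ∀ s, u < s → p s c a = 0 ∧ p s a c = 0 := by
        intro s hs
        exact ih s (by omega)
      -- the zero expansion
      have hzero : ∀ (b : R) (F : ℕ → R → R →ₗ[K] R),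
          True := fun _ _ => trivial
      constructor
      · -- left: p u c a = 0
        have h0 : (0 : R) = ∑ i ∈ Finset.range (d + 1),
            q.coeff i • p (u + d) ((T ^ i) c) a := by
          have e1 : p (u + d) ((Polynomial.aeval T q) c) a = 0 := by rw [hqc]; simp
          rw [hexp, map_sum] at e1
          rw [← e1]
          rw [LinearMap.sum_apply]
          apply Finset.sum_congr rfl
          intro i _
          rw [map_smul, LinearMap.smul_apply]
        have hsingle : ∑ i ∈ Finset.range (d + 1),
            q.coeff i • p (u + d) ((T ^ i) c) a
            = q.coeff d • p (u + d) ((T ^ d) c) a := by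
          apply Finset.sum_eq_single d
          · intro i hi hne
            rw [Finset.mem_range] at hi
            have hi' : i < d := by omega
            rw [auxA i (u + d) c a, (H (u + d - i) (by omega)).1]
            simp
          · intro h; exact absurd (Finset.self_mem_range_succ d) h
        rw [hsingle, auxA d (u + d) c a] at h0
        have h1 : u + d - d = u := by omega
        rw [h1] at h0
        have h2 := h0.symm
        rw [smul_smul, smul_eq_zero] at h2
        rcases h2 with h2 | h2
        · exfalso
          rcases mul_eq_zero.mp h2 with h3 | h3
          · exact hld h3
          rcases mul_eq_zero.mp h3 with h4 | h4
          · exact (pow_ne_zero d (by norm_num : (-1 : K) ≠ 0)) h4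
          · exact hdfK u h4
        · exact h2
      · -- right: p u a c = 0
        have h0 : (0 : R) = ∑ i ∈ Finset.range (d + 1),
            q.coeff i • p (u + d) a ((T ^ i) c) := by
          have e1 : p (u + d) a ((Polynomial.aeval T q) c) = 0 := by rw [hqc]; simp
          rw [hexp, map_sum] at e1
          rw [← e1]
          apply Finset.sum_congr rfl
          intro i _
          rw [map_smul]
        have hinner : ∀ i, i < d → p (u + d) a ((T ^ i) c) = 0 := by
          intro i hi
          rw [auxB i (u + d) a c]
          apply Finset.sum_eq_zero
          intro m hm
          rw [Finset.mem_range] at hm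
          have : p (u + d - m) a c = 0 := (H (u + d - m) (by omega)).2
          rw [this, map_zero, smul_zero]
        have hsingle : ∑ i ∈ Finset.range (d + 1),
            q.coeff i • p (u + d) a ((T ^ i) c)
            = q.coeff d • p (u + d) a ((T ^ d) c) := by
          apply Finset.sum_eq_single d
          · intro i hi hne
            rw [Finset.mem_range] at hi
            rw [hinner i (by omega), smul_zero]
          · intro h; exact absurd (Finset.self_mem_range_succ d) h
        have htop : p (u + d) a ((T ^ d) c)
            = (((u + d).descFactorial d : ℕ) : K) • p u a c := by
          rw [auxB d (u + d) a c]
          rw [Finset.sum_eq_single d]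
          · have h1 : u + d - d = u := by omega
            rw [h1, Nat.choose_self, Nat.sub_self, pow_zero, one_mul]
            rfl
          · intro m hm hne
            rw [Finset.mem_range] at hm
            have : p (u + d - m) a c = 0 := (H (u + d - m) (by omega)).2
            rw [this, map_zero, smul_zero]
          · intro h; exact absurd (Finset.self_mem_range_succ d) h
        rw [hsingle, htop, smul_smul] at h0
        have h2 := h0.symm
        rw [smul_eq_zero] at h2
        rcases h2 with h2 | h2
        · exfalso
          rcases mul_eq_zero.mp h2 with h3 | h3
          · exact hld h3
          · exact hdfK u h3
        · exact h2
  exact main N t (by omega)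
end

section
/- Let K be a field of characteristic zero and let p ∈ K[T, λ] be a polynomial in two commuting variables satisfying: (i) the conformal Jacobi identity for a rank-one generator, p(−μ, λ)·p(T, μ) = p(T+λ, μ−λ)·p(T, λ) − p(T+μ−λ, λ)·p(T, μ−λ), as an identity in K[T, λ, μ]; and (ii) the conformal skew-symmetry p(T, λ) = −p(T, −λ−T). Then there exists c ∈ K such that p = c·(T + 2λ). Consequently, every even vertex Lie algebra that is a free K[T]-module of rank 1 (with λ-bracket of the generator given by 1_λ 1 = p(T,λ)) is either abelian (p = 0) or isomorphic to the Witt vertex Lie algebra, whose λ-bracket is L_λ L = (T + 2λ)L. -/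
open MvPolynomial

/-- Substitution of the two variables `T = X 0`, `λ = X 1` of `P` by polynomials
in the three variables `T = X 0`, `λ = X 1`, `μ = X 2`. -/
noncomputable def psub {K : Type*} [Field K] (P : MvPolynomial (Fin 2) K)
    (u v : MvPolynomial (Fin 3) K) : MvPolynomial (Fin 3) K :=
  MvPolynomial.aeval ![u, v] P

set_option linter.unusedSectionVars false

namespace RankOneAux

variable {K : Type*} [Field K] [CharZero K]

lemma weight_one_fin2 (d : Fin 2 →₀ ℕ) : (Finsupp.weight 1) d = d 0 + d 1 := by
  rw [show (Finsupp.weight 1 : (Fin 2 →₀ ℕ) →+ ℕ) = Finsupp.weight (fun _ => 1) from rfl,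
    ← Finsupp.degree_eq_weight_one, Finsupp.degree_eq_sum]
  exact Fin.sum_univ_two d

lemma degree_fin2 (d : Fin 2 →₀ ℕ) : d.degree = d 0 + d 1 := by
  rw [Finsupp.degree_eq_weight_one]; exact weight_one_fin2 d

lemma isHomog_degree {q : MvPolynomial (Fin 2) K} {n : ℕ} (hq : q.IsHomogeneous n)
    {d : Fin 2 →₀ ℕ} (hd : coeff d q ≠ 0) : d 0 + d 1 = n := by
  have := hq hd
  rwa [weight_one_fin2] at this

lemma homog_subst_line {q : MvPolynomial (Fin 2) K} {d : ℕ} (hq : q.IsHomogeneous d)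
    (a b : K) (w : MvPolynomial (Fin 2) K) :
    aeval ![C a * w, C b * w] q = C (eval ![a, b] q) * w ^ d := by
  conv_lhs => rw [q.as_sum]
  conv_rhs => rw [q.as_sum]
  rw [map_sum, map_sum, map_sum, Finset.sum_mul]
  refine Finset.sum_congr rfl fun m hm => ?_
  have hd : m 0 + m 1 = d := isHomog_degree hq (mem_support_iff.mp hm)
  rw [← hd]
  rw [aeval_monomial, eval_monomial]
  rw [Finsupp.prod_fintype _ _ (fun i => pow_zero _), Fin.prod_univ_two]
  rw [Finsupp.prod_fintype _ _ (fun i => pow_zero _), Fin.prod_univ_two]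
  simp only [Matrix.cons_val_zero, Matrix.cons_val_one, Matrix.head_cons, algebraMap_eq,
    mul_pow, map_mul, map_pow]
  ring


lemma dvd_sub_aeval (g : MvPolynomial (Fin 2) K) (f : Fin 2 → MvPolynomial (Fin 2) K)
    (hf : ∀ i, g ∣ (X i - f i)) (q : MvPolynomial (Fin 2) K) : g ∣ q - aeval f q := by
  induction q using MvPolynomial.induction_on with
  | C a => simp
  | add p r hp hr =>
      have : p + r - aeval f (p + r) = (p - aeval f p) + (r - aeval f r) := by
        rw [map_add]; ring
      rw [this]; exact dvd_add hp hr
  | mul_X p i hp =>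
      have : p * X i - aeval f (p * X i) =
          (p - aeval f p) * X i + aeval f p * (X i - f i) := by
        rw [map_mul, aeval_X]; ring
      rw [this]; exact dvd_add (hp.mul_right _) ((hf i).mul_left _)

lemma factor_homog {g h : MvPolynomial (Fin 2) K} {m n : ℕ}
    (hg : g.IsHomogeneous m) (hg0 : g ≠ 0) (hgh : (g * h).IsHomogeneous n) :
    ∃ j, h.IsHomogeneous j ∧ (h ≠ 0 → n = m + j) := by
  have key : ∀ j, m + j ≠ n → homogeneousComponent j h = 0 := by
    intro j hj
    rcases le_or_gt j h.totalDegree with hle | hlt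
    · have h1 : homogeneousComponent (m + j) (g * h) = g * homogeneousComponent j h := by
        conv_lhs => rw [← sum_homogeneousComponent h, Finset.mul_sum, map_sum]
        rw [Finset.sum_eq_single j]
        · rw [homogeneousComponent_of_mem
            (mem_homogeneousSubmodule _ _ |>.mpr (hg.mul (homogeneousComponent_isHomogeneous _ _))),
            if_pos rfl]
        · intro i _ hij
          rw [homogeneousComponent_of_mem
            (mem_homogeneousSubmodule _ _ |>.mpr (hg.mul (homogeneousComponent_isHomogeneous _ _))),
            if_neg (by omega)]
        · intro hnot
          exact absurd (Finset.mem_range.mpr (by omega)) hnot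
      have h2 : homogeneousComponent (m + j) (g * h) = 0 := by
        rw [homogeneousComponent_of_mem (mem_homogeneousSubmodule _ _ |>.mpr hgh), if_neg hj]
      rw [h2] at h1
      exact ((mul_eq_zero.mp h1.symm).resolve_left hg0)
    · exact homogeneousComponent_eq_zero _ _ hlt
  by_cases hmn : m ≤ n
  · refine ⟨n - m, ?_, fun _ => by omega⟩
    have hh : h = homogeneousComponent (n - m) h := by
      conv_lhs => rw [← sum_homogeneousComponent h]
      rw [Finset.sum_eq_single (n - m)]
      · intro i _ hij
        exact key i (by omega)
      · intro hnot
        exact homogeneousComponent_eq_zero _ _ (by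
          simp only [Finset.mem_range, not_lt] at hnot; omega)
    rw [hh]
    exact homogeneousComponent_isHomogeneous _ _
  · refine ⟨0, ?_, fun hne => ?_⟩
    · have hh : h = 0 := by
        conv_lhs => rw [← sum_homogeneousComponent h]
        refine Finset.sum_eq_zero fun i _ => key i (by omega)
      rw [hh]; exact isHomogeneous_zero _ _ _
    · exfalso
      apply hne
      conv_lhs => rw [← sum_homogeneousComponent h]
      exact Finset.sum_eq_zero fun i _ => key i (by omega)

lemma fin2_eq_single {m : Fin 2 →₀ ℕ} {i : Fin 2} (h0 : m i = 1) (h1 : m (1 - i) = 0) :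
    m = Finsupp.single i 1 := by
  ext j
  rcases eq_or_ne j i with rfl | hj
  · simp [h0]
  · have : j = 1 - i := by omega
    rw [this, h1, Finsupp.single_apply, if_neg (by omega)]

lemma single_ne_single : (Finsupp.single (1 : Fin 2) 1) ≠ Finsupp.single 0 1 := by
  intro h
  have := DFunLike.congr_fun h (0 : Fin 2)
  simp [Finsupp.single_apply] at this

lemma homog_one_eq {q : MvPolynomial (Fin 2) K} (hq : q.IsHomogeneous 1) :
    q = C (coeff (Finsupp.single 0 1) q) * X 0 + C (coeff (Finsupp.single 1 1) q) * X 1 := by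
  ext m
  rw [coeff_add, coeff_C_mul, coeff_C_mul, coeff_X', coeff_X']
  by_cases h0 : Finsupp.single (0 : Fin 2) 1 = m
  · subst h0
    rw [if_pos rfl, if_neg single_ne_single]
    ring
  · rw [if_neg h0]
    by_cases h1 : Finsupp.single (1 : Fin 2) 1 = m
    · subst h1
      rw [if_pos rfl]
      ring
    · rw [if_neg h1, mul_zero, mul_zero, add_zero]
      by_contra hc
      have hd := isHomog_degree hq hc
      rcases Nat.eq_zero_or_pos (m 0) with hm0 | hm0
      · exact h1 ((fin2_eq_single (by omega) (by simpa using hm0)).symm)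
      · exact h0 ((fin2_eq_single (i := 0) (by omega) (by show m 1 = 0; omega)).symm)

lemma topComponent_ne_zero {P : MvPolynomial (Fin 2) K} (hP : P ≠ 0) :
    homogeneousComponent P.totalDegree P ≠ 0 := by
  obtain ⟨m, hm, hdeg⟩ := P.support.exists_mem_eq_sup
    (support_nonempty.mpr hP) fun s => s.sum fun _ e => e
  intro hc
  have := coeff_homogeneousComponent (n := P.totalDegree) (φ := P) m
  rw [hc, coeff_zero] at this
  rw [if_pos (by rw [Finsupp.degree, totalDegree, hdeg]; rfl)] at this
  exact mem_support_iff.mp hm this.symm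

lemma sub_top_totalDegree_lt {P : MvPolynomial (Fin 2) K} (hD : 0 < P.totalDegree) :
    (P - homogeneousComponent P.totalDegree P).totalDegree < P.totalDegree := by
  rw [totalDegree]
  rw [Finset.sup_lt_iff (by simpa using hD)]
  intro m hm
  have hc : coeff m (P - homogeneousComponent P.totalDegree P) ≠ 0 := mem_support_iff.mp hm
  rw [coeff_sub, coeff_homogeneousComponent] at hc
  by_cases hd : m.degree = P.totalDegree
  · rw [if_pos hd] at hc; simp at hc
  · rw [if_neg hd, sub_zero] at hc
    have hle := le_totalDegree (mem_support_iff.mpr hc)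
    have : m.degree = m.sum fun _ e => e := rfl
    omega


lemma aeval_pair {A : Type*} [CommSemiring A] [Algebra K A] {B : Type*} [CommSemiring B]
    [Algebra K B] (φ : A →ₐ[K] B) (q : MvPolynomial (Fin 2) K) (u v : A) :
    φ (aeval ![u, v] q) = aeval ![φ u, φ v] q := by
  have h : (fun i => φ (![u, v] i)) = ![φ u, φ v] := by
    funext i; fin_cases i <;> simp
  rw [comp_aeval_apply, h]

lemma psub_mul (a b : MvPolynomial (Fin 2) K) (u v : MvPolynomial (Fin 3) K) :
    psub (a * b) u v = psub a u v * psub b u v := by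
  simp [psub]

lemma psub_add (a b : MvPolynomial (Fin 2) K) (u v : MvPolynomial (Fin 3) K) :
    psub (a + b) u v = psub a u v + psub b u v := by
  simp [psub]

lemma psub_X0 (u v : MvPolynomial (Fin 3) K) :
    psub (X 0 : MvPolynomial (Fin 2) K) u v = u := by
  simp [psub]

lemma psub_X1 (u v : MvPolynomial (Fin 3) K) :
    psub (X 1 : MvPolynomial (Fin 2) K) u v = v := by
  simp [psub]

/-- the `k`-th divided Jacobi identity -/
def Jk (k : ℕ) (q : MvPolynomial (Fin 2) K) : Prop :=
  (-(X 2 : MvPolynomial (Fin 3) K)) ^ k * psub q (-(X 2)) (X 1) * psub q (X 0) (X 2) =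
    (X 0 + X 1) ^ k * psub q (X 0 + X 1) (X 2 - X 1) * psub q (X 0) (X 1) -
      (X 0 + X 2 - X 1) ^ k * psub q (X 0 + X 2 - X 1) (X 1) * psub q (X 0) (X 2 - X 1)

/-- conformal skew-symmetry -/
def Skw (q : MvPolynomial (Fin 2) K) : Prop :=
  aeval ![X 0, -(X 1) - X 0] q = -q

lemma G_ne_zero : (X 1 : MvPolynomial (Fin 3) K) * (X 0 + X 2) * (X 2 - X 1) ≠ 0 := by
  intro h
  have h2 := congrArg (eval ![(0 : K), 1, 2]) h
  norm_num [show (![(0 : K), 1, 2] : Fin 3 → K) 2 = 2 from rfl] at h2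

lemma Jk_step {q q₂ : MvPolynomial (Fin 2) K} {k : ℕ}
    (hq : q = X 1 * (X 0 + X 1) * q₂) (hj : Jk k q) : Jk (k + 1) q₂ := by
  rw [Jk] at hj ⊢
  rw [hq] at hj
  simp only [psub_mul, psub_add, psub_X0, psub_X1] at hj
  apply mul_left_cancel₀ G_ne_zero
  linear_combination hj

lemma s_ne_zero : (X 1 : MvPolynomial (Fin 2) K) * (X 0 + X 1) ≠ 0 := by
  intro h
  have h2 := congrArg (eval ![(1 : K), 1]) h
  norm_num at h2

lemma Skw_step {q q₂ : MvPolynomial (Fin 2) K}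
    (hq : q = X 1 * (X 0 + X 1) * q₂) (hs : Skw q) : Skw q₂ := by
  rw [Skw] at hs ⊢
  rw [hq, map_mul, map_mul] at hs
  simp only [map_add, map_neg, aeval_X, Matrix.cons_val_zero, Matrix.cons_val_one,
    Matrix.head_cons] at hs
  apply mul_left_cancel₀ s_ne_zero
  linear_combination hs

lemma div_step {q : MvPolynomial (Fin 2) K}
    (h1 : aeval ![X 0, (0 : MvPolynomial (Fin 2) K)] q = 0)
    (h2 : aeval ![-(X 1), (X 1 : MvPolynomial (Fin 2) K)] q = 0) :
    ∃ q₂, q = X 1 * (X 0 + X 1) * q₂ := by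
  have d1 : (X 1 : MvPolynomial (Fin 2) K) ∣ q := by
    have := dvd_sub_aeval (X 1) ![X 0, 0] (fun i => by fin_cases i <;> simp) q
    rwa [h1, sub_zero] at this
  obtain ⟨q₁, hq₁⟩ := d1
  have hX1 : (X 1 : MvPolynomial (Fin 2) K) ≠ 0 := X_ne_zero 1
  have h2' : aeval ![-(X 1), (X 1 : MvPolynomial (Fin 2) K)] q₁ = 0 := by
    rw [hq₁, map_mul, aeval_X] at h2
    simp only [Matrix.cons_val_one, Matrix.head_cons] at h2
    exact (mul_eq_zero.mp h2).resolve_left hX1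
  have d2 : ((X 0 + X 1 : MvPolynomial (Fin 2) K)) ∣ q₁ := by
    have := dvd_sub_aeval (X 0 + X 1) ![-(X 1), X 1]
      (fun i => by fin_cases i <;> simp [sub_neg_eq_add]) q₁
    rwa [h2', sub_zero] at this
  obtain ⟨q₂, hq₂⟩ := d2
  exact ⟨q₂, by rw [hq₁, hq₂]; ring⟩


lemma aeval_id (q : MvPolynomial (Fin 2) K) :
    aeval ![(X 0 : MvPolynomial (Fin 2) K), X 1] q = q := by
  have : ![(X 0 : MvPolynomial (Fin 2) K), X 1] = X := by
    funext i; fin_cases i <;> rfl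
  rw [this, aeval_X_left_apply]

lemma homog_zero_eq {q : MvPolynomial (Fin 2) K} (hq : q.IsHomogeneous 0) :
    q = C (coeff 0 q) := by
  have h := homogeneousComponent_of_mem (m := 0)
    ((mem_homogeneousSubmodule _ _).mpr hq)
  rw [if_pos rfl] at h
  conv_lhs => rw [← h]
  rw [homogeneousComponent_zero]

lemma Ek_of_Jk {q : MvPolynomial (Fin 2) K} {d k : ℕ} (hq0 : q ≠ 0)
    (hd : q.IsHomogeneous d) (hj : Jk k q) :
    ((-1 : MvPolynomial (Fin 2) K)) ^ k * C (eval ![(-1 : K), 1] q) * X 1 ^ (d + k) =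
      C (eval ![(1 : K), 0] q) * ((X 0 + X 1) ^ (d + k) - X 0 ^ (d + k)) := by
  set α := eval ![(1 : K), 0] q with hα
  set β := eval ![(-1 : K), 1] q with hβ
  have e1 : aeval ![-(X 1), (X 1 : MvPolynomial (Fin 2) K)] q = C β * X 1 ^ d := by
    have := homog_subst_line hd (-1) 1 (X 1)
    simpa using this
  have e2 : aeval ![X 0 + X 1, (0 : MvPolynomial (Fin 2) K)] q = C α * (X 0 + X 1) ^ d := by
    have := homog_subst_line hd 1 0 (X 0 + X 1)
    simpa using this
  have e3 : aeval ![X 0, (0 : MvPolynomial (Fin 2) K)] q = C α * X 0 ^ d := by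
    have := homog_subst_line hd 1 0 (X 0)
    simpa using this
  have hm := congrArg (aeval ![(X 0 : MvPolynomial (Fin 2) K), X 1, X 1]) hj
  simp only [psub, map_mul, map_pow, map_sub, map_add, map_neg, aeval_pair, aeval_X,
    Matrix.cons_val_zero, Matrix.cons_val_one, Matrix.head_cons, Matrix.cons_val_two,
    Matrix.tail_cons, sub_self, add_sub_cancel_right] at hm
  rw [e1, e2, e3, aeval_id] at hm
  apply mul_right_cancel₀ hq0
  linear_combination hm

lemma pow_diff_const {N : ℕ} (hN : 2 ≤ N) (c : K) (h : ∀ t : K, (t + 1) ^ N - t ^ N = c) :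
    False := by
  have hz : (Polynomial.X + 1 : Polynomial K) ^ N - Polynomial.X ^ N - Polynomial.C c = 0 := by
    apply Polynomial.funext
    intro r
    simp only [Polynomial.eval_sub, Polynomial.eval_pow, Polynomial.eval_add, Polynomial.eval_X,
      Polynomial.eval_one, Polynomial.eval_C, Polynomial.eval_zero]
    linear_combination h r
  have hcoeff := congrArg (fun p => Polynomial.coeff p (N - 1)) hz
  have h1 : ¬ (N - 1 = N) := by omega
  have h2 : ¬ (N - 1 = 0) := by omega
  simp only [Polynomial.coeff_sub, Polynomial.coeff_X_add_one_pow, Polynomial.coeff_X_pow,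
    if_neg h1, Polynomial.coeff_C, if_neg h2, Polynomial.coeff_zero, sub_zero] at hcoeff
  have h3 : N.choose (N - 1) = N := by
    rw [← Nat.choose_symm (by omega : N - 1 ≤ N)]
    have : N - (N - 1) = 1 := by omega
    rw [this, Nat.choose_one_right]
  rw [h3] at hcoeff
  exact (Nat.cast_ne_zero (R := K)).mpr (by omega) hcoeff

lemma descent : ∀ d : ℕ, ∀ (k : ℕ) (q : MvPolynomial (Fin 2) K), q ≠ 0 → q.IsHomogeneous d →
    Jk k q → Skw q → k = 0 ∧ d = 1 ∧ ∃ c : K, c ≠ 0 ∧ q = C c * (X 0 + 2 * X 1) := by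
  intro d
  induction d using Nat.strong_induction_on with
  | _ d ih =>
  intro k q hq0 hd hj hs
  rcases Nat.eq_zero_or_pos d with rfl | hdpos
  · exfalso
    rw [Skw, homog_zero_eq hd] at hs
    rw [aeval_C] at hs
    have : C (coeff 0 q + coeff 0 q) = (0 : MvPolynomial (Fin 2) K) := by
      rw [map_add]
      rw [show (algebraMap K (MvPolynomial (Fin 2) K)) (coeff 0 q) = C (coeff 0 q) from rfl] at hs
      linear_combination hs
    have hcc : coeff 0 q = 0 := by
      have h7 := (MvPolynomial.C_eq_zero).mp this
      have h8 : (2 : K) * coeff 0 q = 0 := by linear_combination h7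
      exact (mul_eq_zero.mp h8).resolve_left (by norm_num)
    exact hq0 (by rw [homog_zero_eq hd, hcc, map_zero])
  set α := eval ![(1 : K), 0] q with hαdef
  set β := eval ![(-1 : K), 1] q with hβdef
  have ek := Ek_of_Jk hq0 hd hj
  rw [← hαdef, ← hβdef] at ek
  by_cases hN : d + k ≤ 1
  · -- N = 1 : k = 0, d = 1
    have hk0 : k = 0 := by omega
    have hd1 : d = 1 := by omega
    subst hk0 hd1
    have hβα : β = α := by
      have h5 : (C β - C α) * (X 1 : MvPolynomial (Fin 2) K) = 0 := by
        linear_combination ek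
      have h6 := (mul_eq_zero.mp h5).resolve_right (X_ne_zero 1)
      have := sub_eq_zero.mp h6
      exact C_injective _ _ this
    have hrep := homog_one_eq hd
    set u := coeff (Finsupp.single 0 1) q with hu
    set v := coeff (Finsupp.single 1 1) q with hv
    have hαu : α = u := by
      rw [hαdef]
      conv_lhs => rw [hrep]
      simp
    have hβu : β = -u + v := by
      rw [hβdef]
      conv_lhs => rw [hrep]
      simp
    have hv2 : v = 2 * u := by
      have h9 := hβα
      rw [hβu, hαu] at h9
      linear_combination h9
    have hu0 : u ≠ 0 := by
      intro h
      apply hq0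
      rw [hrep, h, hv2, h]
      simp
    refine ⟨rfl, rfl, u, hu0, ?_⟩
    rw [hrep, hv2, map_mul, show (C 2 : MvPolynomial (Fin 2) K) = 2 by
      simp only [map_ofNat]]
    ring
  · -- N ≥ 2 : descent
    exfalso
    push_neg at hN
    have hα : α = 0 := by
      by_contra hα0
      apply pow_diff_const (K := K) (by omega : 2 ≤ d + k) (((-1 : K)) ^ k * β / α)
      intro t
      have := congrArg (eval ![t, (1 : K)]) ek
      simp only [map_mul, map_pow, map_sub, map_add, map_neg, map_one, eval_C, eval_X,
        Matrix.cons_val_zero, Matrix.cons_val_one, Matrix.head_cons, one_pow, mul_one] at this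
      field_simp
      linear_combination -this
    have hβ : β = 0 := by
      rw [hα] at ek
      simp only [map_zero, zero_mul] at ek
      have h5 := mul_eq_zero.mp ek
      rcases h5 with h5 | h5
      · rcases mul_eq_zero.mp h5 with h6 | h6
        · exact absurd h6 (pow_ne_zero _ (by
            intro hcon
            have := congrArg (eval ![(0:K), 0]) hcon
            norm_num at this))
        · exact (MvPolynomial.C_eq_zero).mp h6
      · exact absurd h5 (pow_ne_zero _ (X_ne_zero 1))
    -- divisibility
    have e1 : aeval ![-(X 1), (X 1 : MvPolynomial (Fin 2) K)] q = 0 := by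
      have := homog_subst_line hd (-1) 1 (X 1)
      simp only [← hβdef, hβ, map_zero, zero_mul] at this
      simpa using this
    have e3 : aeval ![X 0, (0 : MvPolynomial (Fin 2) K)] q = 0 := by
      have := homog_subst_line hd 1 0 (X 0)
      simp only [← hαdef, hα, map_zero, zero_mul] at this
      simpa using this
    obtain ⟨q₂, hq₂⟩ := div_step e3 e1
    have hq₂0 : q₂ ≠ 0 := by
      intro h
      apply hq0
      rw [hq₂, h, mul_zero]
    have hghom : ((X 1 : MvPolynomial (Fin 2) K) * (X 0 + X 1)).IsHomogeneous 2 :=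
      (isHomogeneous_X K 1).mul ((isHomogeneous_X K 0).add (isHomogeneous_X K 1))
    obtain ⟨j, hjhom, hjd⟩ := factor_homog hghom s_ne_zero (by rw [← hq₂]; exact hd)
    have hdj : d = 2 + j := hjd hq₂0
    obtain ⟨hk1, -, -⟩ := ih j (by omega) (k + 1) q₂ hq₂0 hjhom (Jk_step hq₂ hj) (Skw_step hq₂ hs)
    exact Nat.succ_ne_zero k hk1


lemma tot_neg {σ : Type*} (x : MvPolynomial σ K) : (-x).totalDegree = x.totalDegree := by
  rw [totalDegree, totalDegree, support_neg]

lemma totalDegree_aeval_le {σ : Type*} (f : Fin 2 → MvPolynomial σ K)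
    (hf : ∀ i, (f i).IsHomogeneous 1) (q : MvPolynomial (Fin 2) K) :
    (aeval f q).totalDegree ≤ q.totalDegree := by
  conv_lhs => rw [q.as_sum]
  rw [map_sum]
  refine (totalDegree_finset_sum _ _).trans (Finset.sup_le fun m hm => ?_)
  have h1 : (aeval f (monomial m (coeff m q))).IsHomogeneous (1 * m.degree) :=
    (isHomogeneous_monomial _ rfl).aeval f hf
  refine h1.totalDegree_le.trans ?_
  rw [one_mul]
  exact le_totalDegree hm

lemma homog_eq_zero_of_totalDegree_lt {σ : Type*} {x : MvPolynomial σ K} {n : ℕ}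
    (hx : x.IsHomogeneous n) (hlt : x.totalDegree < n) : x = 0 := by
  by_contra h
  rw [hx.totalDegree h] at hlt
  exact lt_irrefl _ hlt

lemma skw_homog_vec :
    ∀ i, ((![X 0, -(X 1) - X 0] : Fin 2 → MvPolynomial (Fin 2) K) i).IsHomogeneous 1 := by
  intro i
  fin_cases i
  · exact isHomogeneous_X _ _
  · exact ((isHomogeneous_X K 1).neg).sub (isHomogeneous_X K 0)

lemma skw_top {P Pd Pr : MvPolynomial (Fin 2) K} {D : ℕ} (hsplit : P = Pd + Pr)
    (hPdh : Pd.IsHomogeneous D) (hPrlt : Pr.totalDegree < D) (hs : Skw P) : Skw Pd := by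
  rw [Skw] at hs ⊢
  rw [hsplit, map_add] at hs
  have hx : aeval ![X 0, -(X 1) - X 0] Pd + Pd = -(aeval ![X 0, -(X 1) - X 0] Pr + Pr) := by
    linear_combination hs
  have hhom : (aeval ![X 0, -(X 1) - X 0] Pd + Pd).IsHomogeneous D := by
    refine IsHomogeneous.add ?_ hPdh
    have := hPdh.aeval (![X 0, -(X 1) - X 0] : Fin 2 → MvPolynomial (Fin 2) K) skw_homog_vec
    rwa [one_mul] at this
  have hdeg : (aeval ![X 0, -(X 1) - X 0] Pd + Pd).totalDegree < D := by
    rw [hx, tot_neg]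
    refine lt_of_le_of_lt (totalDegree_add _ _) (max_lt ?_ hPrlt)
    exact lt_of_le_of_lt (totalDegree_aeval_le _ skw_homog_vec Pr) hPrlt
  have hz := homog_eq_zero_of_totalDegree_lt hhom hdeg
  linear_combination hz

lemma jac_homog_vec (u v : MvPolynomial (Fin 3) K) (hu : u.IsHomogeneous 1)
    (hv : v.IsHomogeneous 1) : ∀ i, ((![u, v] : Fin 2 → MvPolynomial (Fin 3) K) i).IsHomogeneous 1 := by
  intro i
  fin_cases i <;> assumption

lemma jac_top {P Pd Pr : MvPolynomial (Fin 2) K} {D : ℕ} (hsplit : P = Pd + Pr)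
    (hPdh : Pd.IsHomogeneous D) (hPrlt : Pr.totalDegree < D) (hj : Jk 0 P) : Jk 0 Pd := by
  have h0 : (X 0 : MvPolynomial (Fin 3) K).IsHomogeneous 1 := isHomogeneous_X _ _
  have h1 : (X 1 : MvPolynomial (Fin 3) K).IsHomogeneous 1 := isHomogeneous_X _ _
  have h2 : (X 2 : MvPolynomial (Fin 3) K).IsHomogeneous 1 := isHomogeneous_X _ _
  have hn2 : (-(X 2) : MvPolynomial (Fin 3) K).IsHomogeneous 1 := h2.neg
  have h01 : ((X 0 + X 1) : MvPolynomial (Fin 3) K).IsHomogeneous 1 := h0.add h1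
  have h21 : ((X 2 - X 1) : MvPolynomial (Fin 3) K).IsHomogeneous 1 := h2.sub h1
  have h021 : ((X 0 + X 2 - X 1) : MvPolynomial (Fin 3) K).IsHomogeneous 1 := (h0.add h2).sub h1
  -- homogeneity / degree facts for the six substitutions of Pd and Pr
  have hPsub : ∀ (u v : MvPolynomial (Fin 3) K), u.IsHomogeneous 1 → v.IsHomogeneous 1 →
      (psub Pd u v).IsHomogeneous D ∧ (psub Pr u v).totalDegree < D := by
    intro u v hu hv
    constructor
    · have := hPdh.aeval (![u, v] : Fin 2 → MvPolynomial (Fin 3) K) (jac_homog_vec u v hu hv)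
      rwa [one_mul] at this
    · exact lt_of_le_of_lt (totalDegree_aeval_le _ (jac_homog_vec u v hu hv) Pr) hPrlt
  obtain ⟨hA, hA'⟩ := hPsub _ _ hn2 h1
  obtain ⟨hB, hB'⟩ := hPsub _ _ h0 h2
  obtain ⟨hC, hC'⟩ := hPsub _ _ h01 h21
  obtain ⟨hD, hD'⟩ := hPsub _ _ h0 h1
  obtain ⟨hE, hE'⟩ := hPsub _ _ h021 h1
  obtain ⟨hF, hF'⟩ := hPsub _ _ h0 h21
  rw [Jk] at hj ⊢
  simp only [pow_zero, one_mul] at hj ⊢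
  rw [hsplit] at hj
  simp only [psub_add] at hj
  set A := psub Pd (-(X 2)) (X 1)
  set B := psub Pd (X 0) (X 2)
  set Cc := psub Pd (X 0 + X 1) (X 2 - X 1)
  set Dd := psub Pd (X 0) (X 1)
  set E := psub Pd (X 0 + X 2 - X 1) (X 1)
  set F := psub Pd (X 0) (X 2 - X 1)
  set A' := psub Pr (-(X 2)) (X 1)
  set B' := psub Pr (X 0) (X 2)
  set Cc' := psub Pr (X 0 + X 1) (X 2 - X 1)
  set Dd' := psub Pr (X 0) (X 1)
  set E' := psub Pr (X 0 + X 2 - X 1) (X 1)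
  set F' := psub Pr (X 0) (X 2 - X 1)
  have hx : A * B - (Cc * Dd - E * F) =
      (Cc * Dd' + Cc' * Dd + Cc' * Dd') - (E * F' + E' * F + E' * F')
        - (A * B' + A' * B + A' * B') := by
    linear_combination hj
  have hb1 : ∀ {a b : MvPolynomial (Fin 3) K}, a.totalDegree ≤ D → b.totalDegree < D →
      (a * b).totalDegree < D + D := by
    intro a b ha hb
    exact lt_of_le_of_lt (totalDegree_mul _ _) (by omega)
  have hb2 : ∀ {a b : MvPolynomial (Fin 3) K}, a.totalDegree < D → b.totalDegree ≤ D →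
      (a * b).totalDegree < D + D := by
    intro a b ha hb
    exact lt_of_le_of_lt (totalDegree_mul _ _) (by omega)
  have haddlt : ∀ {x y : MvPolynomial (Fin 3) K} {n : ℕ}, x.totalDegree < n →
      y.totalDegree < n → (x + y).totalDegree < n := by
    intro x y n hxn hyn
    exact lt_of_le_of_lt (totalDegree_add _ _) (max_lt hxn hyn)
  have hsublt : ∀ {x y : MvPolynomial (Fin 3) K} {n : ℕ}, x.totalDegree < n →
      y.totalDegree < n → (x - y).totalDegree < n := by
    intro x y n hxn hyn
    rw [sub_eq_add_neg]
    exact haddlt hxn (by rwa [tot_neg])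
  have hhom : (A * B - (Cc * Dd - E * F)).IsHomogeneous (D + D) :=
    (hA.mul hB).sub ((hC.mul hD).sub (hE.mul hF))
  have hdeg : (A * B - (Cc * Dd - E * F)).totalDegree < D + D := by
    rw [hx]
    refine hsublt (hsublt (haddlt (haddlt ?_ ?_) ?_) (haddlt (haddlt ?_ ?_) ?_))
      (haddlt (haddlt ?_ ?_) ?_)
    · exact hb1 hC.totalDegree_le hD'
    · exact hb2 hC' hD.totalDegree_le
    · exact hb2 hC' (le_of_lt hD')
    · exact hb1 hE.totalDegree_le hF'
    · exact hb2 hE' hF.totalDegree_le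
    · exact hb2 hE' (le_of_lt hF')
    · exact hb1 hA.totalDegree_le hB'
    · exact hb2 hA' hB.totalDegree_le
    · exact hb2 hA' (le_of_lt hB')
  have hz := homog_eq_zero_of_totalDegree_lt hhom hdeg
  linear_combination hz

lemma skw_const_eval {P : MvPolynomial (Fin 2) K} (hs : Skw P) :
    aeval ![(0 : K), 0] P = 0 := by
  have h := congrArg (aeval ![(0 : K), 0]) hs
  rw [aeval_pair, map_neg] at h
  simp only [aeval_X, Matrix.cons_val_zero, Matrix.cons_val_one, Matrix.head_cons, map_neg,
    map_sub, neg_zero, sub_zero, zero_sub] at h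
  have h2 : (2 : K) * aeval ![(0 : K), 0] P = 0 := by
    linear_combination h
  exact (mul_eq_zero.mp h2).resolve_left (by norm_num)

end RankOneAux



/-- A polynomial `p(T,λ)` satisfying the rank-one conformal Jacobi identity
`p(−μ,λ)p(T,μ) = p(T+λ,μ−λ)p(T,λ) − p(T+μ−λ,λ)p(T,μ−λ)` and conformal
skew-symmetry `p(T,λ) = −p(T,−λ−T)` must be of the form `c·(T+2λ)`.
Consequently a vertex Lie algebra free of rank one over `K[T]` is abelian or
isomorphic to the Witt vertex Lie algebra `L_λ L = (T+2λ)L`. -/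
theorem rank_one_vertex_lie_algebra_classification
    (K : Type*) [Field K] [CharZero K]
    (P : MvPolynomial (Fin 2) K)
    (hjac : psub P (-(X 2)) (X 1) * psub P (X 0) (X 2) =
      psub P (X 0 + X 1) (X 2 - X 1) * psub P (X 0) (X 1) -
        psub P (X 0 + X 2 - X 1) (X 1) * psub P (X 0) (X 2 - X 1))
    (hskew : MvPolynomial.aeval
        ![(X 0 : MvPolynomial (Fin 2) K), -(X 1) - X 0] P = -P) :
    (∃ c : K, P = MvPolynomial.C c * (X 0 + 2 * X 1)) ∧
    (P = 0 ∨ ∃ c : K, c ≠ 0 ∧ P = MvPolynomial.C c * (X 0 + 2 * X 1)) := by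
  classical
  by_cases hP0 : P = 0
  · exact ⟨⟨0, by simp [hP0]⟩, Or.inl hP0⟩
  · have hj0 : RankOneAux.Jk 0 P := by
      rw [RankOneAux.Jk]
      simpa using hjac
    have hsk : RankOneAux.Skw P := hskew
    rcases Nat.eq_zero_or_pos P.totalDegree with hD0 | hDpos
    · exfalso
      apply hP0
      have hh : P.IsHomogeneous 0 := isHomogeneous_of_totalDegree_zero _ hD0
      have hrep := RankOneAux.homog_zero_eq hh
      have hc2 : coeff 0 P = 0 := by
        have hc := RankOneAux.skw_const_eval hsk
        rw [hrep] at hc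
        simpa using hc
      rw [hrep, hc2, map_zero]
    · set D := P.totalDegree with hD
      set Pd := homogeneousComponent D P with hPddef
      have hPdh : Pd.IsHomogeneous D := homogeneousComponent_isHomogeneous D P
      have hPd0 : Pd ≠ 0 := RankOneAux.topComponent_ne_zero hP0
      set Pr := P - Pd with hPrdef
      have hPrlt : Pr.totalDegree < D := RankOneAux.sub_top_totalDegree_lt hDpos
      have hsplit : P = Pd + Pr := by rw [hPrdef]; ring
      have hskPd := RankOneAux.skw_top hsplit hPdh hPrlt hsk
      have hjPd := RankOneAux.jac_top hsplit hPdh hPrlt hj0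
      obtain ⟨-, hD1, c, hc0, hPdc⟩ := RankOneAux.descent D 0 Pd hPd0 hPdh hjPd hskPd
      have hPrdeg : Pr.totalDegree = 0 := by omega
      have hPrC : Pr = C (coeff 0 Pr) :=
        RankOneAux.homog_zero_eq (isHomogeneous_of_totalDegree_zero _ hPrdeg)
      have hconst := RankOneAux.skw_const_eval hsk
      have hcr : coeff 0 Pr = 0 := by
        rw [hsplit, hPdc, hPrC] at hconst
        simpa using hconst
      have hPfin : P = C c * (X 0 + 2 * X 1) := by
        rw [hsplit, hPdc, hPrC, hcr, map_zero, add_zero]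
      exact ⟨⟨c, hPfin⟩, Or.inr ⟨c, hc0, hPfin⟩⟩
end

section
/- Let K be a field of characteristic zero. Identify the Witt vertex Lie algebra K[T]·L with the polynomial ring K[T], so that the λ-bracket of q = q(T) ∈ K[T] with the generator L is q_λ L = q(−λ)·(T + 2λ) ∈ K[T][λ]. Suppose I ⊆ K[T] is a K[T]-submodule (an ideal of the polynomial ring) such that for every q ∈ I, every coefficient of the polynomial q(−λ)·(T + 2λ) with respect to powers of λ belongs to I. If I ≠ 0, then I = K[T]. (Hence the Witt vertex Lie algebra is simple: it is non-abelian and has no ideals other than 0 and itself.) -/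
/-- The `λ`-bracket `q(T)L ↦ (q(T)L)_λ L = q(−λ)·(T + 2λ)·L` of the Witt vertex Lie
algebra `K[T]·L ≅ K[T]`, as a polynomial in the outer variable `λ` with coefficients
in `K[T]`: `wittBracket q = q(−λ)·(T + 2λ)`. -/
noncomputable def wittBracket {K : Type*} [Field K] (q : Polynomial K) :
    Polynomial (Polynomial K) :=
  (Polynomial.aeval (-(Polynomial.X : Polynomial (Polynomial K))) q) *
    (Polynomial.C Polynomial.X + 2 * Polynomial.X)

lemma coeff_aeval_negX {K : Type*} [CommRing K] (q : Polynomial K) (j : ℕ) :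
    (Polynomial.aeval (-(Polynomial.X : Polynomial (Polynomial K))) q).coeff j
      = (-1) ^ j * Polynomial.C (q.coeff j) := by
  induction q using Polynomial.induction_on' with
  | add p r hp hr => simp [hp, hr, mul_add]
  | monomial n a =>
    have : (Polynomial.aeval (-(Polynomial.X : Polynomial (Polynomial K)))
        (Polynomial.monomial n a))
        = Polynomial.C ((-1) ^ n * Polynomial.C a) * Polynomial.X ^ n := by
      rw [Polynomial.aeval_monomial, neg_pow]
      simp [Polynomial.algebraMap_apply]
      ring
    rw [this, Polynomial.coeff_C_mul, Polynomial.coeff_X_pow, Polynomial.coeff_monomial]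
    by_cases h : n = j
    · simp [h]
    · rw [if_neg (fun hh => h hh.symm)]
      simp [h]

/-- **Simplicity of the Witt vertex Lie algebra.** If an ideal `I` of `K[T]` is closed
under taking all `λ`-coefficients of `q(−λ)·(T + 2λ)` for `q ∈ I`, and `I ≠ 0`,
then `I = K[T]`. -/
theorem witt_vertex_lie_algebra_simple
    (K : Type*) [Field K] [CharZero K]
    (I : Ideal (Polynomial K))
    (hI : ∀ q ∈ I, ∀ j : ℕ, (wittBracket q).coeff j ∈ I)
    (hne : I ≠ ⊥) :
    I = ⊤ := by
  obtain ⟨q, hqI, hq0⟩ := Submodule.exists_mem_ne_zero_of_ne_bot hne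
  set n := q.natDegree with hn
  set A := Polynomial.aeval (-(Polynomial.X : Polynomial (Polynomial K))) q with hA
  have h2 : (Polynomial.C (2 : Polynomial K)) = 2 := map_ofNat _ 2
  have hsplit : wittBracket q = A * Polynomial.C Polynomial.X
      + (A * Polynomial.C (2 : Polynomial K)) * Polynomial.X := by
    rw [h2]; unfold wittBracket; rw [← hA]; ring
  have hkey : (wittBracket q).coeff (n + 1)
      = Polynomial.C (2 * (-1) ^ n * q.coeff n) := by
    rw [hsplit, Polynomial.coeff_add, Polynomial.coeff_mul_C, Polynomial.coeff_mul_X,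
      Polynomial.coeff_mul_C, hA, coeff_aeval_negX, coeff_aeval_negX,
      Polynomial.coeff_natDegree_succ_eq_zero]
    simp only [Polynomial.C_0, map_mul, map_pow, map_neg, map_one, zero_mul,
      mul_zero, neg_zero, zero_add]
    rw [show (Polynomial.C (2 : K)) = (2 : Polynomial K) from map_ofNat _ 2]
    ring
  have hmem : Polynomial.C (2 * (-1) ^ n * q.coeff n) ∈ I := by
    rw [← hkey]; exact hI q hqI (n + 1)
  have hcn : q.coeff n ≠ 0 := by
    simpa [hn] using Polynomial.leadingCoeff_ne_zero.mpr hq0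
  have hconst : (2 * (-1 : K) ^ n * q.coeff n) ≠ 0 := by
    apply mul_ne_zero (mul_ne_zero two_ne_zero _) hcn
    exact pow_ne_zero _ (neg_ne_zero.mpr one_ne_zero)
  exact I.eq_top_of_isUnit_mem hmem
    (Polynomial.isUnit_C.mpr (isUnit_iff_ne_zero.mpr hconst))
end
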